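/- arXiv:1306.0157 — 19 statements merged into one kernel-verified Lean document; each statement's English description precedes it below -/
import Mathlib

section
/- If X is a nonnegative random variable with mean a ∈ (0,∞), Y has the size-biased distribution of X (i.e., E[g(Y)] = E[X g(X)]/a for all bounded measurable g), and there is a coupling with Y ≤ X + c almost surely for some c > 0, then for all x > 0, P(X ≥ x) ≤ (a/x) · P(X ≥ x − c). -/
open MeasureTheory Real

theorem stmt_0
    {Ω : Type*} [MeasurableSpace Ω] (μ : Measure Ω) [IsProbabilityMeasure μ]
    (X Y : Ω → ℝ) (a c : ℝ) (ha : 0 < a) (hc : 0 < c)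
    (hXm : Measurable X) (hYm : Measurable Y)
    (hXnn : ∀ᵐ ω ∂μ, 0 ≤ X ω)
    (hXint : Integrable X μ)
    (hmean : ∫ ω, X ω ∂μ = a)
    (hsb : ∀ g : ℝ → ℝ, Measurable g → (∃ C, ∀ x, |g x| ≤ C) →
        ∫ ω, g (Y ω) ∂μ = (∫ ω, X ω * g (X ω) ∂μ) / a)
    (hcoup : ∀ᵐ ω ∂μ, Y ω ≤ X ω + c) :
    ∀ x : ℝ, 0 < x →
      (μ {ω | x ≤ X ω}).toReal ≤ (a / x) * (μ {ω | x - c ≤ X ω}).toReal := by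
  intro x hx
  set g : ℝ → ℝ := Set.indicator (Set.Ici x) (fun _ => (1:ℝ)) with hgdef
  have hgm : Measurable g := measurable_const.indicator measurableSet_Ici
  have key := hsb g hgm ⟨1, fun y => by
    by_cases h : y ∈ Set.Ici x <;> simp [hgdef, Set.indicator_apply, h]⟩
  have hsY : MeasurableSet (Y ⁻¹' Set.Ici x) := hYm measurableSet_Ici
  have hsX : MeasurableSet (X ⁻¹' Set.Ici x) := hXm measurableSet_Ici
  have hL : ∫ ω, g (Y ω) ∂μ = (μ (Y ⁻¹' Set.Ici x)).toReal := by
    have heq : (fun ω => g (Y ω)) = Set.indicator (Y ⁻¹' Set.Ici x) (fun _ => (1:ℝ)) := by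
      funext ω
      by_cases h : Y ω ∈ Set.Ici x <;>
        simp [hgdef, Set.indicator_apply, Set.mem_preimage, h]
    rw [heq, integral_indicator_const _ hsY, smul_eq_mul, mul_one]; rfl
  have hXg : (fun ω => X ω * g (X ω)) = Set.indicator (X ⁻¹' Set.Ici x) X := by
    funext ω
    by_cases h : X ω ∈ Set.Ici x <;>
      simp [hgdef, Set.indicator_apply, Set.mem_preimage, h]
  have hint1 : Integrable (fun ω => X ω * g (X ω)) μ := by
    refine hXint.mono ((hXm.mul (hgm.comp hXm)).aestronglyMeasurable) ?_
    filter_upwards with ω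
    by_cases h : X ω ∈ Set.Ici x <;>
      simp [hgdef, Set.indicator_apply, h, abs_nonneg]
  have hint2 : Integrable (Set.indicator (X ⁻¹' Set.Ici x) (fun _ => x)) μ :=
    (integrable_const x).indicator hsX
  have hmono : ∫ ω, Set.indicator (X ⁻¹' Set.Ici x) (fun _ => x) ω ∂μ
      ≤ ∫ ω, X ω * g (X ω) ∂μ := by
    refine integral_mono hint2 hint1 ?_
    intro ω
    rw [hXg]
    by_cases h : ω ∈ X ⁻¹' Set.Ici x
    · rw [Set.indicator_of_mem h, Set.indicator_of_mem h]; exact h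
    · simp [Set.indicator_apply, h]
  have hlow : x * (μ (X ⁻¹' Set.Ici x)).toReal ≤ ∫ ω, X ω * g (X ω) ∂μ := by
    calc x * (μ (X ⁻¹' Set.Ici x)).toReal
        = ∫ ω, Set.indicator (X ⁻¹' Set.Ici x) (fun _ => x) ω ∂μ := by
          rw [integral_indicator_const _ hsX, smul_eq_mul, mul_comm]; rfl
      _ ≤ _ := hmono
  have hmeas : μ (Y ⁻¹' Set.Ici x) ≤ μ (X ⁻¹' Set.Ici (x - c)) := by
    apply measure_mono_ae
    filter_upwards [hcoup] with ω hω hYω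
    have h1 : x ≤ Y ω := hYω
    show x - c ≤ X ω
    linarith
  have h1 : x * (μ (X ⁻¹' Set.Ici x)).toReal ≤ a * (μ (X ⁻¹' Set.Ici (x - c))).toReal := by
    calc x * (μ (X ⁻¹' Set.Ici x)).toReal
        ≤ ∫ ω, X ω * g (X ω) ∂μ := hlow
      _ = a * ∫ ω, g (Y ω) ∂μ := by rw [key, ← mul_div_assoc, mul_div_cancel_left₀ _ ha.ne']
      _ = a * (μ (Y ⁻¹' Set.Ici x)).toReal := by rw [hL]
      _ ≤ a * (μ (X ⁻¹' Set.Ici (x - c))).toReal := by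
          exact mul_le_mul_of_nonneg_left
            (ENNReal.toReal_mono (measure_ne_top μ _) hmeas) ha.le
  have hset1 : {ω | x ≤ X ω} = X ⁻¹' Set.Ici x := rfl
  have hset2 : {ω | x - c ≤ X ω} = X ⁻¹' Set.Ici (x - c) := rfl
  rw [hset1, hset2, div_mul_eq_mul_div, le_div_iff₀ hx]
  linarith
end

section
/- If X is a nonnegative random variable with mean a ∈ (0,∞), Y is a size-biased version of X, and there is a coupling with Y ≤ X + c almost surely (c > 0), then for all real x, P(X ≤ x) ≤ ((x+c)/a) · P(X ≤ x + c). -/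
open MeasureTheory Real

theorem stmt_1
    {Ω : Type*} [MeasurableSpace Ω] (μ : Measure Ω) [IsProbabilityMeasure μ]
    (X Y : Ω → ℝ) (a c : ℝ) (ha : 0 < a) (hc : 0 < c)
    (hXm : Measurable X) (hYm : Measurable Y)
    (hXnn : ∀ᵐ ω ∂μ, 0 ≤ X ω)
    (hXint : Integrable X μ)
    (hmean : ∫ ω, X ω ∂μ = a)
    (hsb : ∀ g : ℝ → ℝ, Measurable g → (∃ C, ∀ x, |g x| ≤ C) →
        ∫ ω, g (Y ω) ∂μ = (∫ ω, X ω * g (X ω) ∂μ) / a)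
    (hcoup : ∀ᵐ ω ∂μ, Y ω ≤ X ω + c) :
    ∀ x : ℝ,
      (μ {ω | X ω ≤ x}).toReal ≤ ((x + c) / a) * (μ {ω | X ω ≤ x + c}).toReal := by
  intro x
  set g : ℝ → ℝ := Set.indicator (Set.Iic (x + c)) 1 with hg
  have hgm : Measurable g := measurable_one.indicator measurableSet_Iic
  have hgb : ∀ y, |g y| ≤ 1 := by
    intro y
    rw [hg, Set.indicator]
    split <;> simp
  have hgnn : ∀ y, 0 ≤ g y := by
    intro y
    rw [hg, Set.indicator]
    split <;> simp
  have hsb' := hsb g hgm ⟨1, hgb⟩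
  have hintgY : Integrable (fun ω => g (Y ω)) μ :=
    Integrable.mono' (integrable_const 1) ((hgm.comp hYm).aestronglyMeasurable)
      (Filter.Eventually.of_forall fun ω => by
        rw [Real.norm_eq_abs]; exact hgb _)
  have hs1 : MeasurableSet {ω | X ω ≤ x} := hXm measurableSet_Iic
  have hs2 : MeasurableSet {ω | X ω ≤ x + c} := hXm measurableSet_Iic
  have hind1 : Integrable (Set.indicator {ω | X ω ≤ x} (fun _ => (1:ℝ))) μ :=
    (integrable_const 1).indicator hs1
  have hind2 : Integrable (Set.indicator {ω | X ω ≤ x + c} (fun _ => (1:ℝ))) μ :=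
    (integrable_const 1).indicator hs2
  have hintXg : Integrable (fun ω => X ω * g (X ω)) μ :=
    Integrable.mono' hXint.abs ((hXm.mul (hgm.comp hXm)).aestronglyMeasurable)
      (Filter.Eventually.of_forall fun ω => by
        rw [Real.norm_eq_abs, abs_mul]
        calc |X ω| * |g (X ω)| ≤ |X ω| * 1 := by
              exact mul_le_mul_of_nonneg_left (hgb _) (abs_nonneg _)
          _ = |X ω| := mul_one _)
  have h1 : (μ {ω | X ω ≤ x}).toReal ≤ ∫ ω, g (Y ω) ∂μ := by
    change μ.real {ω | X ω ≤ x} ≤ _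
    rw [← integral_indicator_one hs1]
    apply integral_mono_ae hind1 hintgY
    filter_upwards [hcoup] with ω hω
    by_cases h : X ω ≤ x
    · have hY : Y ω ≤ x + c := le_trans hω (by linarith)
      rw [Set.indicator_of_mem (show ω ∈ {ω | X ω ≤ x} from h), hg,
        Set.indicator_of_mem (show Y ω ∈ Set.Iic (x + c) from hY)]
      simp
    · rw [Set.indicator_of_notMem (by exact h)]
      exact hgnn _
  have h2 : ∫ ω, X ω * g (X ω) ∂μ ≤ (x + c) * (μ {ω | X ω ≤ x + c}).toReal := by
    change _ ≤ (x + c) * μ.real {ω | X ω ≤ x + c}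
    rw [← integral_indicator_one hs2, ← integral_const_mul]
    apply integral_mono_ae hintXg (hind2.const_mul _)
    filter_upwards [hXnn] with ω h0
    by_cases h : X ω ≤ x + c
    · rw [hg, Set.indicator_of_mem (show X ω ∈ Set.Iic (x + c) from h),
        Set.indicator_of_mem (by exact h)]
      simp only [Pi.one_apply, mul_one]
      exact h
    · rw [hg, Set.indicator_of_notMem (show X ω ∉ Set.Iic (x + c) from h),
        Set.indicator_of_notMem (by exact h)]
      simp
  calc (μ {ω | X ω ≤ x}).toReal ≤ ∫ ω, g (Y ω) ∂μ := h1
    _ = (∫ ω, X ω * g (X ω) ∂μ) / a := hsb'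
    _ ≤ ((x + c) * (μ {ω | X ω ≤ x + c}).toReal) / a := by
        gcongr
    _ = ((x + c) / a) * (μ {ω | X ω ≤ x + c}).toReal := by ring
end

section
/- Assume X ≥ 0 with mean a ∈ (0,∞) admits a c-bounded size bias coupling (Y = X* with Y ≤ X + c a.s.). Then for all x ≥ a, with k = ⌊(x−a)/c⌋, P(X ≥ x) ≤ ∏_{i=0}^{k} a/(x − i c). -/
open MeasureTheory Real

theorem stmt_2
    {Ω : Type*} [MeasurableSpace Ω] (μ : Measure Ω) [IsProbabilityMeasure μ]
    (X Y : Ω → ℝ) (a c : ℝ) (ha : 0 < a) (hc : 0 < c)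
    (hXm : Measurable X) (hYm : Measurable Y)
    (hXnn : ∀ᵐ ω ∂μ, 0 ≤ X ω)
    (hXint : Integrable X μ)
    (hmean : ∫ ω, X ω ∂μ = a)
    (hsb : ∀ g : ℝ → ℝ, Measurable g → (∃ C, ∀ x, |g x| ≤ C) →
        ∫ ω, g (Y ω) ∂μ = (∫ ω, X ω * g (X ω) ∂μ) / a)
    (hcoup : ∀ᵐ ω ∂μ, Y ω ≤ X ω + c) :
    ∀ x : ℝ, a ≤ x →
      (μ {ω | x ≤ X ω}).toReal ≤
        ∏ i ∈ Finset.range (⌊(x - a) / c⌋₊ + 1), a / (x - i * c) := by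
  -- Key step: for t > 0, P(X ≥ t) ≤ (a/t) P(X ≥ t - c)
  have key : ∀ t : ℝ, 0 < t →
      (μ {ω | t ≤ X ω}).toReal ≤ a / t * (μ {ω | t - c ≤ X ω}).toReal := by
    intro t ht
    set g : ℝ → ℝ := fun y => if t ≤ y then (1 : ℝ) else 0 with hg
    have hgm : Measurable g := by
      apply Measurable.ite _ measurable_const measurable_const
      exact measurableSet_le measurable_const measurable_id
    have hgb : ∃ C, ∀ y, |g y| ≤ C := ⟨1, fun y => by
      by_cases h : t ≤ y <;> simp [hg, h]⟩
    have hs := hsb g hgm hgb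
    have hsetY : MeasurableSet {ω | t ≤ Y ω} := measurableSet_le measurable_const hYm
    have hsetX : MeasurableSet {ω | t ≤ X ω} := measurableSet_le measurable_const hXm
    -- ∫ g(Y) = P(Y ≥ t)
    have hY : ∫ ω, g (Y ω) ∂μ = (μ {ω | t ≤ Y ω}).toReal := by
      have heq : (fun ω => g (Y ω))
          = Set.indicator {ω | t ≤ Y ω} (fun _ => (1 : ℝ)) := by
        ext ω
        by_cases h : t ≤ Y ω <;> simp [hg, h, Set.indicator]
      rw [heq, integral_indicator_const _ hsetY]
      simp [Measure.real]
    -- integrability of X·g(X)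
    have hXg_int : Integrable (fun ω => X ω * g (X ω)) μ := by
      refine hXint.mono ((hXm.mul (hgm.comp hXm)).aestronglyMeasurable) ?_
      filter_upwards with ω
      by_cases h : t ≤ X ω <;> simp [hg, h, abs_nonneg]
    -- lower bound t P(X ≥ t) ≤ ∫ X g(X)
    have hlow : t * (μ {ω | t ≤ X ω}).toReal ≤ ∫ ω, X ω * g (X ω) ∂μ := by
      have hind : Integrable (Set.indicator {ω | t ≤ X ω} (fun _ => t)) μ := by
        rw [integrable_indicator_iff hsetX]
        exact integrableOn_const (measure_lt_top _ _).ne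
      have hmono : ∀ ω, Set.indicator {ω | t ≤ X ω} (fun _ => t) ω
          ≤ X ω * g (X ω) := by
        intro ω
        by_cases h : t ≤ X ω
        · simp only [Set.indicator, Set.mem_setOf_eq, h, if_true, hg]
          simpa using h
        · simp [Set.indicator, h, hg]
      calc t * (μ {ω | t ≤ X ω}).toReal
          = ∫ ω, Set.indicator {ω | t ≤ X ω} (fun _ => t) ω ∂μ := by
            rw [integral_indicator_const _ hsetX]; simp [mul_comm, Measure.real]
        _ ≤ ∫ ω, X ω * g (X ω) ∂μ := integral_mono hind hXg_int hmono
    -- P(Y ≥ t) ≤ P(X ≥ t - c)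
    have hcmp : (μ {ω | t ≤ Y ω}).toReal ≤ (μ {ω | t - c ≤ X ω}).toReal := by
      refine ENNReal.toReal_mono (measure_ne_top _ _) ?_
      refine measure_mono_ae ?_
      filter_upwards [hcoup] with ω hω hYω
      have h1 : t ≤ Y ω := hYω
      show t - c ≤ X ω
      linarith
    have hXg : ∫ ω, X ω * g (X ω) ∂μ = a * ∫ ω, g (Y ω) ∂μ := by
      rw [hs]; field_simp
    have h1 : t * (μ {ω | t ≤ X ω}).toReal
        ≤ a * (μ {ω | t - c ≤ X ω}).toReal := by
      calc t * (μ {ω | t ≤ X ω}).toReal ≤ ∫ ω, X ω * g (X ω) ∂μ := hlow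
        _ = a * ∫ ω, g (Y ω) ∂μ := hXg
        _ = a * (μ {ω | t ≤ Y ω}).toReal := by rw [hY]
        _ ≤ a * (μ {ω | t - c ≤ X ω}).toReal := by
            exact mul_le_mul_of_nonneg_left hcmp ha.le
    rw [div_mul_eq_mul_div, le_div_iff₀ ht, mul_comm]
    exact h1
  have prob_le_one : ∀ s : Set Ω, (μ s).toReal ≤ 1 := fun s => by
    have h := prob_le_one (μ := μ) (s := s)
    simpa using ENNReal.toReal_mono (by simp) h
  -- Main induction
  have main : ∀ n : ℕ, ∀ x : ℝ, a ≤ x - n * c →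
      (μ {ω | x ≤ X ω}).toReal ≤ ∏ i ∈ Finset.range (n + 1), a / (x - i * c) := by
    intro n
    induction n with
    | zero =>
      intro x hx
      simp only [Nat.cast_zero, zero_mul, sub_zero] at hx
      have hx0 : 0 < x := lt_of_lt_of_le ha hx
      have hax : 0 ≤ a / x := by positivity
      calc (μ {ω | x ≤ X ω}).toReal
          ≤ a / x * (μ {ω | x - c ≤ X ω}).toReal := key x hx0
        _ ≤ a / x * 1 := mul_le_mul_of_nonneg_left (prob_le_one _) hax
        _ = a / x := mul_one _
        _ = ∏ i ∈ Finset.range 1, a / (x - i * c) := by simp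
    | succ n ih =>
      intro x hx
      have hnc : (0:ℝ) ≤ (n + 1 : ℕ) * c := by positivity
      push_cast at hx
      have hx0 : 0 < x := by nlinarith [mul_nonneg (Nat.cast_nonneg (α := ℝ) n) hc.le]
      have ihx := ih (x - c) (by push_cast; linarith)
      have hax : 0 ≤ a / x := by positivity
      have hkey := key x hx0
      have hrw : ∏ i ∈ Finset.range (n + 1 + 1), a / (x - i * c)
          = (∏ i ∈ Finset.range (n + 1), a / ((x - c) - i * c)) * (a / x) := by
        rw [Finset.prod_range_succ']
        congr 1
        · apply Finset.prod_congr rfl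
          intro i _
          congr 1
          push_cast
          ring
        · norm_num
      rw [hrw]
      calc (μ {ω | x ≤ X ω}).toReal
          ≤ a / x * (μ {ω | x - c ≤ X ω}).toReal := hkey
        _ ≤ a / x * ∏ i ∈ Finset.range (n + 1), a / ((x - c) - i * c) :=
            mul_le_mul_of_nonneg_left ihx hax
        _ = (∏ i ∈ Finset.range (n + 1), a / ((x - c) - i * c)) * (a / x) :=
            mul_comm _ _
  intro x hx
  apply main
  have h0 : 0 ≤ (x - a) / c := div_nonneg (by linarith) hc.le
  have h1 : (⌊(x - a) / c⌋₊ : ℝ) ≤ (x - a) / c := Nat.floor_le h0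
  rw [le_div_iff₀ hc] at h1
  linarith
end

section
/- Assume X ≥ 0 with mean a ∈ (0,∞) admits a c-bounded size bias coupling (Y = X* with Y ≤ X + c a.s.). Then for all 0 ≤ x ≤ a, with k = ⌊(a−x)/c⌋, P(X ≤ x) ≤ ∏_{i=1}^{k} (x + i c)/a. -/
open MeasureTheory Real

theorem stmt_3
    {Ω : Type*} [MeasurableSpace Ω] (μ : Measure Ω) [IsProbabilityMeasure μ]
    (X Y : Ω → ℝ) (a c : ℝ) (ha : 0 < a) (hc : 0 < c)
    (hXm : Measurable X) (hYm : Measurable Y)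
    (hXnn : ∀ᵐ ω ∂μ, 0 ≤ X ω)
    (hXint : Integrable X μ)
    (hmean : ∫ ω, X ω ∂μ = a)
    (hsb : ∀ g : ℝ → ℝ, Measurable g → (∃ C, ∀ x, |g x| ≤ C) →
        ∫ ω, g (Y ω) ∂μ = (∫ ω, X ω * g (X ω) ∂μ) / a)
    (hcoup : ∀ᵐ ω ∂μ, Y ω ≤ X ω + c) :
    ∀ x : ℝ, 0 ≤ x → x ≤ a →
      (μ {ω | X ω ≤ x}).toReal ≤
        ∏ i ∈ Finset.Icc 1 ⌊(a - x) / c⌋₊, (x + i * c) / a := by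
  -- Key single-step lemma
  have key : ∀ t : ℝ, 0 ≤ t →
      (μ {ω | X ω ≤ t}).toReal ≤ ((t + c) / a) * (μ {ω | X ω ≤ t + c}).toReal := by
    intro t ht
    have htc : (0:ℝ) ≤ t + c := by linarith
    set g : ℝ → ℝ := Set.indicator (Set.Iic (t + c)) (fun _ => (1:ℝ)) with hg_def
    have hgm : Measurable g := measurable_const.indicator measurableSet_Iic
    have hgb : ∃ C, ∀ x, |g x| ≤ C := by
      refine ⟨1, fun x => ?_⟩
      by_cases h : x ∈ Set.Iic (t + c) <;> simp [hg_def, Set.indicator_apply, h]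
    have hsb' := hsb g hgm hgb
    -- LHS of hsb' is μ {Y ≤ t+c}
    have hYset : MeasurableSet (Y ⁻¹' Set.Iic (t + c)) := hYm measurableSet_Iic
    have hL : ∫ ω, g (Y ω) ∂μ = (μ {ω | Y ω ≤ t + c}).toReal := by
      have : ∀ ω, g (Y ω) = (Y ⁻¹' Set.Iic (t + c)).indicator (fun _ => (1:ℝ)) ω := by
        intro ω
        by_cases h : Y ω ≤ t + c <;> simp [hg_def, Set.indicator_apply, h]
      rw [show (fun ω => g (Y ω)) = (Y ⁻¹' Set.Iic (t + c)).indicator (fun _ => (1:ℝ)) from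
        funext this]
      have := integral_indicator_const (μ := μ) (1:ℝ) hYset
      simpa [Set.preimage, Set.mem_Iic, Measure.real] using this
    -- RHS integrand is indicator of {X ≤ t+c} times X
    have hXset : MeasurableSet (X ⁻¹' Set.Iic (t + c)) := hXm measurableSet_Iic
    have hR : ∫ ω, X ω * g (X ω) ∂μ ≤ (t + c) * (μ {ω | X ω ≤ t + c}).toReal := by
      have heq : (fun ω => X ω * g (X ω)) = (X ⁻¹' Set.Iic (t + c)).indicator X := by
        funext ω
        by_cases h : X ω ≤ t + c <;> simp [hg_def, Set.indicator_apply, h]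
      rw [heq]
      have hint1 : Integrable ((X ⁻¹' Set.Iic (t + c)).indicator X) μ :=
        hXint.indicator hXset
      have hint2 : Integrable ((X ⁻¹' Set.Iic (t + c)).indicator (fun _ => (t + c))) μ :=
        (integrable_const _).indicator hXset
      have hmono : (X ⁻¹' Set.Iic (t + c)).indicator X ≤ᵐ[μ]
          (X ⁻¹' Set.Iic (t + c)).indicator (fun _ => (t + c)) := by
        filter_upwards [hXnn] with ω hω
        by_cases h : ω ∈ X ⁻¹' Set.Iic (t + c)
        · simp only [Set.indicator_of_mem h]
          exact h
        · simp [Set.indicator_of_notMem h]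
      calc ∫ ω, (X ⁻¹' Set.Iic (t + c)).indicator X ω ∂μ
          ≤ ∫ ω, (X ⁻¹' Set.Iic (t + c)).indicator (fun _ => (t + c)) ω ∂μ :=
            integral_mono_ae hint1 hint2 hmono
        _ = (t + c) * (μ {ω | X ω ≤ t + c}).toReal := by
            rw [integral_indicator_const (μ := μ) _ hXset]
            simp [Set.preimage, Set.mem_Iic, mul_comm, Measure.real]
    -- monotonicity from the coupling
    have h1 : (μ {ω | X ω ≤ t}).toReal ≤ (μ {ω | Y ω ≤ t + c}).toReal := by
      refine ENNReal.toReal_mono (measure_ne_top μ _) (measure_mono_ae ?_)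
      filter_upwards [hcoup] with ω h hmem
      exact le_trans h (by simpa using add_le_add_right (α := ℝ) hmem c)
    calc (μ {ω | X ω ≤ t}).toReal ≤ (μ {ω | Y ω ≤ t + c}).toReal := h1
      _ = (∫ ω, X ω * g (X ω) ∂μ) / a := by rw [← hsb', hL]
      _ ≤ ((t + c) * (μ {ω | X ω ≤ t + c}).toReal) / a := by gcongr
      _ = ((t + c) / a) * (μ {ω | X ω ≤ t + c}).toReal := by ring
  -- iterate
  have prodnn : ∀ (t : ℝ), 0 ≤ t → ∀ n : ℕ, (0:ℝ) ≤ ∏ i ∈ Finset.Icc 1 n, (t + i * c) / a := by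
    intro t ht n
    refine Finset.prod_nonneg fun i _ => ?_
    positivity
  have main : ∀ n : ℕ, ∀ t : ℝ, 0 ≤ t →
      (μ {ω | X ω ≤ t}).toReal ≤
        (∏ i ∈ Finset.Icc 1 n, (t + i * c) / a) * (μ {ω | X ω ≤ t + n * c}).toReal := by
    intro n
    induction n with
    | zero => intro t ht; simp
    | succ n ih =>
      intro t ht
      have htn : (0:ℝ) ≤ t + n * c := by positivity
      calc (μ {ω | X ω ≤ t}).toReal
          ≤ (∏ i ∈ Finset.Icc 1 n, (t + i * c) / a) * (μ {ω | X ω ≤ t + n * c}).toReal :=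
            ih t ht
        _ ≤ (∏ i ∈ Finset.Icc 1 n, (t + i * c) / a) *
            (((t + n * c + c) / a) * (μ {ω | X ω ≤ t + n * c + c}).toReal) :=
            mul_le_mul_of_nonneg_left (key (t + n * c) htn) (prodnn t ht n)
        _ = (∏ i ∈ Finset.Icc 1 (n + 1), (t + i * c) / a) *
            (μ {ω | X ω ≤ t + (n + 1 : ℕ) * c}).toReal := by
            rw [Finset.prod_Icc_succ_top (by omega : 1 ≤ n + 1)]
            have h1 : t + (n + 1 : ℕ) * c = t + n * c + c := by push_cast; ring
            have h2 : t + ((n + 1 : ℕ) : ℝ) * c = t + n * c + c := by push_cast; ring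
            rw [h1]
            push_cast
            ring
  intro x hx hxa
  set k := ⌊(a - x) / c⌋₊ with hk
  have h1 : (μ {ω | X ω ≤ x + k * c}).toReal ≤ 1 := by
    have := prob_le_one (μ := μ) (s := {ω | X ω ≤ x + k * c})
    simpa using ENNReal.toReal_mono (by simp) this
  calc (μ {ω | X ω ≤ x}).toReal
      ≤ (∏ i ∈ Finset.Icc 1 k, (x + i * c) / a) * (μ {ω | X ω ≤ x + k * c}).toReal :=
        main k x hx
    _ ≤ (∏ i ∈ Finset.Icc 1 k, (x + i * c) / a) * 1 :=
        mul_le_mul_of_nonneg_left h1 (prodnn x hx k)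
    _ = ∏ i ∈ Finset.Icc 1 k, (x + i * c) / a := mul_one _
end

section
/- For all a > 0 and all f ∈ [0,1], a^{1−f} Γ(a+f) ≤ Γ(a+1), with equality if and only if f = 0 or f = 1. -/
open Real

theorem stmt_4 (a f : ℝ) (ha : 0 < a) (hf0 : 0 ≤ f) (hf1 : f ≤ 1) :
    a ^ (1 - f) * Real.Gamma (a + f) ≤ Real.Gamma (a + 1) ∧
      (a ^ (1 - f) * Real.Gamma (a + f) = Real.Gamma (a + 1) ↔ f = 0 ∨ f = 1) := by
  set L : ℝ → ℝ := fun x => Real.log (Real.Gamma x) with hLdef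
  have hcv : ConvexOn ℝ (Set.Ioi 0) L := Real.convexOn_log_Gamma
  have hGpos : ∀ x : ℝ, 0 < x → 0 < Real.Gamma x := fun x hx => Real.Gamma_pos_of_pos hx
  have hGa := hGpos a ha
  have hGa1 := hGpos (a + 1) (by linarith)
  -- functional equation in log form
  have hfe : ∀ x : ℝ, 0 < x → L (x + 1) = Real.log x + L x := by
    intro x hx
    simp only [hLdef]
    rw [Real.Gamma_add_one (ne_of_gt hx), Real.log_mul (ne_of_gt hx) (ne_of_gt (hGpos x hx))]
  -- convexity chord bound, general
  have hchord : ∀ x y g : ℝ, 0 < x → 0 < y → 0 ≤ g → g ≤ 1 →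
      L ((1 - g) * x + g * y) ≤ (1 - g) * L x + g * L y := by
    intro x y g hx hy hg0 hg1
    have := hcv.2 (Set.mem_Ioi.mpr hx) (Set.mem_Ioi.mpr hy)
      (by linarith : (0:ℝ) ≤ 1 - g) hg0 (by ring)
    simpa using this
  have hlog : ∀ g : ℝ, 0 ≤ g → g ≤ 1 → L (a + g) ≤ (1 - g) * L a + g * L (a + 1) := by
    intro g hg0 hg1
    have h := hchord a (a + 1) g ha (by linarith) hg0 hg1
    have : (1 - g) * a + g * (a + 1) = a + g := by ring
    rwa [this] at h
  -- main nonstrict inequality, for any g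
  have key : ∀ g : ℝ, 0 ≤ g → g ≤ 1 →
      a ^ (1 - g) * Real.Gamma (a + g) ≤ Real.Gamma (a + 1) := by
    intro g hg0 hg1
    have hGag := hGpos (a + g) (by linarith)
    have hlhs : 0 < a ^ (1 - g) * Real.Gamma (a + g) :=
      mul_pos (Real.rpow_pos_of_pos ha _) hGag
    rw [← Real.exp_log hlhs, ← Real.exp_log hGa1, Real.exp_le_exp]
    rw [Real.log_mul (ne_of_gt (Real.rpow_pos_of_pos ha _)) (ne_of_gt hGag),
      Real.log_rpow ha]
    have h1 := hlog g hg0 hg1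
    have h2 := hfe a ha
    simp only [hLdef] at h1 h2 ⊢
    rw [h2] at h1 ⊢
    nlinarith [h1]
  refine ⟨key f hf0 hf1, ?_, ?_⟩
  · -- equality implies f = 0 or f = 1
    intro heq
    by_contra hcon
    push_neg at hcon
    obtain ⟨hne0, hne1⟩ := hcon
    have hf0' : 0 < f := lt_of_le_of_ne hf0 (Ne.symm hne0)
    have hf1' : f < 1 := lt_of_le_of_ne hf1 hne1
    have hGaf := hGpos (a + f) (by linarith)
    -- log form of the equality
    have heqlog : L (a + f) = (1 - f) * L a + f * L (a + 1) := by
      have := congrArg Real.log heq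
      rw [Real.log_mul (ne_of_gt (Real.rpow_pos_of_pos ha _)) (ne_of_gt hGaf),
        Real.log_rpow ha] at this
      have h2 := hfe a ha
      simp only [hLdef] at this h2 ⊢
      rw [h2] at this ⊢
      nlinarith [this]
    -- derive: L(a + 1/2) ≥ (L a + L (a+1))/2
    have hmid : (L a + L (a + 1)) / 2 ≤ L (a + 1 / 2) := by
      rcases le_or_gt f (1 / 2) with hle | hgt
      · -- a + f = (1-2f) * a + 2f * (a + 1/2)
        have hA := hchord a (a + 1 / 2) (2 * f) ha (by linarith) (by linarith) (by linarith)
        have he : (1 - 2 * f) * a + 2 * f * (a + 1 / 2) = a + f := by ring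
        rw [he] at hA
        have hlin : f * (L a + L (a + 1)) ≤ f * (2 * L (a + 1 / 2)) := by nlinarith [heqlog, hA]
        have := le_of_mul_le_mul_left hlin hf0'
        linarith
      · -- a + f = (2 - 2f) * (a + 1/2) + (2f - 1) * (a + 1)
        have hA := hchord (a + 1 / 2) (a + 1) (2 * f - 1) (by linarith) (by linarith)
          (by linarith) (by linarith)
        have he : (1 - (2 * f - 1)) * (a + 1 / 2) + (2 * f - 1) * (a + 1) = a + f := by ring
        rw [he] at hA
        have hlin : (1 - f) * (L a + L (a + 1)) ≤ (1 - f) * (2 * L (a + 1 / 2)) := by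
          nlinarith [heqlog, hA]
        have := le_of_mul_le_mul_left hlin (by linarith : 0 < 1 - f)
        linarith
    -- convexity at a + 3/2 between a+1 and a+2
    have hB := hchord (a + 1) (a + 2) (1 / 2) (by linarith) (by linarith) (by norm_num)
      (by norm_num)
    have he2 : (1 - 1 / 2) * (a + 1) + 1 / 2 * (a + 2) = a + 1 / 2 + 1 := by ring
    rw [he2] at hB
    have hfe1 := hfe a ha
    have hfe2 := hfe (a + 1) (by linarith)
    have hfe3 := hfe (a + 1 / 2) (by linarith)
    have hfe2' : L (a + 2) = Real.log (a + 1) + L (a + 1) := by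
      have : a + 1 + 1 = a + 2 := by ring
      rwa [this] at hfe2
    -- conclude log (a+1/2) ≤ (log a + log (a+1)) / 2
    have hloglt : Real.log (a + 1 / 2) ≤ (Real.log a + Real.log (a + 1)) / 2 := by
      linarith
    have h2log : Real.log ((a + 1 / 2) ^ 2) ≤ Real.log (a * (a + 1)) := by
      rw [Real.log_pow, Real.log_mul (ne_of_gt ha) (by linarith)]
      push_cast
      linarith
    have hsq : (a + 1 / 2) ^ 2 ≤ a * (a + 1) := by
      have := Real.exp_le_exp.mpr h2log
      rwa [Real.exp_log (by positivity), Real.exp_log (by positivity)] at this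
    nlinarith
  · rintro (rfl | rfl)
    · rw [sub_zero, add_zero, Real.rpow_one, ← Real.Gamma_add_one (ne_of_gt ha)]
    · norm_num
end

section
/- For a > 0 and x ≥ a with k = ⌊x − a⌋, the product ∏_{i=0}^{k} a/(x − i) satisfies ∏_{i=0}^{k} a/(x − i) ≤ a^{x−a} Γ(a+1)/Γ(x+1), with equality if and only if x − a is an integer. -/
open Real MeasureTheory Set

-- strict Jensen step
lemma jensen_gamma (a f : ℝ) (ha : 0 < a) (hf0 : 0 < f) (hf1 : f < 1) :
    Real.Gamma (a + f) < a ^ f * Real.Gamma a := by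
  have hΓa : 0 < Real.Gamma a := Real.Gamma_pos_of_pos ha
  set ν := volume.restrict (Ioi (0:ℝ)) with hν
  set w : ℝ → NNReal := fun t => Real.toNNReal ((Real.Gamma a)⁻¹ * (Real.exp (-t) * t ^ (a-1)))
    with hwdef
  have hwmeas : Measurable w := by
    apply Measurable.real_toNNReal
    fun_prop
  set μ := ν.withDensity (fun t => (w t : ENNReal)) with hμ
  have hcongr : ∀ c : ℝ, ∀ t ∈ Ioi (0:ℝ), (w t : ℝ) * t ^ c
      = (Real.Gamma a)⁻¹ * (Real.exp (-t) * t ^ (a + c - 1)) := by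
    intro c t ht
    have ht' : (0:ℝ) < t := ht
    have hco : ((w t : ℝ)) = (Real.Gamma a)⁻¹ * (Real.exp (-t) * t ^ (a-1)) :=
      Real.coe_toNNReal _ (by positivity)
    rw [hco, show a + c - 1 = (a-1) + c by ring, Real.rpow_add ht']
    ring
  have hint : ∀ c : ℝ, 0 < a + c → Integrable (fun t => (w t : ℝ) * t ^ c) ν := by
    intro c hc
    have h1 : IntegrableOn (fun t : ℝ => (Real.Gamma a)⁻¹ * (Real.exp (-t) * t ^ (a + c - 1)))
        (Ioi 0) := (Real.GammaIntegral_convergent hc).const_mul _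
    exact h1.congr_fun (fun t ht => (hcongr c t ht).symm) measurableSet_Ioi
  have hval : ∀ c : ℝ, 0 < a + c →
      ∫ t, (w t : ℝ) * t ^ c ∂ν = (Real.Gamma a)⁻¹ * Real.Gamma (a+c) := by
    intro c hc
    rw [hν, setIntegral_congr_fun measurableSet_Ioi (hcongr c),
      MeasureTheory.integral_const_mul, ← Real.Gamma_eq_integral hc]
  have hμuniv : μ Set.univ = 1 := by
    rw [hμ, withDensity_apply _ MeasurableSet.univ, Measure.restrict_univ]
    have hi : Integrable (fun t => (w t : ℝ)) ν := by
      simpa using hint 0 (by linarith)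
    rw [lintegral_coe_eq_integral w hi]
    have : ∫ t, (w t : ℝ) ∂ν = 1 := by
      have := hval 0 (by linarith)
      simpa [Real.Gamma_pos_of_pos ha, inv_mul_cancel₀ hΓa.ne'] using this
    rw [this]; simp
  haveI : IsProbabilityMeasure μ := ⟨hμuniv⟩
  have hid_int : Integrable (fun t : ℝ => t) μ := by
    rw [hμ, integrable_withDensity_iff_integrable_smul hwmeas]
    simpa [NNReal.smul_def] using hint 1 (by linarith)
  have hgf_int : Integrable (fun t : ℝ => t ^ f) μ := by
    rw [hμ, integrable_withDensity_iff_integrable_smul hwmeas]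
    simpa [NNReal.smul_def] using hint f (by linarith)
  have hid_val : ∫ t, t ∂μ = a := by
    rw [hμ, integral_withDensity_eq_integral_smul hwmeas]
    simp only [NNReal.smul_def, smul_eq_mul]
    have h1 := hval 1 (by linarith)
    simp only [Real.rpow_one] at h1
    rw [h1, Real.Gamma_add_one ha.ne']
    field_simp
  have hgf_val : ∫ t, t ^ f ∂μ = (Real.Gamma a)⁻¹ * Real.Gamma (a + f) := by
    rw [hμ, integral_withDensity_eq_integral_smul hwmeas]
    simp only [NNReal.smul_def, smul_eq_mul]
    exact hval f (by linarith)
  have hmem : ∀ᵐ t ∂μ, t ∈ Ici (0:ℝ) := by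
    have h1 : ∀ᵐ t ∂ν, t ∈ Ici (0:ℝ) := by
      filter_upwards [ae_restrict_mem measurableSet_Ioi] with t ht using le_of_lt (mem_Ioi.mp ht)
    exact (withDensity_absolutelyContinuous ν _).ae_le h1
  have hconc : StrictConcaveOn ℝ (Ici 0) (fun t : ℝ => t ^ f) :=
    Real.strictConcaveOn_rpow hf0 hf1
  have hcont : ContinuousOn (fun t : ℝ => t ^ f) (Ici 0) := fun t _ =>
    (Real.continuousAt_rpow_const t f (Or.inr hf0.le)).continuousWithinAt
  rcases hconc.ae_eq_const_or_lt_map_average hcont isClosed_Ici hmem hid_int hgf_int with h | h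
  · exfalso
    set c := ⨍ t, t ∂μ
    have hnull : μ {t : ℝ | ¬ (t = c)} = 0 := ae_iff.mp h
    have hc : μ {c} = 0 := by
      apply (withDensity_absolutelyContinuous ν _)
      rw [hν, Measure.restrict_apply (measurableSet_singleton c)]
      exact measure_mono_null (inter_subset_left) (measure_singleton c)
    have : μ Set.univ = 0 := by
      have : (Set.univ : Set ℝ) ⊆ {t : ℝ | ¬ (t = c)} ∪ {c} := by
        intro t _
        by_cases ht : t = c
        · exact Or.inr ht
        · exact Or.inl ht
      exact le_antisymm (le_trans (measure_mono this)
        (le_trans (measure_union_le _ _) (by rw [hnull, hc]; simp))) zero_le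
    rw [hμuniv] at this
    exact one_ne_zero this
  · rw [average_eq_integral, average_eq_integral, hid_val, hgf_val] at h
    calc Real.Gamma (a + f) = Real.Gamma a * ((Real.Gamma a)⁻¹ * Real.Gamma (a + f)) := by
          field_simp
      _ < Real.Gamma a * a ^ f := by
          exact (mul_lt_mul_iff_right₀ hΓa).mpr h
      _ = a ^ f * Real.Gamma a := mul_comm _ _

lemma gamma_prod (x : ℝ) : ∀ k : ℕ, (k:ℝ) < x →
    Real.Gamma (x+1) = (∏ i ∈ Finset.range (k+1), (x - i)) * Real.Gamma (x - k) := by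
  intro k
  induction k with
  | zero =>
    intro h
    simp only [Nat.cast_zero, sub_zero] at *
    rw [Real.Gamma_add_one (ne_of_gt h)]
    simp
  | succ k ih =>
    intro h
    have hk : (k:ℝ) < x := by push_cast at h ⊢; linarith
    have hx1 : (0:ℝ) < x - (k+1:ℕ) := by push_cast at h ⊢; linarith
    have : Real.Gamma (x - k) = (x - (k+1:ℕ)) * Real.Gamma (x - (k+1:ℕ)) := by
      have heq : x - (k:ℕ) = (x - ((k:ℕ)+1)) + 1 := by push_cast; ring
      rw [heq, Real.Gamma_add_one (ne_of_gt (by push_cast at hx1 ⊢; linarith))]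
      push_cast
      ring_nf
    rw [ih hk, this]
    conv_rhs => rw [Finset.prod_range_succ]
    push_cast
    ring

theorem stmt_5 (a x : ℝ) (ha : 0 < a) (hx : a ≤ x) :
    (∏ i ∈ Finset.range (⌊x - a⌋₊ + 1), a / (x - i)) ≤
        a ^ (x - a) * Real.Gamma (a + 1) / Real.Gamma (x + 1) ∧
      ((∏ i ∈ Finset.range (⌊x - a⌋₊ + 1), a / (x - i)) =
          a ^ (x - a) * Real.Gamma (a + 1) / Real.Gamma (x + 1) ↔
        ∃ n : ℤ, x - a = n) := by
  set k := ⌊x - a⌋₊ with hk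
  set f := x - a - k with hfdef
  have hxa : 0 ≤ x - a := sub_nonneg.2 hx
  have hf0 : 0 ≤ f := by
    have := Nat.floor_le hxa
    simp only [hfdef]; linarith
  have hf1 : f < 1 := by
    have := Nat.lt_floor_add_one (x - a)
    simp only [hfdef]; linarith
  have hkx : (k:ℝ) < x := by
    have := Nat.floor_le hxa
    simp only [← hk] at this; linarith
  have hxk : x - k = a + f := by simp only [hfdef]; ring
  have hΓx1 : 0 < Real.Gamma (x+1) := Real.Gamma_pos_of_pos (by linarith)
  have hΓxk : 0 < Real.Gamma (x - k) := Real.Gamma_pos_of_pos (by rw [hxk]; linarith)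
  -- product identity
  have hprodne : (∏ i ∈ Finset.range (k+1), (x - i)) ≠ 0 := by
    intro h0
    have := gamma_prod x k hkx
    rw [h0, zero_mul] at this
    exact hΓx1.ne' this
  have hlhs : (∏ i ∈ Finset.range (k + 1), a / (x - i))
      = a ^ (k+1) * Real.Gamma (a + f) / Real.Gamma (x + 1) := by
    rw [Finset.prod_div_distrib, Finset.prod_const, Finset.card_range, ← hxk]
    rw [gamma_prod x k hkx]
    field_simp
  have hrhs : a ^ (x - a) * Real.Gamma (a + 1) / Real.Gamma (x + 1)
      = a ^ (k+1) * (a ^ f * Real.Gamma a) / Real.Gamma (x + 1) := by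
    have hxaeq : x - a = (k:ℝ) + f := by simp only [hfdef]; ring
    rw [hxaeq, Real.rpow_add ha, Real.rpow_natCast, Real.Gamma_add_one ha.ne']
    ring
  have hC : (0:ℝ) < a ^ (k+1) / Real.Gamma (x + 1) := by positivity
  -- key inequality with equality iff f = 0
  have hkey : Real.Gamma (a + f) ≤ a ^ f * Real.Gamma a ∧
      (Real.Gamma (a + f) = a ^ f * Real.Gamma a ↔ f = 0) := by
    rcases eq_or_lt_of_le hf0 with h0 | h0
    · constructor
      · rw [← h0]; simp
      · constructor
        · intro; exact h0.symm
        · intro hf; rw [← h0]; simp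
    · have := jensen_gamma a f ha h0 hf1
      exact ⟨le_of_lt this, by
        constructor
        · intro he; exact absurd he (ne_of_lt this)
        · intro hf; exact absurd hf.symm (ne_of_lt h0)⟩
  have hfiff : f = 0 ↔ ∃ n : ℤ, x - a = n := by
    constructor
    · intro hf
      exact ⟨k, by simp only [hfdef] at hf; push_cast; linarith⟩
    · rintro ⟨n, hn⟩
      have hn0 : 0 ≤ n := by
        have : (0:ℝ) ≤ (n:ℝ) := hn ▸ hxa
        exact_mod_cast this
      have : x - a = ((n.toNat : ℕ) : ℝ) := by
        rw [hn]; congr 1; exact_mod_cast (Int.toNat_of_nonneg hn0).symm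
      have hkn : k = n.toNat := by rw [hk, this, Nat.floor_natCast]
      simp only [hfdef, hkn, this]
      ring
  rw [hlhs, hrhs]
  constructor
  · rw [div_le_div_iff_of_pos_right hΓx1]
    exact mul_le_mul_of_nonneg_left hkey.1 (by positivity)
  · rw [← hfiff, div_eq_div_iff hΓx1.ne' hΓx1.ne', ← hkey.2]
    constructor
    · intro h
      have h2 : a ^ (k+1) * Real.Gamma (a + f) = a ^ (k+1) * (a ^ f * Real.Gamma a) :=
        mul_right_cancel₀ hΓx1.ne' h
      exact mul_left_cancel₀ (by positivity) h2
    · intro h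
      rw [h]
end

section
/- For a > 0 and 0 ≤ x ≤ a with k = ⌊a − x⌋, the product ∏_{i=1}^{k} (x+i)/a satisfies ∏_{i=1}^{k} (x+i)/a ≤ Γ(a+1)/(a^{a−x} Γ(x+1)), with equality if and only if a − x is an integer. -/
open Real

private lemma gamma_strict (a : ℝ) (ha : 0 < a) {δ : ℝ} (hδ0 : 0 < δ) (hδ1 : δ < 1) :
    Real.Gamma (a + 1 - δ) * a ^ δ < Real.Gamma (a + 1) := by
  set f : ℝ → ℝ := fun s => Real.log (Real.Gamma s) with hf
  have conv : ∀ p q lam mu : ℝ, 0 < p → 0 < q → 0 ≤ lam → 0 ≤ mu → lam + mu = 1 →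
      f (lam * p + mu * q) ≤ lam * f p + mu * f q := by
    intro p q lam mu hp hq hlam hmu hsum
    exact Real.convexOn_log_Gamma.2 (Set.mem_Ioi.mpr hp) (Set.mem_Ioi.mpr hq) hlam hmu hsum
  have three : ∀ p q r : ℝ, 0 < p → p < q → q < r →
      (r - p) * f q ≤ (r - q) * f p + (q - p) * f r := by
    intro p q r hp hpq hqr
    have hrp : (0:ℝ) < r - p := by linarith
    have h := conv p r ((r - q)/(r - p)) ((q - p)/(r - p)) hp (by linarith)
      (div_nonneg (by linarith) hrp.le) (div_nonneg (by linarith) hrp.le) (by field_simp; ring)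
    have hcomb : (r - q)/(r - p) * p + (q - p)/(r - p) * r = q := by field_simp; ring
    rw [hcomb] at h
    have h2 := mul_le_mul_of_nonneg_left h hrp.le
    calc (r - p) * f q ≤ (r - p) * ((r - q)/(r - p) * f p + (q - p)/(r - p) * f r) := h2
      _ = (r - q) * f p + (q - p) * f r := by field_simp
  have hstep : ∀ s : ℝ, 0 < s → f (s + 1) = f s + Real.log s := by
    intro s hs
    rw [hf]
    simp only
    rw [Real.Gamma_add_one hs.ne', Real.log_mul hs.ne' (Real.Gamma_pos_of_pos hs).ne']
    ring
  have hfa1 : f (a + 1) = f a + Real.log a := hstep a ha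
  have hfa2 : f (a + 2) = f (a + 1) + Real.log (a + 1) := by
    have h := hstep (a + 1) (by linarith)
    convert h using 2 <;> ring
  have hGy : 0 < Real.Gamma (a + 1 - δ) := Real.Gamma_pos_of_pos (by linarith)
  have hGa1 : 0 < Real.Gamma (a + 1) := Real.Gamma_pos_of_pos (by linarith)
  by_contra hcon
  push_neg at hcon
  have hlog1 : f (a + 1) ≤ f (a + 1 - δ) + δ * Real.log a := by
    have h1 : f (a + 1) ≤ Real.log (Real.Gamma (a + 1 - δ) * a ^ δ) :=
      Real.log_le_log hGa1 hcon
    rwa [Real.log_mul hGy.ne' (Real.rpow_pos_of_pos ha δ).ne', Real.log_rpow ha] at h1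
  have hE0 : δ * f a = δ * f (a + 1) - δ * Real.log a := by rw [hfa1]; ring
  have hlog2 : f (a + 1 - δ) + δ * Real.log a ≤ f (a + 1) := by
    have h2a := three a (a + 1 - δ) (a + 1) ha (by linarith) (by linarith)
    linarith [h2a, hE0]
  have heq : f (a + 1 - δ) = f (a + 1) - δ * Real.log a := by linarith
  -- choose u
  have hLpos : 0 < Real.log (a + 1) - Real.log a := by
    have := Real.log_lt_log ha (by linarith : a < a + 1); linarith
  have hLlt : Real.log (a + 1) - Real.log a < 1 / a := by
    have h1 : Real.log ((a + 1) / a) < (a + 1) / a - 1 :=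
      Real.log_lt_sub_one_of_pos (by positivity)
        (ne_of_gt ((one_lt_div ha).mpr (by linarith)))
    rw [Real.log_div (by linarith) ha.ne'] at h1
    have h2 : (a + 1) / a - 1 = 1 / a := by field_simp; ring
    linarith [h1, h2]
  have haL : a < 1 / (Real.log (a + 1) - Real.log a) := by
    rw [lt_div_iff₀ hLpos]
    have h1 := mul_lt_mul_of_pos_left hLlt ha
    have h2 : a * (1 / a) = 1 := by field_simp
    linarith
  set c : ℝ := min (a + 1 - δ) (1 / (Real.log (a + 1) - Real.log a)) with hc
  have hac : a < c := lt_min (by linarith) haL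
  set u : ℝ := (a + c) / 2 with hu
  have hau : a < u := by rw [hu]; linarith
  have hupos : 0 < u := by linarith
  have huc : u < c := by rw [hu]; linarith
  have huy : u < a + 1 - δ := lt_of_lt_of_le huc (min_le_left _ _)
  have huL : u * (Real.log (a + 1) - Real.log a) < 1 := by
    have h1 : u < 1 / (Real.log (a + 1) - Real.log a) :=
      lt_of_lt_of_le huc (min_le_right _ _)
    rw [lt_div_iff₀ hLpos] at h1
    exact h1
  -- f u equals the line value
  have hfu : f u = f (a + 1) - Real.log a + (u - a) * Real.log a := by
    have h1 := three a u (a + 1 - δ) ha hau huy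
    have h2 := three u (a + 1 - δ) (a + 1) hupos huy (by linarith)
    rw [heq] at h1 h2
    have hE1 : (a + 1 - δ - u) * f a
        = (a + 1 - δ - u) * f (a + 1) - (a + 1 - δ - u) * Real.log a := by rw [hfa1]; ring
    have hub : f u ≤ f (a + 1) - Real.log a + (u - a) * Real.log a := by
      have key : (1 - δ) * f u ≤ (1 - δ) * (f (a + 1) - Real.log a + (u - a) * Real.log a) := by
        linarith [h1, hE1]
      exact (mul_le_mul_iff_right₀ (by linarith : (0:ℝ) < 1 - δ)).mp key
    have hlb : f (a + 1) - Real.log a + (u - a) * Real.log a ≤ f u := by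
      have key : δ * (f (a + 1) - Real.log a + (u - a) * Real.log a) ≤ δ * f u := by
        linarith [h2]
      exact (mul_le_mul_iff_right₀ hδ0).mp key
    linarith
  -- final contradiction
  have hfu1 : f (u + 1) = f u + Real.log u := hstep u hupos
  have h3 := three (a + 1) (u + 1) (a + 2) (by linarith) (by linarith) (by linarith)
  rw [hfu1, hfu, hfa2] at h3
  have hkey : Real.log u - Real.log a ≤ (u - a) * (Real.log (a + 1) - Real.log a) := by
    linarith [h3]
  have hlogu : (u - a) / u ≤ Real.log u - Real.log a := by
    have h1 : Real.log (a / u) ≤ a / u - 1 := Real.log_le_sub_one_of_pos (by positivity)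
    rw [Real.log_div ha.ne' hupos.ne'] at h1
    have h2 : u * u⁻¹ = 1 := mul_inv_cancel₀ hupos.ne'
    have h3 : a / u = a * u⁻¹ := by ring
    have h4 : (u - a) / u = (u - a) * u⁻¹ := by ring
    rw [h3] at h1
    rw [h4]
    nlinarith [h1, h2]
  have hstrict : (u - a) * (Real.log (a + 1) - Real.log a) < (u - a) / u := by
    rw [lt_div_iff₀ hupos]
    have h1 := mul_lt_mul_of_pos_left huL (by linarith : (0:ℝ) < u - a)
    linarith [h1]
  linarith [hlogu, hkey, hstrict]

private lemma gamma_fact (x : ℝ) (hx : 0 ≤ x) : ∀ k : ℕ,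
    Real.Gamma (x + k + 1) = (∏ i ∈ Finset.Icc 1 k, (x + i)) * Real.Gamma (x + 1)
  | 0 => by simp
  | (k+1) => by
    rw [Finset.prod_Icc_succ_top (by omega : 1 ≤ k+1)]
    have h : x + ((k:ℕ)+1:ℕ) + 1 = (x + k + 1) + 1 := by push_cast; ring
    rw [h, Real.Gamma_add_one (by positivity), gamma_fact x hx k]
    push_cast; ring

theorem stmt_6 (a x : ℝ) (ha : 0 < a) (hx0 : 0 ≤ x) (hxa : x ≤ a) :
    (∏ i ∈ Finset.Icc 1 ⌊a - x⌋₊, (x + i) / a) ≤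
        Real.Gamma (a + 1) / (a ^ (a - x) * Real.Gamma (x + 1)) ∧
      ((∏ i ∈ Finset.Icc 1 ⌊a - x⌋₊, (x + i) / a) =
          Real.Gamma (a + 1) / (a ^ (a - x) * Real.Gamma (x + 1)) ↔
        ∃ n : ℤ, a - x = n) := by
  have ht0 : 0 ≤ a - x := by linarith
  set k : ℕ := ⌊a - x⌋₊ with hk
  set δ : ℝ := (a - x) - k with hδ
  have hδ0 : 0 ≤ δ := by
    have := Nat.floor_le ht0
    simp only [hδ]; linarith
  have hδ1 : δ < 1 := by
    have := Nat.lt_floor_add_one (a - x)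
    simp only [hδ]; linarith
  have hyeq : x + k + 1 = a + 1 - δ := by rw [hδ]; ring
  have hGx1 : 0 < Real.Gamma (x + 1) := Real.Gamma_pos_of_pos (by linarith)
  have hGy : 0 < Real.Gamma (x + k + 1) := Real.Gamma_pos_of_pos (by positivity)
  have hGa1 : 0 < Real.Gamma (a + 1) := Real.Gamma_pos_of_pos (by linarith)
  have hP : (0:ℝ) < a ^ k := by positivity
  have hQ : (0:ℝ) < a ^ δ := Real.rpow_pos_of_pos ha δ
  have hLHS : (∏ i ∈ Finset.Icc 1 k, (x + i) / a)
      = Real.Gamma (x + k + 1) / (Real.Gamma (x + 1) * a ^ k) := by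
    rw [Finset.prod_div_distrib, Finset.prod_const, Nat.card_Icc]
    simp only [Nat.add_sub_cancel]
    rw [gamma_fact x hx0 k]
    rw [mul_comm (∏ i ∈ Finset.Icc 1 k, (x + i)) (Real.Gamma (x+1)), ← mul_div_mul_left
      (∏ i ∈ Finset.Icc 1 k, (x + i)) (a ^ k) hGx1.ne']
  have hRHS : a ^ (a - x) = a ^ k * a ^ δ := by
    rw [← Real.rpow_natCast a k, ← Real.rpow_add ha]
    congr 1
    rw [hδ]; ring
  have hkeyle : Real.Gamma (x + k + 1) * a ^ δ ≤ Real.Gamma (a + 1) := by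
    rcases eq_or_lt_of_le hδ0 with h0 | h0
    · rw [← h0, Real.rpow_zero, mul_one, hyeq, ← h0, sub_zero]
    · rw [hyeq]; exact (gamma_strict a ha h0 hδ1).le
  have hkeyiff : Real.Gamma (x + k + 1) * a ^ δ = Real.Gamma (a + 1) ↔ δ = 0 := by
    constructor
    · intro h
      by_contra hne
      have h0 : 0 < δ := lt_of_le_of_ne hδ0 (Ne.symm hne)
      have hs := gamma_strict a ha h0 hδ1
      rw [← hyeq] at hs
      linarith
    · intro h
      rw [h, Real.rpow_zero, mul_one, hyeq, h, sub_zero]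
  have hδiff : δ = 0 ↔ ∃ n : ℤ, a - x = n := by
    constructor
    · intro h
      exact ⟨k, by rw [hδ] at h; push_cast; linarith⟩
    · rintro ⟨n, hn⟩
      have hn0 : 0 ≤ n := by
        have : (0:ℝ) ≤ n := by rw [← hn]; exact ht0
        exact_mod_cast this
      have hkn : k = n.toNat := by
        rw [hk, hn, ← Int.toNat_of_nonneg hn0]
        push_cast
        exact Nat.floor_natCast _
      rw [hδ, hkn, hn]
      have hcast : ((n.toNat : ℕ) : ℝ) = (n : ℝ) := by
        exact_mod_cast congrArg (fun z : ℤ => (z : ℝ)) (Int.toNat_of_nonneg hn0)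
      rw [hcast]; ring
  constructor
  · rw [hLHS, hRHS]
    rw [div_le_div_iff₀ (by positivity) (by positivity)]
    nlinarith [mul_le_mul_of_nonneg_right hkeyle (mul_pos hGx1 hP).le]
  · rw [hLHS, hRHS, ← hδiff, ← hkeyiff]
    rw [div_eq_div_iff (by positivity) (by positivity)]
    constructor
    · intro h
      have h2 : (Real.Gamma (x + k + 1) * a ^ δ) * (Real.Gamma (x + 1) * a ^ k)
          = Real.Gamma (a + 1) * (Real.Gamma (x + 1) * a ^ k) := by linear_combination h
      exact mul_right_cancel₀ (by positivity) h2
    · intro h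
      linear_combination (Real.Gamma (x + 1) * a ^ k) * h
end

section
/- Suppose X ≥ 0 with mean a ∈ (0,∞) admits a c-bounded size bias coupling (Y = X* and Y ≤ X + c a.s.). Then for every β ∈ ℝ, E[e^{βX}] < ∞. -/
open MeasureTheory Real

theorem stmt_7
    {Ω : Type*} [MeasurableSpace Ω] (μ : Measure Ω) [IsProbabilityMeasure μ]
    (X Y : Ω → ℝ) (a c : ℝ) (ha : 0 < a) (hc : 0 < c)
    (hXm : Measurable X) (hYm : Measurable Y)
    (hXnn : ∀ᵐ ω ∂μ, 0 ≤ X ω)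
    (hXint : Integrable X μ)
    (hmean : ∫ ω, X ω ∂μ = a)
    (hsb : ∀ g : ℝ → ℝ, Measurable g → (∃ C, ∀ x, |g x| ≤ C) →
        ∫ ω, g (Y ω) ∂μ = (∫ ω, X ω * g (X ω) ∂μ) / a)
    (hcoup : ∀ᵐ ω ∂μ, Y ω ≤ X ω + c) :
    ∀ β : ℝ, Integrable (fun ω => Real.exp (β * X ω)) μ := by
  -- Key tail inequality: t * μ(X ≥ t) ≤ a * μ(X ≥ t - c)
  have key : ∀ t : ℝ, t * (μ (X ⁻¹' Set.Ici t)).toReal ≤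
      a * (μ (X ⁻¹' Set.Ici (t - c))).toReal := by
    intro t
    set g : ℝ → ℝ := (Set.Ici t).indicator (fun _ => (1:ℝ)) with hg
    have hgm : Measurable g := measurable_const.indicator measurableSet_Ici
    have hgb : ∃ C, ∀ x, |g x| ≤ C := by
      refine ⟨1, fun x => ?_⟩
      by_cases hx : x ∈ Set.Ici t <;> simp [hg, Set.indicator_apply, hx]
    have hsb' := hsb g hgm hgb
    -- LHS of hsb': μ(Y ≥ t)
    have hY : ∫ ω, g (Y ω) ∂μ = (μ (Y ⁻¹' Set.Ici t)).toReal := by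
      have : (fun ω => g (Y ω)) = (Y ⁻¹' Set.Ici t).indicator (fun _ => (1:ℝ)) := by
        funext ω
        by_cases hω : Y ω ∈ Set.Ici t <;>
          simp [hg, Set.indicator_apply, hω]
      rw [this, integral_indicator_const (1:ℝ) (hYm measurableSet_Ici), smul_eq_mul, mul_one]
      rfl
    -- X * g(X) = indicator of {X ≥ t} applied to X
    have hXg : (fun ω => X ω * g (X ω)) = (X ⁻¹' Set.Ici t).indicator X := by
      funext ω
      by_cases hω : X ω ∈ Set.Ici t <;>
        simp [hg, Set.indicator_apply, hω]
    have hmeas : MeasurableSet (X ⁻¹' Set.Ici t) := hXm measurableSet_Ici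
    have hint : IntegrableOn X (X ⁻¹' Set.Ici t) μ := hXint.integrableOn
    have h1 : t * (μ (X ⁻¹' Set.Ici t)).toReal ≤ ∫ ω, X ω * g (X ω) ∂μ := by
      rw [hXg, integral_indicator hmeas]
      exact setIntegral_ge_of_const_le_real hmeas (measure_ne_top μ _) (fun x hx => hx) hint
    have h2 : ∫ ω, X ω * g (X ω) ∂μ = a * (μ (Y ⁻¹' Set.Ici t)).toReal := by
      rw [← hY, hsb']
      field_simp
    have h3 : (μ (Y ⁻¹' Set.Ici t)).toReal ≤ (μ (X ⁻¹' Set.Ici (t - c))).toReal := by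
      refine ENNReal.toReal_mono (measure_ne_top μ _) (measure_mono_ae ?_)
      filter_upwards [hcoup] with ω hω hmem
      have h' : t ≤ Y ω := hmem
      show t - c ≤ X ω
      linarith
    calc t * (μ (X ⁻¹' Set.Ici t)).toReal ≤ ∫ ω, X ω * g (X ω) ∂μ := h1
      _ = a * (μ (Y ⁻¹' Set.Ici t)).toReal := h2
      _ ≤ a * (μ (X ⁻¹' Set.Ici (t - c))).toReal := by
          exact mul_le_mul_of_nonneg_left h3 ha.le
  -- p n := μ(X ≥ n c); super-exponential decay
  set p : ℕ → ℝ := fun n => (μ (X ⁻¹' Set.Ici ((n : ℝ) * c))).toReal with hp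
  have hpnn : ∀ n, 0 ≤ p n := fun n => ENNReal.toReal_nonneg
  have hp0 : p 0 ≤ 1 := by
    exact ENNReal.toReal_le_of_le_ofReal one_pos.le (by simpa using prob_le_one)
  have hprec : ∀ n : ℕ, p (n + 1) ≤ a / (((n : ℝ) + 1) * c) * p n := by
    intro n
    have h := key (((n : ℝ) + 1) * c)
    have hsub : ((n : ℝ) + 1) * c - c = (n : ℝ) * c := by ring
    rw [hsub] at h
    have hpos : 0 < ((n : ℝ) + 1) * c := by positivity
    rw [hp]
    push_cast
    rw [div_mul_eq_mul_div, le_div_iff₀ hpos]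
    calc (μ (X ⁻¹' Set.Ici (((n:ℝ) + 1) * c))).toReal * (((n:ℝ) + 1) * c)
        = ((n : ℝ) + 1) * c * (μ (X ⁻¹' Set.Ici (((n:ℝ) + 1) * c))).toReal := by ring
      _ ≤ a * (μ (X ⁻¹' Set.Ici ((n:ℝ) * c))).toReal := h
  have hpbound : ∀ n : ℕ, p n ≤ (a / c) ^ n / n.factorial := by
    intro n
    induction n with
    | zero => simpa using hp0
    | succ n ih =>
      have h1 := hprec n
      have h2 : a / (((n : ℝ) + 1) * c) * p n ≤
          a / (((n : ℝ) + 1) * c) * ((a / c) ^ n / n.factorial) := by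
        apply mul_le_mul_of_nonneg_left ih
        positivity
      have h3 : a / (((n : ℝ) + 1) * c) * ((a / c) ^ n / n.factorial) =
          (a / c) ^ (n + 1) / (n + 1).factorial := by
        rw [Nat.factorial_succ]
        push_cast
        have hc0 : c ≠ 0 := hc.ne'
        field_simp
        ring_nf
        rw [mul_assoc (a * a ^ n) c c⁻¹, mul_inv_cancel₀ hc0, mul_one]
      linarith
  -- Now integrability
  intro β
  have hmeas : AEStronglyMeasurable (fun ω => Real.exp (β * X ω)) μ :=
    ((Real.measurable_exp.comp ((measurable_const.mul hXm)))).aestronglyMeasurable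
  by_cases hβ : β ≤ 0
  · -- bounded by 1
    refine Integrable.mono' (integrable_const 1) hmeas ?_
    filter_upwards [hXnn] with ω hω
    rw [Real.norm_eq_abs, abs_of_pos (Real.exp_pos _)]
    exact Real.exp_le_one_iff.mpr (mul_nonpos_of_nonpos_of_nonneg hβ hω)
  · push_neg at hβ
    refine ⟨hmeas, ?_⟩
    rw [hasFiniteIntegral_iff_norm]
    -- partition [0, ∞) into [nc, (n+1)c)
    set A : ℕ → Set Ω := fun n => X ⁻¹' Set.Ico ((n : ℝ) * c) (((n : ℝ) + 1) * c) with hA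
    have hAm : ∀ n, MeasurableSet (A n) := fun n => hXm measurableSet_Ico
    have hAd : Pairwise (Function.onFun Disjoint A) := by
      intro m n hmn
      rcases hmn.lt_or_gt with h | h
      · apply Set.disjoint_left.mpr
        intro ω h1 h2
        simp only [hA, Set.mem_preimage, Set.mem_Ico] at h1 h2
        have : ((m : ℝ) + 1) * c ≤ (n : ℝ) * c := by
          apply mul_le_mul_of_nonneg_right _ hc.le
          exact_mod_cast h
        linarith
      · apply Set.disjoint_left.mpr
        intro ω h1 h2
        simp only [hA, Set.mem_preimage, Set.mem_Ico] at h1 h2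
        have : ((n : ℝ) + 1) * c ≤ (m : ℝ) * c := by
          apply mul_le_mul_of_nonneg_right _ hc.le
          exact_mod_cast h
        linarith
    have hIco : (⋃ n : ℕ, Set.Ico ((n:ℝ) * c) (((n:ℝ) + 1) * c)) = Set.Ici 0 := by
      ext x
      simp only [Set.mem_iUnion, Set.mem_Ico, Set.mem_Ici]
      constructor
      · rintro ⟨n, h1, _⟩
        have : (0:ℝ) ≤ (n : ℝ) * c := by positivity
        linarith
      · intro hx
        refine ⟨⌊x / c⌋₊, ?_, ?_⟩
        · calc (⌊x / c⌋₊ : ℝ) * c ≤ x / c * c :=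
              mul_le_mul_of_nonneg_right (Nat.floor_le (by positivity)) hc.le
            _ = x := by field_simp
        · have := Nat.lt_floor_add_one (x / c)
          calc x = x / c * c := by field_simp
            _ < ((⌊x / c⌋₊ : ℝ) + 1) * c :=
              mul_lt_mul_of_pos_right this hc
    have hAU : (⋃ n, A n) = X ⁻¹' Set.Ici 0 := by
      calc (⋃ n, A n) = X ⁻¹' (⋃ n : ℕ, Set.Ico ((n:ℝ) * c) (((n:ℝ) + 1) * c)) :=
            (Set.preimage_iUnion).symm
        _ = X ⁻¹' Set.Ici 0 := by rw [hIco]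
    have hres : μ.restrict (X ⁻¹' Set.Ici 0) = μ := by
      apply Measure.restrict_eq_self_of_ae_mem
      filter_upwards [hXnn] with ω hω
      simpa using hω
    -- bound lintegral
    set f : Ω → ENNReal := fun ω => ENNReal.ofReal (Real.exp (β * X ω)) with hf
    have hfe : ∀ ω, ENNReal.ofReal ‖Real.exp (β * X ω)‖ = f ω := by
      intro ω
      rw [Real.norm_eq_abs, abs_of_pos (Real.exp_pos _)]
    have step1 : ∫⁻ ω, ENNReal.ofReal ‖Real.exp (β * X ω)‖ ∂μ = ∫⁻ ω, f ω ∂μ := by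
      simp_rw [hfe]
    rw [step1]
    have step2 : ∫⁻ ω, f ω ∂μ = ∑' n, ∫⁻ ω in A n, f ω ∂μ := by
      rw [← lintegral_iUnion hAm hAd f, hAU, hres]
    set u : ℕ → ℝ := fun n => Real.exp (β * c) * (Real.exp (β * c) * (a / c)) ^ n / n.factorial
      with hu
    have hunn : ∀ n, 0 ≤ u n := by
      intro n
      rw [hu]
      positivity
    have step3 : ∀ n, ∫⁻ ω in A n, f ω ∂μ ≤ ENNReal.ofReal (u n) := by
      intro n
      have hb1 : ∫⁻ ω in A n, f ω ∂μ ≤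
          ∫⁻ _ in A n, ENNReal.ofReal (Real.exp (β * (((n:ℝ) + 1) * c))) ∂μ := by
        refine setLIntegral_mono' (hAm n) (fun ω hω => ?_)
        simp only [hA, Set.mem_preimage, Set.mem_Ico] at hω
        apply ENNReal.ofReal_le_ofReal
        exact Real.exp_le_exp.mpr (mul_le_mul_of_nonneg_left hω.2.le hβ.le)
      rw [setLIntegral_const] at hb1
      have hb2 : μ (A n) ≤ ENNReal.ofReal ((a / c) ^ n / n.factorial) := by
        have hmono : μ (A n) ≤ μ (X ⁻¹' Set.Ici ((n : ℝ) * c)) := by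
          apply measure_mono
          intro ω hω
          simp only [hA, Set.mem_preimage, Set.mem_Ico] at hω
          exact hω.1
        calc μ (A n) ≤ μ (X ⁻¹' Set.Ici ((n : ℝ) * c)) := hmono
          _ = ENNReal.ofReal (p n) := by
              rw [hp]; exact (ENNReal.ofReal_toReal (measure_ne_top μ _)).symm
          _ ≤ ENNReal.ofReal ((a / c) ^ n / n.factorial) :=
              ENNReal.ofReal_le_ofReal (hpbound n)
      calc ∫⁻ ω in A n, f ω ∂μ
          ≤ ENNReal.ofReal (Real.exp (β * (((n:ℝ) + 1) * c))) * μ (A n) := hb1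
        _ ≤ ENNReal.ofReal (Real.exp (β * (((n:ℝ) + 1) * c))) *
              ENNReal.ofReal ((a / c) ^ n / n.factorial) :=
            mul_le_mul_right hb2 _
        _ = ENNReal.ofReal (Real.exp (β * (((n:ℝ) + 1) * c)) *
              ((a / c) ^ n / n.factorial)) :=
            (ENNReal.ofReal_mul (Real.exp_pos _).le).symm
        _ = ENNReal.ofReal (u n) := by
            congr 1
            simp only [hu]
            have h2 : Real.exp (β * (((n:ℝ) + 1) * c)) =
                Real.exp (β * c) * Real.exp (β * c) ^ n := by
              rw [← Real.exp_nat_mul, ← Real.exp_add]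
              ring_nf
            rw [h2, mul_pow]
            ring
    have husum : Summable u := by
      have := (Real.summable_pow_div_factorial (Real.exp (β * c) * (a / c))).mul_left
        (Real.exp (β * c))
      refine this.congr (fun n => ?_)
      rw [hu]
      ring
    calc ∫⁻ ω, f ω ∂μ = ∑' n, ∫⁻ ω in A n, f ω ∂μ := step2
      _ ≤ ∑' n, ENNReal.ofReal (u n) := ENNReal.tsum_le_tsum step3
      _ = ENNReal.ofReal (∑' n, u n) := (ENNReal.ofReal_tsum_of_nonneg hunn husum).symm
      _ < ⊤ := ENNReal.ofReal_lt_top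
end

section
/- Suppose X ≥ 0 with mean a ∈ (0,∞) admits a c-bounded size bias coupling. Then for all β ∈ ℝ, log E[e^{βX}] ≤ (a/c)(e^{βc} − 1). -/
open MeasureTheory Real Filter

section Aux

set_option linter.unusedVariables false
set_option linter.unusedSectionVars false

variable {Ω : Type*} [MeasurableSpace Ω] {μ : Measure Ω} [IsProbabilityMeasure μ]
  {X Y : Ω → ℝ} {a c : ℝ}


lemma aux_Y_nonneg (ha : 0 < a)
    (hXm : Measurable X) (hYm : Measurable Y)
    (hXnn : ∀ᵐ ω ∂μ, 0 ≤ X ω)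
    (hsb : ∀ g : ℝ → ℝ, Measurable g → (∃ C, ∀ x, |g x| ≤ C) →
        ∫ ω, g (Y ω) ∂μ = (∫ ω, X ω * g (X ω) ∂μ) / a) :
    ∀ᵐ ω ∂μ, 0 ≤ Y ω := by
  set g : ℝ → ℝ := (Set.Iio (0:ℝ)).indicator 1 with hg
  have hgm : Measurable g := measurable_one.indicator measurableSet_Iio
  have hgb : ∀ x, |g x| ≤ 1 := by
    intro x
    by_cases h : x ∈ Set.Iio (0:ℝ) <;> simp [hg, Set.indicator_apply, h]
  have hg0 : ∀ x, 0 ≤ x → g x = 0 := by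
    intro x hx
    simp [hg, Set.indicator_apply, not_lt.mpr hx]
  have hkey := hsb g hgm ⟨1, hgb⟩
  have hzero : ∫ ω, X ω * g (X ω) ∂μ = 0 := by
    have : (fun ω => X ω * g (X ω)) =ᵐ[μ] 0 := by
      filter_upwards [hXnn] with ω hω
      simp [hg0 _ hω]
    rw [integral_congr_ae this]; simp
  rw [hzero, zero_div] at hkey
  have hgYint : Integrable (fun ω => g (Y ω)) μ := by
    refine Integrable.mono' (integrable_const 1) (hgm.comp hYm).aestronglyMeasurable ?_
    exact Eventually.of_forall fun ω => hgb _
  have hgYnn : 0 ≤ᵐ[μ] fun ω => g (Y ω) := by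
    refine Eventually.of_forall fun ω => ?_
    by_cases h : Y ω ∈ Set.Iio (0:ℝ) <;> simp [hg, Set.indicator_apply, h]
  have := (integral_eq_zero_iff_of_nonneg_ae hgYnn hgYint).mp hkey
  filter_upwards [this] with ω hω
  by_contra h
  push_neg at h
  have : g (Y ω) = 1 := by simp [hg, Set.indicator_apply, h]
  simp [this] at hω


lemma aux_int_exp (ha : 0 < a) (hc : 0 < c)
    (hXm : Measurable X) (hYm : Measurable Y)
    (hXnn : ∀ᵐ ω ∂μ, 0 ≤ X ω) (hXint : Integrable X μ)
    (hsb : ∀ g : ℝ → ℝ, Measurable g → (∃ C, ∀ x, |g x| ≤ C) →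
        ∫ ω, g (Y ω) ∂μ = (∫ ω, X ω * g (X ω) ∂μ) / a)
    (hcoup : ∀ᵐ ω ∂μ, Y ω ≤ X ω + c) (β : ℝ) :
    Integrable (fun ω => Real.exp (β * X ω)) μ := by
  have hmeas : Measurable (fun ω => Real.exp (β * X ω)) := (hXm.const_mul β).exp
  rcases le_or_gt β 0 with hβ | hβ
  · refine Integrable.mono' (integrable_const 1) hmeas.aestronglyMeasurable ?_
    filter_upwards [hXnn] with ω hω
    rw [Real.norm_eq_abs, abs_of_pos (exp_pos _)]
    exact exp_le_one_iff.mpr (mul_nonpos_of_nonpos_of_nonneg hβ hω)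
  -- β > 0
  set t : ℝ := 2 * a * Real.exp (β * c) with ht_def
  have ht : 0 < t := by positivity
  -- truncated functions are integrable
  have hgKm : ∀ K : ℝ, Measurable (fun x => Real.exp (β * min x K)) :=
    fun K => ((measurable_id.min measurable_const).const_mul β).exp
  have hgKb : ∀ K x : ℝ, |Real.exp (β * min x K)| ≤ Real.exp (β * |K|) := by
    intro K x
    rw [abs_of_pos (exp_pos _), exp_le_exp]
    exact mul_le_mul_of_nonneg_left ((min_le_right _ _).trans (le_abs_self _)) hβ.le
  have IK : ∀ K : ℝ, Integrable (fun ω => Real.exp (β * min (X ω) K)) μ := by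
    intro K
    refine Integrable.mono' (integrable_const (Real.exp (β * |K|)))
      ((hgKm K).comp hXm).aestronglyMeasurable ?_
    exact Eventually.of_forall fun ω => (Real.norm_eq_abs _) ▸ hgKb K (X ω)
  have IYK : ∀ K : ℝ, Integrable (fun ω => Real.exp (β * min (Y ω) K)) μ := by
    intro K
    refine Integrable.mono' (integrable_const (Real.exp (β * |K|)))
      ((hgKm K).comp hYm).aestronglyMeasurable ?_
    exact Eventually.of_forall fun ω => (Real.norm_eq_abs _) ▸ hgKb K (Y ω)
  have IXK : ∀ K : ℝ, Integrable (fun ω => X ω * Real.exp (β * min (X ω) K)) μ := by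
    intro K
    refine Integrable.mono' ((hXint.abs).const_mul (Real.exp (β * |K|)))
      (hXm.mul ((hgKm K).comp hXm)).aestronglyMeasurable ?_
    refine Eventually.of_forall fun ω => ?_
    rw [Real.norm_eq_abs, abs_mul, mul_comm]
    exact mul_le_mul_of_nonneg_right (hgKb K (X ω)) (abs_nonneg _)
  -- the uniform bound
  have key : ∀ K : ℝ, (∫ ω, Real.exp (β * min (X ω) K) ∂μ) ≤ 2 * Real.exp (β * t) := by
    intro K
    set m := ∫ ω, Real.exp (β * min (X ω) K) ∂μ with hm
    have hid := hsb (fun x => Real.exp (β * min x K)) (hgKm K) ⟨_, fun x => hgKb K x⟩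
    have hid' : ∫ ω, X ω * Real.exp (β * min (X ω) K) ∂μ
        = a * ∫ ω, Real.exp (β * min (Y ω) K) ∂μ := by
      rw [hid]; field_simp
    have ineq1 : ∫ ω, Real.exp (β * min (Y ω) K) ∂μ ≤ Real.exp (β * c) * m := by
      rw [hm, ← integral_const_mul]
      refine integral_mono_ae (IYK K) ((IK K).const_mul _) ?_
      filter_upwards [hcoup] with ω hω
      rw [← Real.exp_add, exp_le_exp]
      have h1 : min (Y ω) K ≤ min (X ω) K + c := by
        rcases le_total (X ω) K with h | h
        · exact (min_le_left _ _).trans (by rw [min_eq_left h] at *; linarith)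
        · rw [min_eq_right h]; exact (min_le_right _ _).trans (by linarith)
      calc β * min (Y ω) K ≤ β * (min (X ω) K + c) := mul_le_mul_of_nonneg_left h1 hβ.le
        _ = β * c + β * min (X ω) K := by ring
    have ineq2 : m ≤ Real.exp (β * t) + (∫ ω, X ω * Real.exp (β * min (X ω) K) ∂μ) / t := by
      have hpt : ∀ᵐ ω ∂μ, Real.exp (β * min (X ω) K)
          ≤ Real.exp (β * t) + (X ω * Real.exp (β * min (X ω) K)) / t := by
        filter_upwards [hXnn] with ω hω
        rcases le_total (X ω) t with h | h
        · have h2 : Real.exp (β * min (X ω) K) ≤ Real.exp (β * t) := by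
            rw [exp_le_exp]
            exact mul_le_mul_of_nonneg_left ((min_le_left _ _).trans h) hβ.le
          have h3 : 0 ≤ (X ω * Real.exp (β * min (X ω) K)) / t :=
            div_nonneg (mul_nonneg hω (exp_pos _).le) ht.le
          linarith
        · have h2 : Real.exp (β * min (X ω) K) ≤ (X ω * Real.exp (β * min (X ω) K)) / t := by
            rw [le_div_iff₀ ht]
            nlinarith [Real.exp_pos (β * min (X ω) K)]
          linarith [Real.exp_pos (β * t)]
      calc m ≤ ∫ ω, (Real.exp (β * t) + (X ω * Real.exp (β * min (X ω) K)) / t) ∂μ :=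
            integral_mono_ae (IK K) ((integrable_const _).add ((IXK K).div_const t)) hpt
        _ = Real.exp (β * t) + (∫ ω, X ω * Real.exp (β * min (X ω) K) ∂μ) / t := by
            rw [integral_add (integrable_const _) ((IXK K).div_const t), integral_const,
              probReal_univ, smul_eq_mul, one_mul, integral_div]
      -- done
    have hfin : m ≤ Real.exp (β * t) + m / 2 := by
      have h4 : (∫ ω, X ω * Real.exp (β * min (X ω) K) ∂μ) / t
          ≤ (a * (Real.exp (β * c) * m)) / t := by
        gcongr
        rw [hid']
        exact mul_le_mul_of_nonneg_left ineq1 ha.le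
      have h5 : (a * (Real.exp (β * c) * m)) / t = m / 2 := by
        rw [ht_def]; field_simp
      linarith
    linarith
  -- monotone convergence
  refine ⟨hmeas.aestronglyMeasurable, ?_⟩
  rw [hasFiniteIntegral_iff_ofReal (Eventually.of_forall fun ω => (exp_pos _).le)]
  have step1 : ∫⁻ ω, ENNReal.ofReal (Real.exp (β * X ω)) ∂μ
      = ⨆ n : ℕ, ∫⁻ ω, ENNReal.ofReal (Real.exp (β * min (X ω) n)) ∂μ := by
    rw [← lintegral_iSup]
    · refine lintegral_congr fun ω => ?_
      refine le_antisymm ?_ (iSup_le fun n => ?_)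
      · refine le_trans (le_of_eq ?_) (le_iSup _ ⌈X ω⌉₊)
        rw [min_eq_left (Nat.le_ceil _)]
      · exact ENNReal.ofReal_le_ofReal (exp_le_exp.mpr
          (mul_le_mul_of_nonneg_left (min_le_left _ _) hβ.le))
    · exact fun n => (((hXm.min measurable_const).const_mul β).exp).ennreal_ofReal
    · intro n k hnk ω
      refine ENNReal.ofReal_le_ofReal (exp_le_exp.mpr (mul_le_mul_of_nonneg_left
        (min_le_min le_rfl (Nat.cast_le.mpr hnk)) hβ.le))
  rw [step1]
  have hb : ∀ n : ℕ, ∫⁻ ω, ENNReal.ofReal (Real.exp (β * min (X ω) n)) ∂μ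
      ≤ ENNReal.ofReal (2 * Real.exp (β * t)) := by
    intro n
    rw [← ofReal_integral_eq_lintegral_ofReal (IK n)
      (Eventually.of_forall fun ω => (exp_pos _).le)]
    exact ENNReal.ofReal_le_ofReal (key n)
  exact lt_of_le_of_lt (iSup_le hb) ENNReal.ofReal_lt_top


omit [IsProbabilityMeasure μ] in
lemma aux_IXexp (hXm : Measurable X)
    (hXnn : ∀ᵐ ω ∂μ, 0 ≤ X ω)
    (hInt : ∀ β : ℝ, Integrable (fun ω => Real.exp (β * X ω)) μ) (β : ℝ) :
    Integrable (fun ω => X ω * Real.exp (β * X ω)) μ := by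
  refine Integrable.mono' (hInt (|β| + 1))
    (hXm.mul (hXm.const_mul β).exp).aestronglyMeasurable ?_
  filter_upwards [hXnn] with ω hω
  rw [Real.norm_eq_abs, abs_mul, abs_of_nonneg hω, abs_of_pos (exp_pos _)]
  calc X ω * Real.exp (β * X ω) ≤ Real.exp (X ω) * Real.exp (|β| * X ω) := by
        refine mul_le_mul ?_ ?_ (exp_pos _).le (exp_pos _).le
        · linarith [Real.add_one_le_exp (X ω)]
        · exact exp_le_exp.mpr (mul_le_mul_of_nonneg_right (le_abs_self β) hω)
    _ = Real.exp ((|β| + 1) * X ω) := by rw [← Real.exp_add]; ring_nf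

omit [IsProbabilityMeasure μ] in
lemma aux_IYexp (hYm : Measurable Y)
    (hYnn : ∀ᵐ ω ∂μ, 0 ≤ Y ω)
    (hcoup : ∀ᵐ ω ∂μ, Y ω ≤ X ω + c)
    (hInt : ∀ β : ℝ, Integrable (fun ω => Real.exp (β * X ω)) μ) (β : ℝ) :
    Integrable (fun ω => Real.exp (β * Y ω)) μ := by
  refine Integrable.mono' ((hInt (|β|)).const_mul (Real.exp (|β| * c)))
    (hYm.const_mul β).exp.aestronglyMeasurable ?_
  filter_upwards [hYnn, hcoup] with ω h0 h1
  rw [Real.norm_eq_abs, abs_of_pos (exp_pos _), ← Real.exp_add, exp_le_exp]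
  calc β * Y ω ≤ |β| * Y ω := mul_le_mul_of_nonneg_right (le_abs_self β) h0
    _ ≤ |β| * (X ω + c) := mul_le_mul_of_nonneg_left h1 (abs_nonneg β)
    _ = |β| * c + |β| * X ω := by ring

lemma aux_identity (ha : 0 < a) (hc : 0 < c)
    (hXm : Measurable X) (hYm : Measurable Y)
    (hXnn : ∀ᵐ ω ∂μ, 0 ≤ X ω) (hYnn : ∀ᵐ ω ∂μ, 0 ≤ Y ω)
    (hsb : ∀ g : ℝ → ℝ, Measurable g → (∃ C, ∀ x, |g x| ≤ C) →
        ∫ ω, g (Y ω) ∂μ = (∫ ω, X ω * g (X ω) ∂μ) / a)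
    (hcoup : ∀ᵐ ω ∂μ, Y ω ≤ X ω + c)
    (hInt : ∀ β : ℝ, Integrable (fun ω => Real.exp (β * X ω)) μ) (β : ℝ) :
    ∫ ω, X ω * Real.exp (β * X ω) ∂μ = a * ∫ ω, Real.exp (β * Y ω) ∂μ := by
  -- truncated identity from the size-bias hypothesis
  have hid : ∀ n : ℕ, ∫ ω, Real.exp (β * min (Y ω) n) ∂μ
      = (∫ ω, X ω * Real.exp (β * min (X ω) n) ∂μ) / a := by
    intro n
    have hm : Measurable (fun x : ℝ => Real.exp (β * min (max x 0) (n:ℝ))) :=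
      (((measurable_id.max measurable_const).min measurable_const).const_mul β).exp
    have hb : ∀ x : ℝ, |Real.exp (β * min (max x 0) (n:ℝ))| ≤ Real.exp (|β| * n) := by
      intro x
      rw [abs_of_pos (exp_pos _), exp_le_exp]
      have h1 : 0 ≤ min (max x 0) (n:ℝ) := le_min (le_max_right _ _) (Nat.cast_nonneg n)
      have h2 : min (max x 0) (n:ℝ) ≤ n := min_le_right _ _
      calc β * min (max x 0) (n:ℝ) ≤ |β * min (max x 0) (n:ℝ)| := le_abs_self _
        _ = |β| * |min (max x 0) (n:ℝ)| := abs_mul _ _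
        _ ≤ |β| * n := by rw [abs_of_nonneg h1]; exact mul_le_mul_of_nonneg_left h2 (abs_nonneg _)
    have h := hsb _ hm ⟨_, hb⟩
    have e1 : ∫ ω, Real.exp (β * min (max (Y ω) 0) n) ∂μ
        = ∫ ω, Real.exp (β * min (Y ω) n) ∂μ := by
      refine integral_congr_ae ?_
      filter_upwards [hYnn] with ω hω
      rw [max_eq_left hω]
    have e2 : ∫ ω, X ω * Real.exp (β * min (max (X ω) 0) n) ∂μ
        = ∫ ω, X ω * Real.exp (β * min (X ω) n) ∂μ := by
      refine integral_congr_ae ?_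
      filter_upwards [hXnn] with ω hω
      rw [max_eq_left hω]
    rw [e1, e2] at h
    exact h
  -- DCT for the X side
  have hT1 : Tendsto (fun n : ℕ => ∫ ω, X ω * Real.exp (β * min (X ω) n) ∂μ) atTop
      (nhds (∫ ω, X ω * Real.exp (β * X ω) ∂μ)) := by
    refine tendsto_integral_of_dominated_convergence
      (fun ω => Real.exp ((|β| + 1) * X ω)) ?_ (hInt (|β| + 1)) ?_ ?_
    · exact fun n => (hXm.mul (((hXm.min measurable_const).const_mul β).exp)).aestronglyMeasurable
    · intro n
      filter_upwards [hXnn] with ω hω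
      rw [Real.norm_eq_abs, abs_mul, abs_of_nonneg hω, abs_of_pos (exp_pos _)]
      have h1 : 0 ≤ min (X ω) (n:ℝ) := le_min hω (Nat.cast_nonneg n)
      calc X ω * Real.exp (β * min (X ω) n)
          ≤ Real.exp (X ω) * Real.exp (|β| * X ω) := by
            refine mul_le_mul ?_ ?_ (exp_pos _).le (exp_pos _).le
            · linarith [Real.add_one_le_exp (X ω)]
            · rw [exp_le_exp]
              calc β * min (X ω) (n:ℝ) ≤ |β| * min (X ω) (n:ℝ) :=
                    mul_le_mul_of_nonneg_right (le_abs_self β) h1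
                _ ≤ |β| * X ω := mul_le_mul_of_nonneg_left (min_le_left _ _) (abs_nonneg β)
        _ = Real.exp ((|β| + 1) * X ω) := by rw [← Real.exp_add]; ring_nf
    · refine Eventually.of_forall fun ω => ?_
      refine Tendsto.congr' ?_ tendsto_const_nhds
      filter_upwards [eventually_ge_atTop ⌈X ω⌉₊] with n hn
      rw [min_eq_left ((Nat.le_ceil _).trans (Nat.cast_le.mpr hn))]
  -- DCT for the Y side
  have hT2 : Tendsto (fun n : ℕ => ∫ ω, Real.exp (β * min (Y ω) n) ∂μ) atTop
      (nhds (∫ ω, Real.exp (β * Y ω) ∂μ)) := by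
    refine tendsto_integral_of_dominated_convergence
      (fun ω => Real.exp (|β| * c) * Real.exp (|β| * X ω)) ?_
      ((hInt (|β|)).const_mul _) ?_ ?_
    · exact fun n => (((hYm.min measurable_const).const_mul β).exp).aestronglyMeasurable
    · intro n
      filter_upwards [hYnn, hcoup] with ω h0 h1
      rw [Real.norm_eq_abs, abs_of_pos (exp_pos _), ← Real.exp_add, exp_le_exp]
      have hmn : 0 ≤ min (Y ω) (n:ℝ) := le_min h0 (Nat.cast_nonneg n)
      calc β * min (Y ω) (n:ℝ) ≤ |β| * min (Y ω) (n:ℝ) :=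
            mul_le_mul_of_nonneg_right (le_abs_self β) hmn
        _ ≤ |β| * (X ω + c) :=
            mul_le_mul_of_nonneg_left ((min_le_left _ _).trans h1) (abs_nonneg β)
        _ = |β| * c + |β| * X ω := by ring
    · refine Eventually.of_forall fun ω => ?_
      refine Tendsto.congr' ?_ tendsto_const_nhds
      filter_upwards [eventually_ge_atTop ⌈Y ω⌉₊] with n hn
      rw [min_eq_left ((Nat.le_ceil _).trans (Nat.cast_le.mpr hn))]
  -- combine
  have hT2' : Tendsto (fun n : ℕ => a * ∫ ω, Real.exp (β * min (Y ω) n) ∂μ) atTop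
      (nhds (a * ∫ ω, Real.exp (β * Y ω) ∂μ)) := hT2.const_mul a
  have heq : (fun n : ℕ => a * ∫ ω, Real.exp (β * min (Y ω) n) ∂μ)
      = fun n : ℕ => ∫ ω, X ω * Real.exp (β * min (X ω) n) ∂μ := by
    funext n
    rw [hid n]
    field_simp
  rw [heq] at hT2'
  exact tendsto_nhds_unique hT1 hT2'


lemma aux_deriv (hXm : Measurable X)
    (hXnn : ∀ᵐ ω ∂μ, 0 ≤ X ω)
    (hInt : ∀ β : ℝ, Integrable (fun ω => Real.exp (β * X ω)) μ) (β : ℝ) :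
    HasDerivAt (fun t => ∫ ω, Real.exp (t * X ω) ∂μ)
      (∫ ω, X ω * Real.exp (β * X ω) ∂μ) β := by
  have h := hasDerivAt_integral_of_dominated_loc_of_deriv_le
    (F := fun (t : ℝ) ω => Real.exp (t * X ω))
    (F' := fun (t : ℝ) ω => X ω * Real.exp (t * X ω))
    (x₀ := β) (bound := fun ω => Real.exp ((|β| + 2) * X ω)) (s := Metric.ball β 1)
    (Metric.ball_mem_nhds β one_pos)
    (Eventually.of_forall fun x => ((hXm.const_mul x).exp).aestronglyMeasurable)
    (hInt β)
    ((hXm.mul (hXm.const_mul β).exp).aestronglyMeasurable)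
    ?_ (hInt (|β| + 2)) ?_
  · exact h.2
  · filter_upwards [hXnn] with ω hω
    intro x hx
    have hxb : |x| ≤ |β| + 1 := by
      have := Metric.mem_ball.mp hx
      rw [Real.dist_eq] at this
      have := abs_sub_abs_le_abs_sub x β
      linarith
    rw [Real.norm_eq_abs, abs_mul, abs_of_nonneg hω, abs_of_pos (exp_pos _)]
    calc X ω * Real.exp (x * X ω) ≤ Real.exp (X ω) * Real.exp ((|β| + 1) * X ω) := by
          refine mul_le_mul ?_ ?_ (exp_pos _).le (exp_pos _).le
          · linarith [Real.add_one_le_exp (X ω)]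
          · rw [exp_le_exp]
            exact mul_le_mul_of_nonneg_right ((le_abs_self x).trans hxb) hω
      _ = Real.exp ((|β| + 2) * X ω) := by rw [← Real.exp_add]; ring_nf
  · refine Eventually.of_forall fun ω => fun x _ => ?_
    simpa [mul_comm] using (hasDerivAt_mul_const (X ω) (x := x)).exp

theorem stmt_8'
    (ha : 0 < a) (hc : 0 < c)
    (hXm : Measurable X) (hYm : Measurable Y)
    (hXnn : ∀ᵐ ω ∂μ, 0 ≤ X ω)
    (hXint : Integrable X μ)
    (hYnn : ∀ᵐ ω ∂μ, 0 ≤ Y ω)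
    (hInt : ∀ β : ℝ, Integrable (fun ω => Real.exp (β * X ω)) μ)
    (hid : ∀ β : ℝ, ∫ ω, X ω * Real.exp (β * X ω) ∂μ = a * ∫ ω, Real.exp (β * Y ω) ∂μ)
    (hIY : ∀ β : ℝ, Integrable (fun ω => Real.exp (β * Y ω)) μ)
    (hcoup : ∀ᵐ ω ∂μ, Y ω ≤ X ω + c) :
    ∀ β : ℝ,
      Real.log (∫ ω, Real.exp (β * X ω) ∂μ) ≤ (a / c) * (Real.exp (β * c) - 1) := by
  intro β
  set M : ℝ → ℝ := fun t => ∫ ω, Real.exp (t * X ω) ∂μ with hM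
  have hMpos : ∀ t, 0 < M t := fun t => ProbabilityTheory.mgf_pos (hInt t)
  have hM0 : M 0 = 1 := by simp [hM]
  set φ : ℝ → ℝ := fun t => (a / c) * (Real.exp (t * c) - 1) - Real.log (M t) with hφ
  have hφd : ∀ t, HasDerivAt φ
      (a * Real.exp (t * c) - (a * ∫ ω, Real.exp (t * Y ω) ∂μ) / M t) t := by
    intro t
    have h1 : HasDerivAt (fun t : ℝ => (a / c) * (Real.exp (t * c) - 1))
        (a * Real.exp (t * c)) t := by
      have := (((hasDerivAt_mul_const (c := c) (x := t))).exp.sub_const 1).const_mul (a / c)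
      convert this using 1
      · rfl
      · rfl
      · field_simp
    have h2 : HasDerivAt (fun t => Real.log (M t))
        ((a * ∫ ω, Real.exp (t * Y ω) ∂μ) / M t) t := by
      have := (aux_deriv hXm hXnn hInt t).log (hMpos t).ne'
      rwa [hid t] at this
    exact h1.sub h2
  have hφ0 : φ 0 = 0 := by simp [hφ, hM0]
  have hφdiff : Differentiable ℝ φ := fun t => (hφd t).differentiableAt
  rcases le_or_gt 0 β with hβ | hβ
  · -- β ≥ 0 : φ is monotone on [0, ∞)
    have hmono : MonotoneOn φ (Set.Ici 0) := by
      refine monotoneOn_of_deriv_nonneg (convex_Ici 0) hφdiff.continuous.continuousOn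
        hφdiff.differentiableOn ?_
      intro x hx
      rw [interior_Ici] at hx
      rw [(hφd x).deriv]
      have hineq : ∫ ω, Real.exp (x * Y ω) ∂μ ≤ Real.exp (x * c) * M x := by
        rw [hM, ← integral_const_mul]
        refine integral_mono_ae (hIY x) ((hInt x).const_mul _) ?_
        filter_upwards [hcoup] with ω hω
        rw [← Real.exp_add, exp_le_exp]
        have : x * Y ω ≤ x * (X ω + c) := mul_le_mul_of_nonneg_left hω (le_of_lt hx)
        linarith
      have h3 : (a * ∫ ω, Real.exp (x * Y ω) ∂μ) / M x ≤ a * Real.exp (x * c) := by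
        rw [div_le_iff₀ (hMpos x)]
        calc a * ∫ ω, Real.exp (x * Y ω) ∂μ ≤ a * (Real.exp (x * c) * M x) :=
              mul_le_mul_of_nonneg_left hineq ha.le
          _ = a * Real.exp (x * c) * M x := by ring
      linarith
    have := hmono (Set.self_mem_Ici) (Set.mem_Ici.mpr hβ) hβ
    rw [hφ0] at this
    simpa [hφ] using this
  · -- β < 0 : φ is antitone on (-∞, 0]
    have hanti : AntitoneOn φ (Set.Iic 0) := by
      refine antitoneOn_of_deriv_nonpos (convex_Iic 0) hφdiff.continuous.continuousOn
        hφdiff.differentiableOn ?_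
      intro x hx
      rw [interior_Iic] at hx
      rw [(hφd x).deriv]
      have hineq : Real.exp (x * c) * M x ≤ ∫ ω, Real.exp (x * Y ω) ∂μ := by
        rw [hM, ← integral_const_mul]
        refine integral_mono_ae ((hInt x).const_mul _) (hIY x) ?_
        filter_upwards [hcoup] with ω hω
        rw [← Real.exp_add, exp_le_exp]
        have : x * (X ω + c) ≤ x * Y ω := mul_le_mul_of_nonpos_left hω (le_of_lt hx)
        linarith
      have h3 : a * Real.exp (x * c) ≤ (a * ∫ ω, Real.exp (x * Y ω) ∂μ) / M x := by
        rw [le_div_iff₀ (hMpos x)]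
        calc a * Real.exp (x * c) * M x = a * (Real.exp (x * c) * M x) := by ring
          _ ≤ a * ∫ ω, Real.exp (x * Y ω) ∂μ := mul_le_mul_of_nonneg_left hineq ha.le
      linarith
    have := hanti (Set.mem_Iic.mpr hβ.le) Set.self_mem_Iic hβ.le
    rw [hφ0] at this
    simpa [hφ] using this

end Aux

theorem stmt_8
    {Ω : Type*} [MeasurableSpace Ω] (μ : Measure Ω) [IsProbabilityMeasure μ]
    (X Y : Ω → ℝ) (a c : ℝ) (ha : 0 < a) (hc : 0 < c)
    (hXm : Measurable X) (hYm : Measurable Y)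
    (hXnn : ∀ᵐ ω ∂μ, 0 ≤ X ω)
    (hXint : Integrable X μ)
    (hmean : ∫ ω, X ω ∂μ = a)
    (hsb : ∀ g : ℝ → ℝ, Measurable g → (∃ C, ∀ x, |g x| ≤ C) →
        ∫ ω, g (Y ω) ∂μ = (∫ ω, X ω * g (X ω) ∂μ) / a)
    (hcoup : ∀ᵐ ω ∂μ, Y ω ≤ X ω + c) :
    ∀ β : ℝ,
      Real.log (∫ ω, Real.exp (β * X ω) ∂μ) ≤ (a / c) * (Real.exp (β * c) - 1) := by
  have hInt : ∀ β : ℝ, Integrable (fun ω => Real.exp (β * X ω)) μ :=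
    aux_int_exp ha hc hXm hYm hXnn hXint hsb hcoup
  have hYnn : ∀ᵐ ω ∂μ, 0 ≤ Y ω := aux_Y_nonneg ha hXm hYm hXnn hsb
  have hid : ∀ β : ℝ, ∫ ω, X ω * Real.exp (β * X ω) ∂μ = a * ∫ ω, Real.exp (β * Y ω) ∂μ :=
    aux_identity ha hc hXm hYm hXnn hYnn hsb hcoup hInt
  have hIY : ∀ β : ℝ, Integrable (fun ω => Real.exp (β * Y ω)) μ :=
    aux_IYexp hYm hYnn hcoup hInt
  exact stmt_8' ha hc hXm hYm hXnn hXint hYnn hInt hid hIY hcoup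
end

section
/- Suppose X ≥ 0 with mean a ∈ (0,∞) admits a c-bounded size bias coupling. Then for all x ≥ a, P(X ≥ x) ≤ (a/x)^{x/c} e^{(x−a)/c}. -/
open MeasureTheory Real intervalIntegral

lemma aux_pointwise (x t M : ℝ) (hx : 0 ≤ x) (ht : 0 ≤ t) (hM : 1 ≤ M) :
    min (Real.exp (t * x)) M ≤ 1 + ∫ θ in (0:ℝ)..t, x * min (Real.exp (θ * x)) M := by
  have hM0 : 0 < M := lt_of_lt_of_le one_pos hM
  rcases eq_or_lt_of_le hx with h0 | hxpos
  · simp [← h0, min_eq_left hM]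
  · set s : ℝ := min t (Real.log M / x) with hs
    have hlogM : 0 ≤ Real.log M := Real.log_nonneg hM
    have hs0 : 0 ≤ s := le_min ht (div_nonneg hlogM hx)
    have hst : s ≤ t := min_le_left _ _
    -- integrand nonneg
    have hnn : ∀ θ : ℝ, 0 ≤ x * min (Real.exp (θ * x)) M :=
      fun θ => mul_nonneg hx (le_min (Real.exp_pos _).le hM0.le)
    have hcont : Continuous fun θ : ℝ => x * min (Real.exp (θ * x)) M := by
      fun_prop
    have hint : IntervalIntegrable (fun θ => x * min (Real.exp (θ * x)) M) volume 0 t :=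
      hcont.intervalIntegrable _ _
    have hmono : (∫ θ in (0:ℝ)..s, x * min (Real.exp (θ * x)) M)
        ≤ ∫ θ in (0:ℝ)..t, x * min (Real.exp (θ * x)) M := by
      apply intervalIntegral.integral_mono_interval le_rfl hs0 hst
      · exact Filter.Eventually.of_forall fun θ => hnn θ
      · exact hint
    -- on [0,s] the min is exp(θ x)
    have hcongr : (∫ θ in (0:ℝ)..s, x * min (Real.exp (θ * x)) M)
        = ∫ θ in (0:ℝ)..s, x * Real.exp (θ * x) := by
      apply intervalIntegral.integral_congr
      intro θ hθ
      rw [Set.uIcc_of_le hs0] at hθ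
      have hθs : θ ≤ Real.log M / x := le_trans hθ.2 (min_le_right _ _)
      have : θ * x ≤ Real.log M := by
        rw [← le_div_iff₀ hxpos]; exact hθs
      have : Real.exp (θ * x) ≤ M := by
        calc Real.exp (θ * x) ≤ Real.exp (Real.log M) := Real.exp_le_exp.2 this
        _ = M := Real.exp_log hM0
      simp [min_eq_left this]
    have hftc : (∫ θ in (0:ℝ)..s, x * Real.exp (θ * x)) = Real.exp (s * x) - 1 := by
      have : ∀ θ ∈ Set.uIcc (0:ℝ) s, HasDerivAt (fun u => Real.exp (u * x)) (x * Real.exp (θ * x)) θ := by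
        intro θ _
        have h1 : HasDerivAt (fun u : ℝ => u * x) x θ := hasDerivAt_mul_const x
        have := h1.exp
        simpa [mul_comm] using this
      rw [intervalIntegral.integral_eq_sub_of_hasDerivAt this
        ((by fun_prop : Continuous fun θ : ℝ => x * Real.exp (θ * x)).intervalIntegrable _ _)]
      simp
    -- min (exp (t x)) M = exp (s x)
    have hminval : min (Real.exp (t * x)) M = Real.exp (s * x) := by
      rcases le_total t (Real.log M / x) with h | h
      · have hs' : s = t := min_eq_left h
        have : t * x ≤ Real.log M := by rw [← le_div_iff₀ hxpos]; exact h
        have : Real.exp (t * x) ≤ M :=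
          (Real.exp_le_exp.2 this).trans_eq (Real.exp_log hM0)
        rw [hs', min_eq_left this]
      · have hs' : s = Real.log M / x := min_eq_right h
        have hMx : Real.log M / x * x = Real.log M := div_mul_cancel₀ _ hxpos.ne'
        have hsM : Real.exp (s * x) = M := by rw [hs', hMx, Real.exp_log hM0]
        have : Real.log M ≤ t * x := by rw [← div_le_iff₀ hxpos]; exact h
        have : M ≤ Real.exp (t * x) := by
          calc M = Real.exp (Real.log M) := (Real.exp_log hM0).symm
          _ ≤ _ := Real.exp_le_exp.2 this
        rw [min_eq_right this, hsM]
    rw [hminval]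
    calc Real.exp (s * x) = 1 + (Real.exp (s*x) - 1) := by ring
    _ = 1 + ∫ θ in (0:ℝ)..s, x * min (Real.exp (θ * x)) M := by rw [hcongr, hftc]
    _ ≤ _ := by linarith [hmono]

lemma aux_gronwall (F : ℝ → ℝ) (a c : ℝ) (ha : 0 < a) (hc : 0 < c)
    (hF : Continuous F)
    (hineq : ∀ t, 0 ≤ t → F t ≤ 1 + ∫ θ in (0:ℝ)..t, a * Real.exp (c * θ) * F θ)
    (t : ℝ) (ht : 0 ≤ t) : F t ≤ Real.exp (a / c * (Real.exp (c * t) - 1)) := by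
  set B : ℝ → ℝ := fun s => 1 + ∫ θ in (0:ℝ)..s, a * Real.exp (c * θ) * F θ with hB
  set G : ℝ → ℝ := fun s => Real.exp (-(a / c * (Real.exp (c * s) - 1))) * B s with hG
  have hcont : Continuous fun θ : ℝ => a * Real.exp (c * θ) * F θ := by fun_prop
  have hBd : ∀ s : ℝ, HasDerivAt B (a * Real.exp (c * s) * F s) s := by
    intro s
    have : HasDerivAt (fun u => ∫ θ in (0:ℝ)..u, a * Real.exp (c * θ) * F θ)
        (a * Real.exp (c * s) * F s) s :=
      intervalIntegral.integral_hasDerivAt_right (hcont.intervalIntegrable _ _)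
        (hcont.stronglyMeasurableAtFilter _ _) hcont.continuousAt
    simpa [hB] using this.const_add 1
  have hEd : ∀ s : ℝ, HasDerivAt (fun u => Real.exp (-(a / c * (Real.exp (c * u) - 1))))
      (-(a * Real.exp (c * s)) * Real.exp (-(a / c * (Real.exp (c * s) - 1)))) s := by
    intro s
    have h1 : HasDerivAt (fun u : ℝ => c * u) c s := by
      simpa using (hasDerivAt_id s).const_mul c
    have h2 : HasDerivAt (fun u : ℝ => Real.exp (c * u)) (Real.exp (c * s) * c) s := h1.exp
    have h3 : HasDerivAt (fun u : ℝ => -(a / c * (Real.exp (c * u) - 1)))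
        (-(a / c * (Real.exp (c * s) * c))) s := ((h2.sub_const 1).const_mul (a / c)).neg
    have h4 := h3.exp
    have hac : -(a / c * (Real.exp (c * s) * c)) = -(a * Real.exp (c * s)) := by
      field_simp
    rw [hac] at h4
    simpa [mul_comm] using h4
  have hGd : ∀ s : ℝ, HasDerivAt G
      (Real.exp (-(a / c * (Real.exp (c * s) - 1))) * (a * Real.exp (c * s)) * (F s - B s)) s := by
    intro s
    have : HasDerivAt (fun u => Real.exp (-(a / c * (Real.exp (c * u) - 1))) * B u) _ s :=
      (hEd s).mul (hBd s)
    convert this using 1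
    ring
  have hG0 : G 0 = 1 := by simp [hG, hB]
  have hanti : AntitoneOn G (Set.Ici (0:ℝ)) := by
    apply antitoneOn_of_deriv_nonpos (convex_Ici 0)
    · exact (Continuous.continuousOn (by
        have : Continuous B := by
          have : Continuous fun u => ∫ θ in (0:ℝ)..u, a * Real.exp (c * θ) * F θ :=
            intervalIntegral.continuous_primitive (fun a b => hcont.intervalIntegrable _ _) 0
          exact continuous_const.add this
        fun_prop))
    · intro s hs
      exact ((hGd s).differentiableAt).differentiableWithinAt
    · intro s hs
      rw [interior_Ici] at hs
      rw [(hGd s).deriv]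
      have hFB : F s - B s ≤ 0 := sub_nonpos.2 (hineq s (le_of_lt hs))
      have : (0:ℝ) ≤ Real.exp (-(a / c * (Real.exp (c * s) - 1))) * (a * Real.exp (c * s)) :=
        mul_nonneg (Real.exp_pos _).le (mul_nonneg ha.le (Real.exp_pos _).le)
      exact mul_nonpos_of_nonneg_of_nonpos this hFB
  have hGle : G t ≤ 1 := by
    rw [← hG0]
    exact hanti Set.self_mem_Ici (Set.mem_Ici.2 ht) ht
  have hBle : B t ≤ Real.exp (a / c * (Real.exp (c * t) - 1)) := by
    set E := a / c * (Real.exp (c * t) - 1) with hE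
    have hGle' : Real.exp (-E) * B t ≤ 1 := hGle
    have hei : Real.exp E * Real.exp (-E) = 1 := by rw [← Real.exp_add]; simp
    calc B t = Real.exp E * Real.exp (-E) * B t := by rw [hei]; ring
    _ = Real.exp E * (Real.exp (-E) * B t) := by ring
    _ ≤ Real.exp E * 1 := mul_le_mul_of_nonneg_left hGle' (Real.exp_pos _).le
    _ = Real.exp E := mul_one _
  exact (hineq t ht).trans hBle

theorem stmt_9
    {Ω : Type*} [MeasurableSpace Ω] (μ : Measure Ω) [IsProbabilityMeasure μ]
    (X Y : Ω → ℝ) (a c : ℝ) (ha : 0 < a) (hc : 0 < c)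
    (hXm : Measurable X) (hYm : Measurable Y)
    (hXnn : ∀ᵐ ω ∂μ, 0 ≤ X ω)
    (hXint : Integrable X μ)
    (hmean : ∫ ω, X ω ∂μ = a)
    (hsb : ∀ g : ℝ → ℝ, Measurable g → (∃ C, ∀ x, |g x| ≤ C) →
        ∫ ω, g (Y ω) ∂μ = (∫ ω, X ω * g (X ω) ∂μ) / a)
    (hcoup : ∀ᵐ ω ∂μ, Y ω ≤ X ω + c) :
    ∀ x : ℝ, a ≤ x →
      (μ {ω | x ≤ X ω}).toReal ≤ (a / x) ^ (x / c) * Real.exp ((x - a) / c) := by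
  intro x hx
  have hx0 : 0 < x := lt_of_lt_of_le ha hx
  set θ0 : ℝ := Real.log (x / a) / c with hθ0
  have hθ0nn : 0 ≤ θ0 := div_nonneg (Real.log_nonneg ((one_le_div ha).2 hx)) hc.le
  set M : ℝ := Real.exp (θ0 * x) with hMdef
  have hM : 1 ≤ M := Real.one_le_exp (mul_nonneg hθ0nn hx0.le)
  have hM0 : 0 < M := lt_of_lt_of_le one_pos hM
  -- the truncated exponential
  set h : ℝ → ℝ → ℝ := fun θ z => min (Real.exp (θ * z)) M with hh
  have hhnn : ∀ θ z, 0 ≤ h θ z := fun θ z => le_min (Real.exp_pos _).le hM0.le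
  have hhle : ∀ θ z, h θ z ≤ M := fun θ z => min_le_right _ _
  have hhm : ∀ θ, Measurable (h θ) := fun θ => ((measurable_id.const_mul θ).exp).min measurable_const
  have hintZ : ∀ (Z : Ω → ℝ), Measurable Z → ∀ θ, Integrable (fun ω => h θ (Z ω)) μ := by
    intro Z hZ θ
    refine (integrable_const M).mono' ((hhm θ).comp hZ).aestronglyMeasurable ?_
    refine Filter.Eventually.of_forall fun ω => ?_
    rw [Real.norm_eq_abs, abs_of_nonneg (hhnn _ _)]
    exact hhle _ _
  set F : ℝ → ℝ := fun θ => ∫ ω, h θ (X ω) ∂μ with hF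
  -- continuity of F
  have hFcont : Continuous F := by
    rw [continuous_iff_continuousAt]
    intro θ
    refine MeasureTheory.continuousAt_of_dominated (F := fun θ ω => h θ (X ω))
      (bound := fun _ => M) ?_ ?_ (integrable_const M) ?_
    · exact Filter.Eventually.of_forall fun θ' => ((hhm θ').comp hXm).aestronglyMeasurable
    · refine Filter.Eventually.of_forall fun θ' => Filter.Eventually.of_forall fun ω => ?_
      rw [Real.norm_eq_abs, abs_of_nonneg (hhnn _ _)]; exact hhle _ _
    · refine Filter.Eventually.of_forall fun ω => ?_
      have hco : Continuous fun θ' : ℝ => h θ' (X ω) := by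
        simp only [hh]; fun_prop
      exact hco.continuousAt
  -- product integrability for Fubini
  have hprodint : ∀ t : ℝ, 0 ≤ t → Integrable
      (Function.uncurry fun ω θ => X ω * h θ (X ω))
      (μ.prod (volume.restrict (Set.Ioc (0:ℝ) t))) := by
    intro t ht
    have hmeas : Measurable (Function.uncurry fun ω θ => X ω * h θ (X ω)) := by
      apply (hXm.comp measurable_fst).mul
      exact ((measurable_snd.mul (hXm.comp measurable_fst)).exp).min measurable_const
    rw [MeasureTheory.integrable_prod_iff hmeas.aestronglyMeasurable]
    constructor
    · refine Filter.Eventually.of_forall fun ω => ?_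
      apply Continuous.integrableOn_Ioc
      fun_prop
    · refine (hXint.abs.const_mul (M * t)).mono' ?_ ?_
      · apply StronglyMeasurable.aestronglyMeasurable
        exact (hmeas.norm.stronglyMeasurable).integral_prod_right'
      · refine Filter.Eventually.of_forall fun ω => ?_
        rw [Real.norm_eq_abs, abs_of_nonneg (integral_nonneg fun θ => norm_nonneg _)]
        calc ∫ θ in Set.Ioc (0:ℝ) t, ‖X ω * h θ (X ω)‖
            ≤ ∫ θ in Set.Ioc (0:ℝ) t, |X ω| * M := by
              apply MeasureTheory.setIntegral_mono_on
              · exact (Continuous.integrableOn_Ioc (by fun_prop)).norm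
              · exact integrableOn_const measure_Ioc_lt_top.ne
              · exact measurableSet_Ioc
              · intro θ _
                rw [norm_mul, Real.norm_eq_abs, Real.norm_eq_abs,
                  abs_of_nonneg (hhnn _ _)]
                exact mul_le_mul_of_nonneg_left (hhle _ _) (abs_nonneg _)
          _ = |X ω| * M * (volume (Set.Ioc (0:ℝ) t)).toReal := by
              rw [setIntegral_const, smul_eq_mul, measureReal_def]; ring
          _ ≤ M * t * |X ω| := by
              rw [Real.volume_Ioc]
              rw [ENNReal.toReal_ofReal (by linarith)]
              ring_nf
              exact le_refl _
  -- size bias identity for h θ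
  have hsbh : ∀ θ : ℝ, ∫ ω, X ω * h θ (X ω) ∂μ = a * ∫ ω, h θ (Y ω) ∂μ := by
    intro θ
    have := hsb (h θ) (hhm θ) ⟨M, fun z => by
      rw [abs_of_nonneg (hhnn _ _)]; exact hhle _ _⟩
    field_simp at this
    linarith [this]
  -- coupling bound
  have hcoupb : ∀ θ : ℝ, 0 ≤ θ → ∫ ω, h θ (Y ω) ∂μ ≤ Real.exp (θ * c) * F θ := by
    intro θ hθ
    have hpt : ∀ᵐ ω ∂μ, h θ (Y ω) ≤ Real.exp (θ * c) * h θ (X ω) := by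
      filter_upwards [hcoup] with ω hω
      have hec : 1 ≤ Real.exp (θ * c) := Real.one_le_exp (mul_nonneg hθ hc.le)
      rcases le_total (Real.exp (θ * X ω)) M with hcase | hcase
      · have : h θ (Y ω) ≤ Real.exp (θ * Y ω) := min_le_left _ _
        calc h θ (Y ω) ≤ Real.exp (θ * Y ω) := this
          _ ≤ Real.exp (θ * (X ω + c)) :=
            Real.exp_le_exp.2 (mul_le_mul_of_nonneg_left hω hθ)
          _ = Real.exp (θ * c) * Real.exp (θ * X ω) := by
            rw [← Real.exp_add]; ring_nf
          _ = Real.exp (θ * c) * h θ (X ω) := by simp [hh, min_eq_left hcase]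
      · have h1 : h θ (Y ω) ≤ M := min_le_right _ _
        have h2 : h θ (X ω) = M := min_eq_right hcase
        calc h θ (Y ω) ≤ M := h1
          _ ≤ Real.exp (θ * c) * M := le_mul_of_one_le_left hM0.le hec
          _ = Real.exp (θ * c) * h θ (X ω) := by rw [h2]
    calc ∫ ω, h θ (Y ω) ∂μ ≤ ∫ ω, Real.exp (θ * c) * h θ (X ω) ∂μ :=
          integral_mono_ae (hintZ Y hYm θ) ((hintZ X hXm θ).const_mul _) hpt
      _ = Real.exp (θ * c) * F θ := by rw [MeasureTheory.integral_const_mul]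
  -- the key integral inequality
  have hkey : ∀ t : ℝ, 0 ≤ t → F t ≤ 1 + ∫ θ in (0:ℝ)..t, a * Real.exp (c * θ) * F θ := by
    intro t ht
    have hPI := hprodint t ht
    have hinner : Integrable (fun ω => ∫ θ in Set.Ioc (0:ℝ) t, X ω * h θ (X ω)) μ :=
      hPI.integral_prod_left
    have step1 : F t ≤ ∫ ω, (1 + ∫ θ in Set.Ioc (0:ℝ) t, X ω * h θ (X ω)) ∂μ := by
      apply integral_mono_ae (hintZ X hXm t) (integrable_const (1:ℝ) |>.add hinner)
      filter_upwards [hXnn] with ω hω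
      have := aux_pointwise (X ω) t M hω ht hM
      rwa [intervalIntegral.integral_of_le ht] at this
    have step2 : ∫ ω, (1 + ∫ θ in Set.Ioc (0:ℝ) t, X ω * h θ (X ω)) ∂μ
        = 1 + ∫ θ in Set.Ioc (0:ℝ) t, ∫ ω, X ω * h θ (X ω) ∂μ := by
      rw [integral_add (integrable_const 1) hinner, MeasureTheory.integral_const]
      simp only [measure_univ, probReal_univ, smul_eq_mul, one_mul, mul_one]
      rw [MeasureTheory.integral_integral_swap hPI]
    have step3 : ∫ θ in Set.Ioc (0:ℝ) t, ∫ ω, X ω * h θ (X ω) ∂μ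
        ≤ ∫ θ in Set.Ioc (0:ℝ) t, a * Real.exp (c * θ) * F θ := by
      apply MeasureTheory.setIntegral_mono_on
      · exact hPI.integral_prod_right
      · apply Continuous.integrableOn_Ioc
        fun_prop
      · exact measurableSet_Ioc
      · intro θ hθ
        rw [hsbh θ]
        calc a * ∫ ω, h θ (Y ω) ∂μ ≤ a * (Real.exp (θ * c) * F θ) :=
              mul_le_mul_of_nonneg_left (hcoupb θ hθ.1.le) ha.le
          _ = a * Real.exp (c * θ) * F θ := by ring_nf
    rw [intervalIntegral.integral_of_le ht]
    calc F t ≤ _ := step1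
      _ = _ := step2
      _ ≤ 1 + ∫ θ in Set.Ioc (0:ℝ) t, a * Real.exp (c * θ) * F θ := by linarith [step3]
  -- Gronwall
  have hFb : F θ0 ≤ Real.exp (a / c * (Real.exp (c * θ0) - 1)) :=
    aux_gronwall F a c ha hc hFcont hkey θ0 hθ0nn
  -- Markov
  have hsmeas : MeasurableSet {ω | x ≤ X ω} := measurableSet_le measurable_const hXm
  have hmarkov : (μ {ω | x ≤ X ω}).toReal * M ≤ F θ0 := by
    have hpt : ∀ ω, Set.indicator {ω | x ≤ X ω} (fun _ => M) ω ≤ h θ0 (X ω) := by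
      intro ω
      by_cases hω : ω ∈ {ω | x ≤ X ω}
      · rw [Set.indicator_of_mem hω]
        refine le_min ?_ le_rfl
        rw [hMdef]
        exact Real.exp_le_exp.2 (mul_le_mul_of_nonneg_left hω hθ0nn)
      · rw [Set.indicator_of_notMem hω]
        exact hhnn _ _
    calc (μ {ω | x ≤ X ω}).toReal * M
        = ∫ ω, Set.indicator {ω | x ≤ X ω} (fun _ => M) ω ∂μ := by
          rw [integral_indicator_const M hsmeas]; simp [mul_comm, measureReal_def]
      _ ≤ F θ0 := integral_mono_ae ((integrable_const M).indicator hsmeas)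
          (hintZ X hXm θ0) (Filter.Eventually.of_forall hpt)
  -- final arithmetic
  have hexpc : Real.exp (c * θ0) = x / a := by
    rw [hθ0, mul_div_cancel₀ _ hc.ne', Real.exp_log (div_pos hx0 ha)]
  have hrhs : Real.exp (a / c * (Real.exp (c * θ0) - 1)) / M
      = (a / x) ^ (x / c) * Real.exp ((x - a) / c) := by
    have hax : Real.log (a / x) = - Real.log (x / a) := by
      rw [← Real.log_inv]; congr 1; rw [inv_div]
    rw [hexpc, hMdef, Real.rpow_def_of_pos (div_pos ha hx0), ← Real.exp_sub,
      ← Real.exp_add, Real.exp_eq_exp, hax, hθ0]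
    field_simp
    ring
  have hfin : (μ {ω | x ≤ X ω}).toReal ≤ Real.exp (a / c * (Real.exp (c * θ0) - 1)) / M := by
    rw [le_div_iff₀ hM0]
    exact hmarkov.trans hFb
  rw [← hrhs]
  exact hfin
end

section
/- Suppose X ≥ 0 with mean a ∈ (0,∞) admits a c-bounded size bias coupling. Then for all 0 ≤ x ≤ a, P(X ≤ x) ≤ (a/x)^{x/c} e^{(x−a)/c}. -/
open MeasureTheory Real

theorem stmt_10
    {Ω : Type*} [MeasurableSpace Ω] (μ : Measure Ω) [IsProbabilityMeasure μ]
    (X Y : Ω → ℝ) (a c : ℝ) (ha : 0 < a) (hc : 0 < c)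
    (hXm : Measurable X) (hYm : Measurable Y)
    (hXnn : ∀ᵐ ω ∂μ, 0 ≤ X ω)
    (hXint : Integrable X μ)
    (hmean : ∫ ω, X ω ∂μ = a)
    (hsb : ∀ g : ℝ → ℝ, Measurable g → (∃ C, ∀ x, |g x| ≤ C) →
        ∫ ω, g (Y ω) ∂μ = (∫ ω, X ω * g (X ω) ∂μ) / a)
    (hcoup : ∀ᵐ ω ∂μ, Y ω ≤ X ω + c) :
    ∀ x : ℝ, 0 ≤ x → x ≤ a →
      (μ {ω | X ω ≤ x}).toReal ≤ (a / x) ^ (x / c) * Real.exp ((x - a) / c) := by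
  intro x hx hxa
  set Xp : Ω → ℝ := fun ω => max (X ω) 0 with hXpdef
  have hXpm : Measurable Xp := hXm.max measurable_const
  have hXpnn : ∀ ω, 0 ≤ Xp ω := fun ω => le_max_right _ _
  have hXpint : Integrable Xp μ := hXint.pos_part
  have hXpeq : ∀ᵐ ω ∂μ, Xp ω = X ω := hXnn.mono fun ω h => max_eq_left h
  set m : ℝ → ℝ := fun s => ∫ ω, Real.exp (-s * Xp ω) ∂μ with hmdef
  have hint_exp : ∀ s : ℝ, 0 ≤ s → Integrable (fun ω => Real.exp (-s * Xp ω)) μ := by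
    intro s hs
    refine (integrable_const (1:ℝ)).mono' ?_ ?_
    · exact ((hXpm.const_mul (-s)).exp).aestronglyMeasurable
    · filter_upwards with ω
      rw [Real.norm_eq_abs, abs_of_pos (Real.exp_pos _)]
      exact Real.exp_le_one_iff.mpr (by nlinarith [hXpnn ω])
  have hint_xexp : ∀ s : ℝ, 0 ≤ s → Integrable (fun ω => Xp ω * Real.exp (-s * Xp ω)) μ := by
    intro s hs
    refine hXpint.mono' ?_ ?_
    · exact (hXpm.mul ((hXpm.const_mul (-s)).exp)).aestronglyMeasurable
    · filter_upwards with ω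
      rw [Real.norm_eq_abs, abs_mul, abs_of_nonneg (hXpnn ω),
        abs_of_pos (Real.exp_pos _)]
      nlinarith [hXpnn ω, Real.exp_le_one_iff.mpr
        (show -s * Xp ω ≤ 0 by nlinarith [hXpnn ω]), Real.exp_pos (-s * Xp ω)]
  have hm0 : m 0 = 1 := by simp [hmdef]
  have hmnn : ∀ s, 0 ≤ m s := fun s =>
    integral_nonneg fun ω => (Real.exp_pos _).le
  -- key size-bias inequality
  have hkey : ∀ s : ℝ, 0 ≤ s →
      a * Real.exp (-s * c) * m s ≤ ∫ ω, Xp ω * Real.exp (-s * Xp ω) ∂μ := by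
    intro s hs
    set g : ℝ → ℝ := fun w => Real.exp (-s * max w 0) with hgdef
    have hgm : Measurable g :=
      ((measurable_id.max measurable_const).const_mul (-s)).exp
    have hgb : ∃ C, ∀ w, |g w| ≤ C := by
      refine ⟨1, fun w => ?_⟩
      rw [abs_of_pos (Real.exp_pos _)]
      exact Real.exp_le_one_iff.mpr (by nlinarith [le_max_right w (0:ℝ)])
    have hid := hsb g hgm hgb
    have hXg : ∫ ω, X ω * g (X ω) ∂μ = ∫ ω, Xp ω * Real.exp (-s * Xp ω) ∂μ := by
      refine integral_congr_ae (hXpeq.mono fun ω h => ?_)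
      show X ω * Real.exp (-s * Xp ω) = Xp ω * Real.exp (-s * Xp ω)
      rw [h]
    have hgY_int : Integrable (fun ω => g (Y ω)) μ := by
      refine (integrable_const (1:ℝ)).mono' ?_ ?_
      · exact (hgm.comp hYm).aestronglyMeasurable
      · filter_upwards with ω
        rw [Real.norm_eq_abs, abs_of_pos (Real.exp_pos _)]
        exact Real.exp_le_one_iff.mpr (by nlinarith [le_max_right (Y ω) (0:ℝ)])
    have hlow : Real.exp (-s * c) * m s ≤ ∫ ω, g (Y ω) ∂μ := by
      have h1 : Real.exp (-s * c) * m s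
          = ∫ ω, Real.exp (-s * c) * Real.exp (-s * Xp ω) ∂μ := by
        rw [hmdef]; rw [integral_const_mul]
      rw [h1]
      refine integral_mono_ae ((hint_exp s hs).const_mul _) hgY_int ?_
      filter_upwards [hXnn, hcoup] with ω h1 h2
      rw [← Real.exp_add]
      refine Real.exp_le_exp.mpr ?_
      have hle : max (Y ω) 0 ≤ Xp ω + c := by
        have : Xp ω = X ω := max_eq_left h1
        rw [this]
        refine max_le h2 (by linarith)
      nlinarith [le_max_right (Y ω) (0:ℝ)]
    have hfin : ∫ ω, g (Y ω) ∂μ = (∫ ω, Xp ω * Real.exp (-s * Xp ω) ∂μ) / a := by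
      rw [hid, hXg]
    calc a * Real.exp (-s * c) * m s = a * (Real.exp (-s * c) * m s) := by ring
      _ ≤ a * ∫ ω, g (Y ω) ∂μ := by
          exact mul_le_mul_of_nonneg_left hlow ha.le
      _ = ∫ ω, Xp ω * Real.exp (-s * Xp ω) ∂μ := by
          rw [hfin, mul_div_assoc', mul_comm a, mul_div_assoc, div_self ha.ne', mul_one]
  -- derivative of m
  have hderiv : ∀ s : ℝ, 0 < s →
      HasDerivAt m (-∫ ω, Xp ω * Real.exp (-s * Xp ω) ∂μ) s := by
    intro s hs
    have key := hasDerivAt_integral_of_dominated_loc_of_deriv_le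
      (F := fun t ω => Real.exp (-t * Xp ω))
      (F' := fun t ω => -(Xp ω * Real.exp (-t * Xp ω)))
      (μ := μ) (bound := Xp) (x₀ := s) (Metric.ball_mem_nhds s (half_pos hs))
      (Filter.Eventually.of_forall fun t =>
        ((hXpm.const_mul (-t)).exp).aestronglyMeasurable)
      (hint_exp s hs.le)
      ((hXpm.mul ((hXpm.const_mul (-s)).exp)).neg.aestronglyMeasurable)
      ?_ hXpint ?_
    · have := key.2
      rw [integral_neg] at this
      exact this
    · filter_upwards with ω t ht
      have hts : s / 2 < t := by
        have := abs_lt.mp (by simpa [Real.dist_eq] using Metric.mem_ball.mp ht)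
        linarith [this.1]
      rw [Real.norm_eq_abs, abs_neg, abs_mul, abs_of_nonneg (hXpnn ω),
        abs_of_pos (Real.exp_pos _)]
      nlinarith [hXpnn ω, Real.exp_le_one_iff.mpr
        (show -t * Xp ω ≤ 0 by nlinarith [hXpnn ω]), Real.exp_pos (-t * Xp ω)]
    · filter_upwards with ω t _
      have h1 : HasDerivAt (fun u : ℝ => -u * Xp ω) (-1 * Xp ω) t :=
        (hasDerivAt_neg t).mul_const (Xp ω)
      have h2 := h1.exp
      convert h2 using 1
      · rfl
      · rfl
      ring
  -- continuity of m on [0,∞)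
  have hmcont : ContinuousOn m (Set.Ici 0) := by
    refine continuousOn_of_dominated
      (fun t _ => ((hXpm.const_mul (-t)).exp).aestronglyMeasurable)
      (fun t ht => ?_) (integrable_const 1) ?_
    · filter_upwards with ω
      rw [Real.norm_eq_abs, abs_of_pos (Real.exp_pos _)]
      exact Real.exp_le_one_iff.mpr (by nlinarith [hXpnn ω, Set.mem_Ici.mp ht])
    · filter_upwards with ω
      exact (Real.continuous_exp.comp
        ((continuous_id.neg).mul continuous_const)).continuousOn
  have hmb : ∀ s : ℝ, 0 ≤ s → m s ≤ Real.exp (a * (Real.exp (-s * c) - 1) / c) := by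
    set φ : ℝ → ℝ := fun s => Real.exp (a * (1 - Real.exp (-s * c)) / c) with hφdef
    have hφpos : ∀ s, 0 < φ s := fun s => Real.exp_pos _
    have hφderiv : ∀ s : ℝ, HasDerivAt φ (a * Real.exp (-s * c) * φ s) s := by
      intro s
      have h1 : HasDerivAt (fun u : ℝ => -u * c) (-1 * c) s :=
        (hasDerivAt_neg s).mul_const c
      have h2 := h1.exp
      have h3 := (((hasDerivAt_const s (1:ℝ)).sub h2).const_mul a).div_const c
      have h4 := h3.exp
      have he : a * ((0:ℝ) - Real.exp (-s * c) * (-1 * c)) / c = a * Real.exp (-s * c) := by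
        field_simp
        ring
      convert h4 using 1
      · rfl
      rw [he]
      show a * Real.exp (-s * c) * φ s = φ s * (a * Real.exp (-s * c))
      ring
    have hhd : ∀ s : ℝ, 0 < s → HasDerivAt (fun u => m u * φ u)
        ((-∫ ω, Xp ω * Real.exp (-s * Xp ω) ∂μ) * φ s
          + m s * (a * Real.exp (-s * c) * φ s)) s := by
      intro s hs
      exact (hderiv s hs).mul (hφderiv s)
    have hφdiff : Differentiable ℝ φ := fun s => (hφderiv s).differentiableAt
    have hφcont : Continuous φ := hφdiff.continuous
    have hanti : AntitoneOn (fun u => m u * φ u) (Set.Ici 0) := by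
      refine antitoneOn_of_deriv_nonpos (convex_Ici 0)
        (hmcont.mul hφcont.continuousOn) ?_ ?_
      · intro s hs
        rw [interior_Ici] at hs
        exact ((hhd s hs).differentiableAt).differentiableWithinAt
      · intro s hs
        rw [interior_Ici] at hs
        rw [(hhd s hs).deriv]
        have hk := hkey s hs.le
        nlinarith [hφpos s]
    intro s hs
    have h0 : (fun u => m u * φ u) s ≤ (fun u => m u * φ u) 0 :=
      hanti Set.self_mem_Ici (Set.mem_Ici.mpr hs) hs
    simp only at h0
    have hφ0 : φ 0 = 1 := by simp [hφdef]
    rw [hφ0, hm0, mul_one] at h0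
    have hle : m s ≤ 1 / φ s := (le_div_iff₀ (hφpos s)).mpr h0
    refine hle.trans (le_of_eq ?_)
    rw [one_div, ← Real.exp_neg]
    congr 1
    ring
  have hmark : ∀ s : ℝ, 0 ≤ s →
      (μ {ω | X ω ≤ x}).toReal ≤ Real.exp (s * x) * m s := by
    intro s hs
    have hA : MeasurableSet {ω | X ω ≤ x} := measurableSet_le hXm measurable_const
    have step1 : Real.exp (-s * x) * (μ {ω | X ω ≤ x}).toReal ≤ m s := by
      have e1 : Real.exp (-s * x) * (μ {ω | X ω ≤ x}).toReal
          = ∫ ω in {ω | X ω ≤ x}, Real.exp (-s * x) ∂μ := by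
        rw [setIntegral_const]; rw [smul_eq_mul]; rw [Measure.real]; ring
      rw [e1]
      have e2 : ∫ ω in {ω | X ω ≤ x}, Real.exp (-s * x) ∂μ
          ≤ ∫ ω in {ω | X ω ≤ x}, Real.exp (-s * Xp ω) ∂μ := by
        refine setIntegral_mono_on (integrableOn_const (measure_ne_top μ _))
          ((hint_exp s hs).integrableOn) hA ?_
        intro ω hω
        refine Real.exp_le_exp.mpr ?_
        have : Xp ω ≤ x := max_le hω hx
        nlinarith
      refine e2.trans ?_
      exact setIntegral_le_integral (hint_exp s hs)
        (Filter.Eventually.of_forall fun ω => (Real.exp_pos _).le)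
    have hepos := Real.exp_pos (s * x)
    have : Real.exp (s * x) * (Real.exp (-s * x) * (μ {ω | X ω ≤ x}).toReal)
        ≤ Real.exp (s * x) * m s := mul_le_mul_of_nonneg_left step1 hepos.le
    rwa [← mul_assoc, ← Real.exp_add, (by ring : s * x + -s * x = 0), Real.exp_zero,
      one_mul] at this
  rcases eq_or_lt_of_le hx with hx0 | hxpos
  · -- x = 0
    subst hx0
    have hT : ∀ s : ℝ, 0 ≤ s →
        (μ {ω | X ω ≤ 0}).toReal ≤ Real.exp (a * (Real.exp (-s * c) - 1) / c) := by
      intro s hs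
      have := (hmark s hs).trans (by
        simpa using mul_le_mul_of_nonneg_left (hmb s hs) (Real.exp_pos (s * 0)).le)
      simpa using this
    have t1 : Filter.Tendsto (fun s : ℝ => -s * c) Filter.atTop Filter.atBot := by
      have t0 : Filter.Tendsto (fun s : ℝ => s * c) Filter.atTop Filter.atTop :=
        Filter.Tendsto.atTop_mul_const hc Filter.tendsto_id
      have t0' := Filter.tendsto_neg_atTop_atBot.comp t0
      have heq : (fun s : ℝ => -s * c) = Neg.neg ∘ (fun s : ℝ => s * c) := by
        funext s; simp [Function.comp, neg_mul]
      rw [heq]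
      exact t0'
    have t2 : Filter.Tendsto (fun s : ℝ => Real.exp (-s * c)) Filter.atTop (nhds 0) :=
      Real.tendsto_exp_atBot.comp t1
    have t3 : Filter.Tendsto (fun s : ℝ => a * (Real.exp (-s * c) - 1) / c)
        Filter.atTop (nhds (a * ((0:ℝ) - 1) / c)) :=
      (((t2.sub tendsto_const_nhds).const_mul a).div_const c)
    have t4 : Filter.Tendsto (fun s : ℝ => Real.exp (a * (Real.exp (-s * c) - 1) / c))
        Filter.atTop (nhds (Real.exp (a * ((0:ℝ) - 1) / c))) :=
      (Real.continuous_exp.tendsto _).comp t3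
    have hle : (μ {ω | X ω ≤ 0}).toReal ≤ Real.exp (a * ((0:ℝ) - 1) / c) :=
      ge_of_tendsto t4 (Filter.eventually_atTop.mpr ⟨0, fun s hs => hT s hs⟩)
    have : (a / (0:ℝ)) ^ ((0:ℝ) / c) * Real.exp (((0:ℝ) - a) / c)
        = Real.exp (a * ((0:ℝ) - 1) / c) := by
      rw [zero_div, Real.rpow_zero, one_mul]
      congr 1
      ring
    rw [this]
    exact hle
  · -- 0 < x
    set s : ℝ := Real.log (a / x) / c with hsdef
    have hax : 1 ≤ a / x := (one_le_div hxpos).mpr hxa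
    have hs : 0 ≤ s := div_nonneg (Real.log_nonneg hax) hc.le
    have hesc : Real.exp (-s * c) = x / a := by
      rw [hsdef]
      rw [show -(Real.log (a / x) / c) * c = -Real.log (a / x) by field_simp]
      rw [Real.exp_neg, Real.exp_log (div_pos ha hxpos)]
      exact inv_div a x
    have hb := (hmark s hs).trans
      (mul_le_mul_of_nonneg_left (hmb s hs) (Real.exp_pos (s * x)).le)
    rw [hesc, ← Real.exp_add] at hb
    have hrw : s * x + a * (x / a - 1) / c = x / c * Real.log (a / x) + (x - a) / c := by
      rw [hsdef]
      field_simp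
    rw [hrw, Real.exp_add] at hb
    rwa [Real.rpow_def_of_pos (div_pos ha hxpos), mul_comm (Real.log (a / x)) (x / c)]
end

section
/- For all real numbers 0 < a ≤ x and c > 0, (a/x)^{x/c} e^{(x−a)/c} ≤ exp(−(x−a)²/(c(a+x))), with strict inequality when x > a. -/
open Real

lemma key_log_ineq (t : ℝ) (ht : 1 < t) : 2 * (t - 1) / (t + 1) < Real.log t := by
  have ht0 : 0 < t := lt_trans one_pos ht
  have hmono : StrictMonoOn (fun s : ℝ => Real.log s - 2 * (s - 1) / (s + 1)) (Set.Ici 1) := by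
    apply strictMonoOn_of_deriv_pos (convex_Ici 1)
    · apply ContinuousOn.sub
      · exact Real.continuousOn_log.mono (by intro s hs; simp at hs ⊢; linarith)
      · apply ContinuousOn.div
        · fun_prop
        · fun_prop
        · intro s hs; simp at hs; intro h; linarith
    · intro y hy
      rw [interior_Ici] at hy
      have hy0 : 0 < y := lt_trans one_pos hy
      have hy1 : y + 1 ≠ 0 := by positivity
      have h1 : HasDerivAt Real.log y⁻¹ y := Real.hasDerivAt_log hy0.ne'
      have h2 : HasDerivAt (fun s : ℝ => 2 * (s - 1) / (s + 1)) (4 / (y + 1) ^ 2) y := by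
        have ha : HasDerivAt (fun s : ℝ => 2 * (s - 1)) 2 y := by
          simpa using ((hasDerivAt_id y).sub_const 1).const_mul 2
        have hb : HasDerivAt (fun s : ℝ => s + 1) 1 y := (hasDerivAt_id y).add_const 1
        have : HasDerivAt (fun s : ℝ => 2 * (s - 1) / (s + 1)) _ y := ha.div hb hy1
        convert this using 1
        ring
      have hd : HasDerivAt (fun s : ℝ => Real.log s - 2 * (s - 1) / (s + 1))
          (y⁻¹ - 4 / (y + 1) ^ 2) y := h1.sub h2
      rw [hd.deriv]
      have : y⁻¹ - 4 / (y + 1) ^ 2 = (y - 1) ^ 2 / (y * (y + 1) ^ 2) := by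
        field_simp
        ring
      rw [this]
      have hy' : (1:ℝ) < y := hy
      have : 0 < y - 1 := by linarith
      positivity
  have h := hmono (Set.self_mem_Ici) (Set.mem_Ici.mpr ht.le) ht
  simp only [Real.log_one] at h
  norm_num at h
  linarith [h]

theorem stmt_11 (a x c : ℝ) (ha : 0 < a) (hax : a ≤ x) (hc : 0 < c) :
    (a / x) ^ (x / c) * Real.exp ((x - a) / c) ≤
        Real.exp (-(x - a) ^ 2 / (c * (a + x))) ∧
      (a < x →
        (a / x) ^ (x / c) * Real.exp ((x - a) / c) <
          Real.exp (-(x - a) ^ 2 / (c * (a + x)))) := by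
  have hx : 0 < x := lt_of_lt_of_le ha hax
  have hsum : 0 < a + x := by linarith
  have hstrict : a < x →
      (a / x) ^ (x / c) * Real.exp ((x - a) / c) <
        Real.exp (-(x - a) ^ 2 / (c * (a + x))) := by
    intro hlt
    rw [Real.rpow_def_of_pos (div_pos ha hx), ← Real.exp_add, Real.exp_lt_exp]
    have hlog : 2 * (x / a - 1) / (x / a + 1) < Real.log (x / a) :=
      key_log_ineq _ ((one_lt_div ha).mpr hlt)
    have heq : 2 * (x / a - 1) / (x / a + 1) = 2 * (x - a) / (a + x) := by
      rw [div_eq_div_iff (by positivity) (by positivity)]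
      field_simp
      ring
    rw [heq, Real.log_div hx.ne' ha.ne'] at hlog
    set L := Real.log x - Real.log a with hL
    have hlogax : Real.log (a / x) = -L := by
      rw [Real.log_div ha.ne' hx.ne']
      ring
    have hkey2 : (x - a) + (x - a) ^ 2 / (a + x) < x * L := by
      have h1 : 2 * (x - a) / (a + x) * x < L * x := by
        exact mul_lt_mul_of_pos_right hlog hx
      have h2 : 2 * (x - a) / (a + x) * x = (x - a) + (x - a) ^ 2 / (a + x) := by
        field_simp
        ring
      linarith [h1, h2 ▸ h1]
    have e1 : Real.log (a / x) * (x / c) + (x - a) / c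
        = (x * (-L) + (x - a)) / c := by
      rw [hlogax]; ring
    have e2 : -(x - a) ^ 2 / (c * (a + x)) = (-(x - a) ^ 2 / (a + x)) / c := by
      rw [div_div]
      ring_nf
    rw [e1, e2, div_lt_div_iff_of_pos_right hc]
    have : -(x - a) ^ 2 / (a + x) = -((x - a) ^ 2 / (a + x)) := by ring
    rw [this]
    linarith
  refine ⟨?_, hstrict⟩
  rcases eq_or_lt_of_le hax with heq | hlt
  · subst heq
    simp [div_self ha.ne', Real.one_rpow]
  · exact (hstrict hlt).le
end

section
/- For all real numbers 0 ≤ x ≤ a with a, c > 0, (a/x)^{x/c} e^{(x−a)/c} ≤ exp(−(x−a)²/(2ca)), with strict inequality when x < a. -/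
open Real

theorem stmt_12 (a x c : ℝ) (ha : 0 < a) (hc : 0 < c) (hx0 : 0 ≤ x) (hxa : x ≤ a) :
    (a / x) ^ (x / c) * Real.exp ((x - a) / c) ≤
        Real.exp (-(x - a) ^ 2 / (2 * c * a)) ∧
      (x < a →
        (a / x) ^ (x / c) * Real.exp ((x - a) / c) <
          Real.exp (-(x - a) ^ 2 / (2 * c * a))) := by
  rcases eq_or_lt_of_le hxa with rfl | hlt
  · -- x = a : equality
    constructor
    · rw [div_self ha.ne', Real.one_rpow, sub_self, zero_div, Real.exp_zero]
      norm_num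
    · intro h; exact absurd h (lt_irrefl _)
  · -- x < a : prove strict inequality
    have key : (a / x) ^ (x / c) * Real.exp ((x - a) / c) <
        Real.exp (-(x - a) ^ 2 / (2 * c * a)) := by
      rcases eq_or_lt_of_le hx0 with rfl | hx
      · -- x = 0
        rw [zero_div, Real.rpow_zero, one_mul, Real.exp_lt_exp]
        rw [div_lt_div_iff₀ hc (by positivity)]
        nlinarith [mul_pos hc ha, sq_nonneg a]
      · -- 0 < x < a
        have hax : 1 < a / x := (one_lt_div hx).2 hlt
        have hlog : Real.log (a / x) < (a / x - (a / x)⁻¹) / 2 := by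
          rw [← Real.sinh_log (by positivity)]
          exact (Real.self_lt_sinh_iff.2 (Real.log_pos hax))
        have hkey : x * Real.log (a / x) < (a ^ 2 - x ^ 2) / (2 * a) := by
          have h2 : x * Real.log (a / x) < x * ((a / x - (a / x)⁻¹) / 2) :=
            (mul_lt_mul_iff_right₀ hx).2 hlog
          have h3 : x * ((a / x - (a / x)⁻¹) / 2) = (a ^ 2 - x ^ 2) / (2 * a) := by
            field_simp
          linarith [h3 ▸ h2]
        rw [Real.rpow_def_of_pos (by positivity), ← Real.exp_add, Real.exp_lt_exp]
        have h4 : Real.log (a / x) * (x / c) + (x - a) / c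
            = (x * Real.log (a / x) + (x - a)) / c := by ring
        have h5 : -(x - a) ^ 2 / (2 * c * a)
            = ((a ^ 2 - x ^ 2) / (2 * a) + (x - a)) / c := by field_simp; ring
        rw [h4, h5, div_lt_div_iff_of_pos_right hc]
        linarith
    exact ⟨le_of_lt key, fun _ => key⟩
end

section
/- Suppose X ≥ 0 with mean a ∈ (0,∞) admits a c-bounded size bias coupling. Then Var(X) ≤ a c, and consequently for all x ≤ a, P(X ≤ x) ≤ ac/(ac + (a−x)²). -/
open MeasureTheory ProbabilityTheory Real

theorem stmt_13
    {Ω : Type*} [MeasurableSpace Ω] (μ : Measure Ω) [IsProbabilityMeasure μ]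
    (X Y : Ω → ℝ) (a c : ℝ) (ha : 0 < a) (hc : 0 < c)
    (hXm : Measurable X) (hYm : Measurable Y)
    (hXnn : ∀ᵐ ω ∂μ, 0 ≤ X ω)
    (hXint : Integrable X μ)
    (hmean : ∫ ω, X ω ∂μ = a)
    (hsb : ∀ g : ℝ → ℝ, Measurable g → (∃ C, ∀ x, |g x| ≤ C) →
        ∫ ω, g (Y ω) ∂μ = (∫ ω, X ω * g (X ω) ∂μ) / a)
    (hcoup : ∀ᵐ ω ∂μ, Y ω ≤ X ω + c) :
    variance X μ ≤ a * c ∧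
      ∀ x : ℝ, x ≤ a →
        (μ {ω | X ω ≤ x}).toReal ≤ a * c / (a * c + (a - x) ^ 2) := by
  set g : ℕ → ℝ → ℝ := fun n x => max 0 (min x n) with hgdef
  have hgm : ∀ n : ℕ, Measurable (g n) := fun n =>
    measurable_const.max (measurable_id.min measurable_const)
  have hgbd : ∀ n : ℕ, ∀ x : ℝ, |g n x| ≤ n := by
    intro n x
    have h0 : (0:ℝ) ≤ g n x := le_max_left _ _
    have h1 : g n x ≤ n := max_le (Nat.cast_nonneg n) (min_le_right _ _)
    rw [abs_of_nonneg h0]; exact h1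
  -- integral of truncated size-biased part is bounded
  have hfint : ∀ n : ℕ, Integrable (fun ω => X ω * g n (X ω)) μ := by
    intro n
    refine (hXint.const_mul (n:ℝ)).mono'
      (hXm.mul ((hgm n).comp hXm)).aestronglyMeasurable ?_
    filter_upwards [hXnn] with ω hω
    have h0 : (0:ℝ) ≤ g n (X ω) := le_max_left _ _
    have h1 : g n (X ω) ≤ n := max_le (Nat.cast_nonneg n) (min_le_right _ _)
    rw [Real.norm_eq_abs, abs_mul, abs_of_nonneg hω, abs_of_nonneg h0, mul_comm ((n:ℝ))]
    exact mul_le_mul_of_nonneg_left h1 hω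

  have hkey : ∀ n : ℕ, ∫ ω, X ω * g n (X ω) ∂μ ≤ a * (a + c) := by
    intro n
    have hYint : Integrable (fun ω => g n (Y ω)) μ := by
      refine (integrable_const (n:ℝ)).mono'
        ((hgm n).comp hYm).aestronglyMeasurable ?_
      filter_upwards with ω
      simpa [Real.norm_eq_abs] using hgbd n (Y ω)
    have hYle : ∫ ω, g n (Y ω) ∂μ ≤ a + c := by
      have hmono : ∀ᵐ ω ∂μ, g n (Y ω) ≤ X ω + c := by
        filter_upwards [hcoup, hXnn] with ω h1 h2
        calc g n (Y ω) ≤ max 0 (Y ω) := max_le_max le_rfl (min_le_left _ _)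
          _ ≤ max 0 (X ω + c) := max_le_max le_rfl h1
          _ = X ω + c := max_eq_right (by linarith)
      calc ∫ ω, g n (Y ω) ∂μ ≤ ∫ ω, (X ω + c) ∂μ :=
            integral_mono_ae hYint (hXint.add (integrable_const c)) hmono
        _ = a + c := by
            rw [integral_add hXint (integrable_const c), hmean,
              integral_const]; simp
    have := hsb (g n) (hgm n) ⟨n, hgbd n⟩
    have h2 : ∫ ω, X ω * g n (X ω) ∂μ = a * ∫ ω, g n (Y ω) ∂μ := by
      rw [this]; field_simp
    rw [h2]
    exact mul_le_mul_of_nonneg_left hYle ha.le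
  -- monotone convergence: E[X²] ≤ a(a+c)
  have hfnn : ∀ n : ℕ, 0 ≤ᵐ[μ] fun ω => X ω * g n (X ω) := by
    intro n
    filter_upwards [hXnn] with ω h
    exact mul_nonneg h (le_max_left _ _)
  have hlin : ∀ n : ℕ, ∫⁻ ω, ENNReal.ofReal (X ω * g n (X ω)) ∂μ
      ≤ ENNReal.ofReal (a * (a + c)) := by
    intro n
    rw [← ofReal_integral_eq_lintegral_ofReal (hfint n) (hfnn n)]
    exact ENNReal.ofReal_le_ofReal (hkey n)
  have hsup : ∀ᵐ ω ∂μ, (⨆ n : ℕ, ENNReal.ofReal (X ω * g n (X ω)))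
      = ENNReal.ofReal (X ω ^ 2) := by
    filter_upwards [hXnn] with ω hω
    apply le_antisymm
    · apply iSup_le
      intro n
      apply ENNReal.ofReal_le_ofReal
      have : g n (X ω) ≤ X ω := max_le hω (min_le_left _ _)
      calc X ω * g n (X ω) ≤ X ω * X ω := mul_le_mul_of_nonneg_left this hω
        _ = X ω ^ 2 := (sq (X ω)).symm
    · have : ENNReal.ofReal (X ω * g (⌈X ω⌉₊) (X ω))
          = ENNReal.ofReal (X ω ^ 2) := by
        congr 1
        have h1 : min (X ω) (⌈X ω⌉₊ : ℝ) = X ω := min_eq_left (Nat.le_ceil _)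
        simp only [hgdef, h1, max_eq_right hω, sq]
      rw [← this]
      exact le_iSup (fun n => ENNReal.ofReal (X ω * g n (X ω))) _
  have hmon : ∀ᵐ ω ∂μ, Monotone fun n : ℕ => ENNReal.ofReal (X ω * g n (X ω)) := by
    filter_upwards [hXnn] with ω hω
    intro m n hmn
    apply ENNReal.ofReal_le_ofReal
    apply mul_le_mul_of_nonneg_left _ hω
    exact max_le_max le_rfl (min_le_min le_rfl (Nat.cast_le.2 hmn))
  have hlsq : ∫⁻ ω, ENNReal.ofReal (X ω ^ 2) ∂μ ≤ ENNReal.ofReal (a * (a + c)) := by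
    have h1 : ∫⁻ ω, ENNReal.ofReal (X ω ^ 2) ∂μ
        = ∫⁻ ω, ⨆ n : ℕ, ENNReal.ofReal (X ω * g n (X ω)) ∂μ :=
      lintegral_congr_ae (hsup.mono fun ω h => h.symm)
    have hf : ∀ n : ℕ, AEMeasurable (fun ω => ENNReal.ofReal (X ω * g n (X ω))) μ :=
      fun n => ((hXm.mul ((hgm n).comp hXm)).ennreal_ofReal).aemeasurable
    rw [h1, lintegral_iSup' hf hmon]
    exact iSup_le hlin
  have hsqint : Integrable (fun ω => X ω ^ 2) μ := by
    refine ⟨(hXm.pow_const 2).aestronglyMeasurable, ?_⟩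
    rw [hasFiniteIntegral_iff_norm]
    have : ∀ ω, ENNReal.ofReal ‖X ω ^ 2‖ = ENNReal.ofReal (X ω ^ 2) := by
      intro ω; rw [Real.norm_eq_abs, abs_of_nonneg (sq_nonneg _)]
    simp_rw [this]
    exact lt_of_le_of_lt hlsq ENNReal.ofReal_lt_top
  have hE2 : ∫ ω, X ω ^ 2 ∂μ ≤ a * (a + c) := by
    have h1 : ∫ ω, X ω ^ 2 ∂μ = (∫⁻ ω, ENNReal.ofReal (X ω ^ 2) ∂μ).toReal := by
      rw [integral_eq_lintegral_of_nonneg_ae (ae_of_all _ fun ω => sq_nonneg _)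
        (hXm.pow_const 2).aestronglyMeasurable]
    rw [h1]
    calc (∫⁻ ω, ENNReal.ofReal (X ω ^ 2) ∂μ).toReal
        ≤ (ENNReal.ofReal (a * (a + c))).toReal :=
          ENNReal.toReal_mono ENNReal.ofReal_ne_top hlsq
      _ = a * (a + c) := ENNReal.toReal_ofReal (by positivity)
  have hmem : MemLp X 2 μ := (memLp_two_iff_integrable_sq hXm.aestronglyMeasurable).2 hsqint
  have hvar : variance X μ = ∫ ω, X ω ^ 2 ∂μ - a ^ 2 := by
    rw [variance_eq_sub hmem, hmean]; rfl
  have hVle : variance X μ ≤ a * c := by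
    rw [hvar]; nlinarith [hE2]
  refine ⟨hVle, ?_⟩
  intro x hx
  set V : ℝ := variance X μ with hVdef
  have hV0 : 0 ≤ V := variance_nonneg X μ
  set t : ℝ := a - x with htdef
  have ht0 : 0 ≤ t := by simp [htdef]; linarith
  rcases eq_or_lt_of_le ht0 with ht | ht
  · -- t = 0, bound is 1
    have hx' : (a - x) ^ 2 = 0 := by rw [← htdef, ← ht]; norm_num
    rw [hx']
    have : a * c / (a * c + 0) = 1 := by rw [add_zero]; exact div_self (by positivity)
    rw [this]
    calc (μ {ω | X ω ≤ x}).toReal ≤ (μ Set.univ).toReal :=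
          ENNReal.toReal_mono (measure_ne_top μ _) (measure_mono (Set.subset_univ _))
      _ = 1 := by simp
  · -- t > 0 : Cantelli
    set s : ℝ := V / t with hsdef
    have hs0 : 0 ≤ s := div_nonneg hV0 ht0
    set S : Set Ω := {ω | X ω ≤ x} with hSdef
    have hSm : MeasurableSet S := hXm measurableSet_Iic
    have hZint : Integrable (fun ω => ((a + s) - X ω) ^ 2) μ := by
      have heq : (fun ω => ((a + s) - X ω) ^ 2)
          = fun ω => X ω ^ 2 - 2 * (a + s) * X ω + (a + s) ^ 2 := by
        funext ω; ring
      rw [heq]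
      have h1 : Integrable (fun ω => X ω ^ 2 - 2 * (a + s) * X ω) μ :=
        hsqint.sub (hXint.const_mul (2 * (a + s)))
      exact h1.add (integrable_const _)
    have hZval : ∫ ω, ((a + s) - X ω) ^ 2 ∂μ = V + s ^ 2 := by
      have heq : (fun ω => ((a + s) - X ω) ^ 2)
          = fun ω => X ω ^ 2 - 2 * (a + s) * X ω + (a + s) ^ 2 := by
        funext ω; ring
      have h1 : Integrable (fun ω => X ω ^ 2 - 2 * (a + s) * X ω) μ :=
        hsqint.sub (hXint.const_mul (2 * (a + s)))
      rw [heq, integral_add h1 (integrable_const _),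
        integral_sub hsqint (hXint.const_mul _), integral_const_mul, hmean,
        integral_const, probReal_univ]
      simp only [ENNReal.toReal_one, smul_eq_mul, one_mul, one_smul]
      rw [hvar]; ring
    have hmark : (μ S).toReal * (t + s) ^ 2 ≤ V + s ^ 2 := by
      have hind : ∀ ω, S.indicator (fun _ => (t + s) ^ 2) ω ≤ ((a + s) - X ω) ^ 2 := by
        intro ω
        by_cases hω : ω ∈ S
        · rw [Set.indicator_of_mem hω]
          have hXω : X ω ≤ x := hω
          have h1 : t + s ≤ (a + s) - X ω := by simp only [htdef]; linarith
          exact pow_le_pow_left₀ (by linarith) h1 2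
        · rw [Set.indicator_of_notMem hω]
          exact sq_nonneg _
      have hintind : Integrable (S.indicator fun _ => (t + s) ^ 2 : Ω → ℝ) μ :=
        (integrable_const _).indicator hSm
      have := integral_mono hintind hZint hind
      rw [integral_indicator_const _ hSm, hZval, measureReal_def] at this
      simpa [mul_comm] using this
    -- algebra
    have hts : 0 < t + s := by linarith
    have hp0 : 0 ≤ (μ S).toReal := ENNReal.toReal_nonneg
    have hp1 : (μ S).toReal ≤ (V + s ^ 2) / (t + s) ^ 2 :=
      (le_div_iff₀ (by positivity)).2 hmark
    have hkey2 : (V + s ^ 2) / (t + s) ^ 2 = V / (V + t ^ 2) := by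
      rw [hsdef]
      have htne : t ≠ 0 := ne_of_gt ht
      have hd : V + t ^ 2 ≠ 0 := by positivity
      field_simp
      ring
    have hfin : V / (V + t ^ 2) ≤ a * c / (a * c + t ^ 2) := by
      rw [div_le_div_iff₀ (by positivity) (by positivity)]
      nlinarith [hVle, sq_nonneg t, ht]
    calc (μ S).toReal ≤ V / (V + t ^ 2) := by rw [← hkey2]; exact hp1
      _ ≤ a * c / (a * c + t ^ 2) := hfin
end

section
/- For 0 < u ≤ v, Γ(v + 1/2)/Γ(u + 1/2) ≥ v^v / (e^{v−u} u^u). -/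
open Real Set Filter


lemma p_mono : MonotoneOn (fun t : ℝ => Real.log (1+t) + 4/(2+t) - 2) (Ici 0) := by
  have hd : ∀ t : ℝ, 0 < t → HasDerivAt (fun t : ℝ => Real.log (1+t) + 4/(2+t) - 2)
      (1/(1+t) - 4/(2+t)^2) t := by
    intro t ht
    have h1 : HasDerivAt (fun t : ℝ => Real.log (1+t)) (1/(1+t)) t := by
      have := ((hasDerivAt_id t).const_add 1).log (show (1:ℝ) + id t ≠ 0 by simp; linarith)
      simpa using this
    have h2 : HasDerivAt (fun t : ℝ => 4/(2+t)) (-(4/(2+t)^2)) t := by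
      have h3 : HasDerivAt (fun t : ℝ => 2+t) 1 t := (hasDerivAt_id t).const_add 2
      have h4 := (h3.inv (show (2:ℝ)+t ≠ 0 by linarith)).const_mul (4:ℝ)
      have e1 : (fun t : ℝ => 4/(2+t)) = fun t : ℝ => 4*(2+t)⁻¹ := by
        funext y; rw [div_eq_mul_inv]
      rw [e1]
      exact h4.congr_deriv (by ring)
    have := (h1.add h2).sub_const 2
    simpa [sub_eq_add_neg] using this
  apply monotoneOn_of_deriv_nonneg (convex_Ici 0)
  · apply ContinuousOn.sub _ continuousOn_const
    apply ContinuousOn.add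
    · apply ContinuousOn.log (by fun_prop)
      intro t ht; simp at ht; positivity
    · apply ContinuousOn.div continuousOn_const (by fun_prop)
      intro t ht; simp at ht; positivity
  · intro t ht
    rw [interior_Ici] at ht
    exact ((hd t ht).differentiableAt).differentiableWithinAt
  · intro t ht
    rw [interior_Ici] at ht
    rw [(hd t ht).deriv]
    simp only [mem_Ioi] at ht
    rw [sub_nonneg, div_le_div_iff₀ (by positivity) (by positivity)]
    nlinarith

lemma log_mid {x : ℝ} (hx : 0 < x) : 1/(x+1/2) ≤ Real.log (x+1) - Real.log x := by
  have h := p_mono (self_mem_Ici) (show (1/x : ℝ) ∈ Ici 0 by simp; positivity) (one_div_nonneg.mpr hx.le)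
  simp only [add_zero, Real.log_one] at h
  have hlog : Real.log (1 + 1/x) = Real.log (x+1) - Real.log x := by
    rw [← Real.log_div (by positivity) (by positivity)]
    congr 1; field_simp
  rw [hlog] at h
  have : 4/(2+1/x) = 4*x/(2*x+1) := by
    rw [div_eq_div_iff (by positivity) (by positivity)]; field_simp
  rw [this] at h
  have h2 : (1:ℝ)/(x+1/2) = 2 - 4*x/(2*x+1) := by
    rw [eq_sub_iff_add_eq, div_add_div _ _ (by positivity) (by positivity),
      div_eq_iff (by positivity)]; ring
  linarith

noncomputable def dlt (x : ℝ) : ℝ :=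
  Real.log (x+1/2) - (x+1)*Real.log (x+1) + x*Real.log x + 1

lemma dlt_hasDeriv {x : ℝ} (hx : 0 < x) :
    HasDerivAt dlt (1/(x+1/2) - (Real.log (x+1) + 1) + (Real.log x + 1)) x := by
  have h1 : HasDerivAt (fun x : ℝ => Real.log (x+1/2)) (1/(x+1/2)) x := by
    have := ((hasDerivAt_id x).add_const (1/2 : ℝ)).log (by simp; linarith)
    simpa using this
  have h2 : HasDerivAt (fun x : ℝ => (x+1)*Real.log (x+1)) (Real.log (x+1) + 1) x := by
    have ha : HasDerivAt (fun x : ℝ => x+1) 1 x := (hasDerivAt_id x).add_const 1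
    have hb : HasDerivAt (fun x : ℝ => Real.log (x+1)) (1/(x+1)) x := by
      have := ha.log (by simp; linarith)
      simpa using this
    have := ha.mul hb
    exact this.congr_deriv (by rw [one_mul, mul_one_div_cancel (by linarith : x+1 ≠ 0)])
  have h3 : HasDerivAt (fun x : ℝ => x*Real.log x) (Real.log x + 1) x := by
    have := (hasDerivAt_id x).mul (Real.hasDerivAt_log hx.ne')
    exact this.congr_deriv (by simp [hx.ne'])
  have := ((h1.sub h2).add h3).add_const 1
  exact this

lemma dlt_anti : AntitoneOn dlt (Ioi 0) := by
  apply antitoneOn_of_deriv_nonpos (convex_Ioi 0)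
  · exact fun x hx => (dlt_hasDeriv hx).differentiableAt.continuousAt.continuousWithinAt
  · intro x hx
    rw [interior_Ioi] at hx
    exact (dlt_hasDeriv hx).differentiableAt.differentiableWithinAt
  · intro x hx
    rw [interior_Ioi] at hx
    rw [(dlt_hasDeriv hx).deriv]
    have := log_mid hx
    linarith
noncomputable def gg (x : ℝ) : ℝ :=
  Real.log (Real.Gamma (x+1/2)) - x*Real.log x + x

lemma gg_step {x : ℝ} (hx : 0 < x) : gg (x+1) = gg x + dlt x := by
  have hpos : (0:ℝ) < x + 1/2 := by linarith
  have hgam : 0 < Real.Gamma (x+1/2) := Real.Gamma_pos_of_pos hpos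
  have h1 : Real.Gamma (x+1+1/2) = (x+1/2) * Real.Gamma (x+1/2) := by
    have := Real.Gamma_add_one (s := x+1/2) hpos.ne'
    rw [← this]; ring_nf
  unfold gg dlt
  rw [h1, Real.log_mul hpos.ne' hgam.ne']
  ring

lemma gg_sub_anti {w z : ℝ} (hw : 0 < w) (hwz : w ≤ z) :
    ∀ m : ℕ, gg (z+m) - gg (w+m) ≤ gg z - gg w := by
  intro m
  induction m with
  | zero => simp
  | succ n ih =>
    have hwn : (0:ℝ) < w + n := by positivity
    have hzn : (0:ℝ) < z + n := by linarith
    have h1 : gg (z+(n+1)) = gg (z+n) + dlt (z+n) := by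
      have := gg_step hzn; rw [← this]; ring_nf
    have h2 : gg (w+(n+1)) = gg (w+n) + dlt (w+n) := by
      have := gg_step hwn; rw [← this]; ring_nf
    have h3 : dlt (z+n) ≤ dlt (w+n) :=
      dlt_anti (mem_Ioi.mpr hwn) (mem_Ioi.mpr hzn) (by linarith)
    push_cast [h1, h2]
    push_cast at ih
    linarith

lemma gg_sub_lb {w z : ℝ} (hw : (1:ℝ)/2 < w) (hwz : w < z) :
    (z-w) * (Real.log (w - 1/2) - Real.log z) ≤ gg z - gg w := by
  have hw0 : (0:ℝ) < w := by linarith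
  have hz0 : (0:ℝ) < z := by linarith
  set a := w + 1/2 with ha
  set b := z + 1/2 with hb
  have ha1 : (0:ℝ) < a - 1 := by simp [ha]; linarith
  have slope := Real.convexOn_log_Gamma.slope_mono_adjacent
    (mem_Ioi.mpr ha1) (show b ∈ Ioi (0:ℝ) by simp [hb]; linarith)
    (show a - 1 < a by linarith) (show a < b by simp [ha, hb]; linarith)
  have hGa1 : 0 < Real.Gamma (a-1) := Real.Gamma_pos_of_pos ha1
  have hrec : Real.Gamma a = (a-1) * Real.Gamma (a-1) := by
    have := Real.Gamma_add_one (s := a-1) ha1.ne'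
    rw [← this]; ring_nf
  have hnum : (Real.log ∘ Real.Gamma) a - (Real.log ∘ Real.Gamma) (a-1) = Real.log (a-1) := by
    simp only [Function.comp_apply, hrec, Real.log_mul ha1.ne' hGa1.ne']
    ring
  rw [hnum] at slope
  have hba : (0:ℝ) < b - a := by simp [ha, hb]; linarith
  have hGamlb : (b-a) * Real.log (a-1) ≤
      Real.log (Real.Gamma b) - Real.log (Real.Gamma a) := by
    have h' : Real.log (a-1) / (a - (a-1)) ≤
        ((Real.log ∘ Real.Gamma) b - (Real.log ∘ Real.Gamma) a) / (b - a) := slope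
    simp only [Function.comp_apply] at h'
    have h'' : Real.log (a-1) ≤ (Real.log (Real.Gamma b) - Real.log (Real.Gamma a)) / (b-a) := by
      have : a - (a-1) = 1 := by ring
      rwa [this, div_one] at h'
    calc (b-a) * Real.log (a-1) ≤ (b-a) * ((Real.log (Real.Gamma b) - Real.log (Real.Gamma a)) / (b-a)) :=
          by apply mul_le_mul_of_nonneg_left h'' hba.le
      _ = Real.log (Real.Gamma b) - Real.log (Real.Gamma a) := by field_simp
  -- entropy part: z log z - z - (w log w - w) ≤ (z-w) log z
  have hent : z*Real.log z - z - (w*Real.log w - w) ≤ (z-w) * Real.log z := by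
    have hlog : Real.log z - Real.log w ≤ (z-w)/w := by
      have h1 : Real.log (z/w) ≤ z/w - 1 := Real.log_le_sub_one_of_pos (by positivity)
      rw [Real.log_div hz0.ne' hw0.ne'] at h1
      have : z/w - 1 = (z-w)/w := by field_simp
      linarith
    have h2 : w * (Real.log z - Real.log w) ≤ z - w := by
      have := mul_le_mul_of_nonneg_left hlog hw0.le
      rwa [mul_div_cancel₀ _ hw0.ne'] at this
    nlinarith [h2]
  have hab : b - a = z - w := by rw [ha, hb]; ring
  have haw : a - 1 = w - 1/2 := by rw [ha]; ring
  rw [hab, haw] at hGamlb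
  unfold gg
  rw [hb.symm, ha.symm]
  linarith

lemma gg_mono {u v : ℝ} (hu : 0 < u) (huv : u ≤ v) : gg u ≤ gg v := by
  rcases eq_or_lt_of_le huv with h | h
  · rw [h]
  have hv : 0 < v := hu.trans h
  set f : ℕ → ℝ := fun n => (v-u)*(Real.log (u+(n:ℝ)+1-1/2) - Real.log (v+(n:ℝ)+1)) with hf
  have htop : Tendsto (fun n : ℕ => v+(n:ℝ)+1) atTop atTop := by
    have h1 : Tendsto (fun n : ℕ => (n:ℝ)) atTop atTop := tendsto_natCast_atTop_atTop
    have h2 := tendsto_atTop_add_const_right atTop (v+1) h1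
    exact h2.congr (fun n => by ring)
  have hc0 : Tendsto (fun n : ℕ => (v-u+1/2)/(v+(n:ℝ)+1)) atTop (nhds 0) :=
    Tendsto.div_atTop tendsto_const_nhds htop
  have hratio : Tendsto (fun n : ℕ => (u+(n:ℝ)+1-1/2)/(v+(n:ℝ)+1)) atTop (nhds 1) := by
    have h3 := tendsto_const_nhds (x := (1:ℝ)) (f := atTop (α := ℕ)) |>.sub hc0
    rw [sub_zero] at h3
    apply h3.congr
    intro n
    have hpos : (0:ℝ) < v+(n:ℝ)+1 := by positivity
    field_simp
    ring
  have hlog : Tendsto (fun n : ℕ => Real.log ((u+(n:ℝ)+1-1/2)/(v+(n:ℝ)+1))) atTop (nhds 0) := by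
    have := hratio.log one_ne_zero
    simpa using this
  have htend : Tendsto f atTop (nhds 0) := by
    have h4 := hlog.const_mul (v-u)
    rw [mul_zero] at h4
    apply h4.congr
    intro n
    have h5 : (0:ℝ) < u+(n:ℝ)+1-1/2 := by linarith [Nat.cast_nonneg (α := ℝ) n]
    have h6 : (0:ℝ) < v+(n:ℝ)+1 := by positivity
    rw [hf]
    rw [Real.log_div h5.ne' h6.ne']
  have hle : ∀ n : ℕ, f n ≤ gg v - gg u := by
    intro n
    have h7 := gg_sub_lb (w := u+(n:ℝ)+1) (z := v+(n:ℝ)+1)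
      (by linarith [Nat.cast_nonneg (α := ℝ) n]) (by linarith)
    rw [show (v+(n:ℝ)+1) - (u+(n:ℝ)+1) = v - u by ring] at h7
    have h8 := gg_sub_anti hu huv (n+1)
    push_cast at h8
    rw [hf]
    simp only []
    rw [show u+(n:ℝ)+1 = u+((n:ℝ)+1) by ring, show v+(n:ℝ)+1 = v+((n:ℝ)+1) by ring] at h7 ⊢
    linarith
  have := le_of_tendsto htend (Filter.Eventually.of_forall hle)
  linarith

theorem stmt_14 (u v : ℝ) (hu : 0 < u) (huv : u ≤ v) :
    Real.Gamma (v + 1 / 2) / Real.Gamma (u + 1 / 2) ≥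
      v ^ v / (Real.exp (v - u) * u ^ u) := by
  have hv : 0 < v := lt_of_lt_of_le hu huv
  have hgu : 0 < Real.Gamma (u + 1/2) := Real.Gamma_pos_of_pos (by linarith)
  have hgv : 0 < Real.Gamma (v + 1/2) := Real.Gamma_pos_of_pos (by linarith)
  have hkey := gg_mono hu huv
  unfold gg at hkey
  have hlhs : Real.Gamma (v + 1/2) / Real.Gamma (u + 1/2) =
      Real.exp (Real.log (Real.Gamma (v+1/2)) - Real.log (Real.Gamma (u+1/2))) := by
    rw [Real.exp_sub, Real.exp_log hgv, Real.exp_log hgu]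
  have hrhs : v ^ v / (Real.exp (v - u) * u ^ u) =
      Real.exp (v*Real.log v - u*Real.log u - (v-u)) := by
    rw [Real.rpow_def_of_pos hv, Real.rpow_def_of_pos hu]
    rw [show v*Real.log v - u*Real.log u - (v-u) = Real.log v * v - ((v-u) + Real.log u * u) by ring]
    rw [← Real.exp_add (v-u) (Real.log u * u), ← Real.exp_sub]
  rw [ge_iff_le, hlhs, hrhs]
  apply Real.exp_le_exp.mpr
  linarith
end

section
/- For 0 < a ≤ x, a^{x−a} Γ(a+1)/Γ(x+1) ≤ (a + 1/2)^{a+1/2} (ae)^{x−a} / (x + 1/2)^{x+1/2} ≤ ((a+1/2)/(x+1/2))^{1/2} · (a/x)^x · e^{x−a}. -/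
open Real Filter

noncomputable def psi (s : ℝ) : ℝ := deriv Real.Gamma s / Real.Gamma s

lemma gamma_ne_neg {s : ℝ} (hs : 0 < s) : ∀ m : ℕ, s ≠ -(m : ℝ) := by
  intro m h
  have : (0:ℝ) ≤ (m:ℝ) := Nat.cast_nonneg m
  rw [h] at hs; linarith

lemma hasDerivAt_logGamma {s : ℝ} (hs : 0 < s) :
    HasDerivAt (fun u => Real.log (Real.Gamma u)) (psi s) s :=
  (Real.differentiableAt_Gamma (gamma_ne_neg hs)).hasDerivAt.log
    (Real.Gamma_pos_of_pos hs).ne'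

lemma psi_add_one {s : ℝ} (hs : 0 < s) : psi (s + 1) = psi s + 1 / s := by
  have h1 : HasDerivAt (fun t => Real.log (Real.Gamma (t + 1))) (psi (s + 1)) s := by
    simpa [Function.comp_def] using (hasDerivAt_logGamma (by linarith : (0:ℝ) < s + 1)).comp s
      ((hasDerivAt_id s).add_const 1)
  have h2 : HasDerivAt (fun t => Real.log t + Real.log (Real.Gamma t)) (psi s + 1 / s) s := by
    simpa [one_div, add_comm, Pi.add_def] using (Real.hasDerivAt_log hs.ne').add (hasDerivAt_logGamma hs)
  have heq : (fun t => Real.log (Real.Gamma (t + 1)))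
      =ᶠ[nhds s] (fun t => Real.log t + Real.log (Real.Gamma t)) := by
    filter_upwards [isOpen_Ioi.mem_nhds hs] with t ht
    rw [Real.Gamma_add_one (ne_of_gt ht),
      Real.log_mul (ne_of_gt ht) (Real.Gamma_pos_of_pos ht).ne']
  exact h1.unique (h2.congr_of_eventuallyEq heq)

lemma psi_add_nat {s : ℝ} (hs : 0 < s) (n : ℕ) :
    psi (s + n) = psi s + ∑ k ∈ Finset.range n, 1 / (s + k) := by
  induction n with
  | zero => simp
  | succ n ih =>
    have h1 : s + ((n : ℝ) + 1) = (s + n) + 1 := by ring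
    have h2 : (0:ℝ) < s + n := by positivity
    rw [Finset.sum_range_succ, Nat.cast_add, Nat.cast_one, h1, psi_add_one h2, ih]
    ring

lemma log_le_psi {t : ℝ} (ht : 0 < t) : Real.log t ≤ psi (t + 1) := by
  have hconv := Real.convexOn_log_Gamma
  have hd : HasDerivAt (fun u => Real.log (Real.Gamma u)) (psi (t + 1)) (t + 1) :=
    hasDerivAt_logGamma (by linarith)
  have hslope := hasDerivAt_iff_tendsto_slope.mp hd
  refine ge_of_tendsto hslope ?_
  have hmem : Set.Ioi t ∈ nhdsWithin (t+1) {(t+1)}ᶜ :=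
    nhdsWithin_le_nhds (isOpen_Ioi.mem_nhds (Set.mem_Ioi.mpr (by linarith)))
  filter_upwards [hmem, self_mem_nhdsWithin] with y hy hy'
  have hy'' : y ≠ t + 1 := hy'
  have hsec := hconv.secant_mono (a := t + 1) (x := t) (y := y)
    (Set.mem_Ioi.mpr (by linarith)) (Set.mem_Ioi.mpr ht)
    (Set.mem_Ioi.mpr (lt_trans ht hy)) (by intro h; linarith) hy'' (le_of_lt hy)
  have hfe : Real.log (Real.Gamma (t+1)) = Real.log t + Real.log (Real.Gamma t) := by
    rw [Real.Gamma_add_one ht.ne', Real.log_mul ht.ne' (Real.Gamma_pos_of_pos ht).ne']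
  have hL : ((Real.log ∘ Real.Gamma) t - (Real.log ∘ Real.Gamma) (t+1)) / (t - (t+1))
      = Real.log t := by
    simp only [Function.comp_apply, hfe]
    field_simp
    ring
  rw [hL] at hsec
  rw [slope_def_field]
  calc Real.log t ≤ ((Real.log ∘ Real.Gamma) y - (Real.log ∘ Real.Gamma) (t+1)) / (y - (t+1)) := hsec
    _ = _ := by simp [Function.comp]

lemma two_mul_le_log_div {u : ℝ} (hu0 : 0 ≤ u) (hu1 : u < 1) :
    2 * u ≤ Real.log (1 + u) - Real.log (1 - u) := by
  set g : ℝ → ℝ := fun v => Real.log (1 + v) - Real.log (1 - v) - 2 * v with hg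
  have hder : ∀ v ∈ Set.Icc (0:ℝ) u,
      HasDerivAt g ((1 + v)⁻¹ + (1 - v)⁻¹ - 2) v := by
    intro v hv
    have hv1 : (0:ℝ) < 1 + v := by linarith [hv.1]
    have hv2 : (0:ℝ) < 1 - v := by linarith [hv.2]
    have d1 : HasDerivAt (fun v : ℝ => Real.log (1 + v)) ((1 + v)⁻¹) v := by
      simpa [Function.comp_def] using (Real.hasDerivAt_log hv1.ne').comp v ((hasDerivAt_id v).const_add 1)
    have d2 : HasDerivAt (fun v : ℝ => Real.log (1 - v)) (-(1 - v)⁻¹) v := by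
      simpa [Function.comp_def] using (Real.hasDerivAt_log hv2.ne').comp v ((hasDerivAt_id v).const_sub 1)
    have := (d1.sub d2).sub ((hasDerivAt_id v).const_mul 2)
    refine this.congr_deriv ?_
    ring
  have hmono : MonotoneOn g (Set.Icc 0 u) := by
    apply monotoneOn_of_deriv_nonneg (convex_Icc 0 u)
    · exact fun v hv => (hder v hv).differentiableAt.continuousAt.continuousWithinAt
    · intro v hv
      rw [interior_Icc] at hv
      exact (hder v ⟨hv.1.le, hv.2.le⟩).differentiableAt.differentiableWithinAt
    · intro v hv
      rw [interior_Icc] at hv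
      rw [(hder v ⟨hv.1.le, hv.2.le⟩).deriv]
      have hv1 : (0:ℝ) < 1 + v := by linarith [hv.1]
      have hv2 : (0:ℝ) < 1 - v := by linarith [lt_trans hv.2 hu1]
      have : (1 + v)⁻¹ + (1 - v)⁻¹ - 2 = 2 * v ^ 2 / ((1 + v) * (1 - v)) := by
        field_simp; ring
      rw [this]; positivity
  have := hmono (Set.left_mem_Icc.mpr hu0) (Set.mem_Icc.mpr ⟨hu0, le_refl u⟩) hu0
  simp only [hg] at this
  simp only [add_zero, sub_zero, Real.log_one, mul_zero, sub_self] at this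
  linarith

lemma one_div_le_log_sub {m : ℝ} (hm : 1/2 < m) :
    1 / m ≤ Real.log (m + 1/2) - Real.log (m - 1/2) := by
  have hm0 : 0 < m := by linarith
  have hu0 : (0:ℝ) ≤ 1 / (2 * m) := by positivity
  have hu1 : 1 / (2 * m) < 1 := by
    rw [div_lt_one (by linarith)]; linarith
  have h := two_mul_le_log_div hu0 hu1
  have e1 : 1 + 1 / (2 * m) = (m + 1/2) / m := by field_simp
  have e2 : 1 - 1 / (2 * m) = (m - 1/2) / m := by field_simp
  rw [e1, e2, Real.log_div (by positivity) hm0.ne',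
    Real.log_div (by linarith) hm0.ne'] at h
  have : 2 * (1 / (2 * m)) = 1 / m := by field_simp
  linarith [this ▸ h]

lemma log_add_half_le_psi {t : ℝ} (ht : 0 < t) :
    Real.log (t + 1/2) ≤ psi (t + 1) := by
  have key : ∀ n : ℕ, Real.log (t + 1/2) ≤ psi (t + 1) + (2 * (t + n))⁻¹ := by
    intro n
    have htn : (0:ℝ) < t + n := by positivity
    have hsum : psi (t + 1 + n) = psi (t + 1) + ∑ k ∈ Finset.range n, 1 / (t + 1 + k) :=
      psi_add_nat (by linarith) n
    have htan : Real.log (t + n) ≤ psi (t + n + 1) := log_le_psi htn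
    have hS : ∑ k ∈ Finset.range n, 1 / (t + 1 + k)
        ≤ Real.log (t + 1/2 + n) - Real.log (t + 1/2) := by
      have htel : ∑ k ∈ Finset.range n,
          (Real.log (t + 1/2 + (k + 1 : ℕ)) - Real.log (t + 1/2 + k))
          = Real.log (t + 1/2 + n) - Real.log (t + 1/2) := by
        rw [Finset.sum_range_sub (f := fun k : ℕ => Real.log (t + 1/2 + k))]
        simp
      rw [← htel]
      apply Finset.sum_le_sum
      intro k _
      have h := one_div_le_log_sub (m := t + 1 + k) (by have := Nat.cast_nonneg (α:=ℝ) k; linarith)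
      have e1 : t + 1 + (k:ℝ) + 1/2 = t + 1/2 + ((k:ℕ) + 1 : ℕ) := by push_cast; ring
      have e2 : t + 1 + (k:ℝ) - 1/2 = t + 1/2 + k := by ring
      rw [e1, e2] at h
      exact h
    have heq : t + n + 1 = t + 1 + n := by ring
    rw [heq] at htan
    have hlog : Real.log (t + 1/2 + n) - Real.log (t + n) ≤ (2 * (t + n))⁻¹ := by
      have h := Real.log_le_sub_one_of_pos (x := (t + 1/2 + n) / (t + n)) (by positivity)
      rw [Real.log_div (by positivity) htn.ne'] at h
      have : (t + 1/2 + n) / (t + n) - 1 = (2 * (t + n))⁻¹ := by field_simp; ring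
      linarith [this ▸ h]
    rw [hsum] at htan
    linarith
  have hlim : Tendsto (fun n : ℕ => psi (t + 1) + (2 * (t + n))⁻¹) atTop
      (nhds (psi (t + 1) + 0)) := by
    apply Tendsto.const_add
    apply Tendsto.inv_tendsto_atTop
    apply Tendsto.const_mul_atTop two_pos
    exact tendsto_atTop_add_const_left _ t tendsto_natCast_atTop_atTop
  rw [add_zero] at hlim
  exact ge_of_tendsto' hlim key

lemma stirling_mono {a x : ℝ} (ha : 0 < a) (hax : a ≤ x) :
    Real.log (Real.Gamma (a+1)) + a - (a+1/2) * Real.log (a+1/2) ≤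
    Real.log (Real.Gamma (x+1)) + x - (x+1/2) * Real.log (x+1/2) := by
  set F : ℝ → ℝ := fun t => Real.log (Real.Gamma (t+1)) + t - (t+1/2) * Real.log (t+1/2)
    with hF
  have hder : ∀ t ∈ Set.Ici a, HasDerivAt F (psi (t+1) - Real.log (t+1/2)) t := by
    intro t ht
    have ht0 : 0 < t := lt_of_lt_of_le ha ht
    have d1 : HasDerivAt (fun t : ℝ => Real.log (Real.Gamma (t+1))) (psi (t+1)) t := by
      simpa [Function.comp_def] using (hasDerivAt_logGamma (by linarith : (0:ℝ) < t + 1)).comp t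
        ((hasDerivAt_id t).add_const 1)
    have dl : HasDerivAt (fun t : ℝ => Real.log (t+1/2)) ((t+1/2)⁻¹) t := by
      simpa [Function.comp_def] using (Real.hasDerivAt_log (by linarith : (t:ℝ)+1/2 ≠ 0)).comp t
        ((hasDerivAt_id t).add_const (1/2))
    have d3 : HasDerivAt (fun t : ℝ => (t+1/2) * Real.log (t+1/2))
        (1 * Real.log (t+1/2) + (t+1/2) * (t+1/2)⁻¹) t :=
      ((hasDerivAt_id t).add_const (1/2)).mul dl
    have := (d1.add (hasDerivAt_id t)).sub d3
    refine this.congr_deriv ?_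
    have : (t+1/2) * (t+1/2)⁻¹ = 1 := mul_inv_cancel₀ (by linarith)
    rw [this]; ring
  have hmono : MonotoneOn F (Set.Ici a) := by
    apply monotoneOn_of_deriv_nonneg (convex_Ici a)
    · exact fun t ht => (hder t ht).differentiableAt.continuousAt.continuousWithinAt
    · intro t ht
      rw [interior_Ici] at ht
      exact (hder t (Set.mem_Ici.mpr (le_of_lt ht))).differentiableAt.differentiableWithinAt
    · intro t ht
      rw [interior_Ici] at ht
      rw [(hder t (Set.mem_Ici.mpr (le_of_lt ht))).deriv]
      have ht0 : 0 < t := lt_of_le_of_lt ha.le ht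
      linarith [log_add_half_le_psi ht0]
  exact hmono Set.self_mem_Ici hax hax

lemma k_mono {a x : ℝ} (ha : 0 < a) (hax : a ≤ x) :
    a * (Real.log (a+1/2) - Real.log a) ≤ x * (Real.log (x+1/2) - Real.log x) := by
  set K : ℝ → ℝ := fun t => t * (Real.log (t+1/2) - Real.log t) with hK
  have hder : ∀ t ∈ Set.Ici a, HasDerivAt K
      ((Real.log (t+1/2) - Real.log t) + t * ((t+1/2)⁻¹ - t⁻¹)) t := by
    intro t ht
    have ht0 : 0 < t := lt_of_lt_of_le ha ht
    have dl : HasDerivAt (fun t : ℝ => Real.log (t+1/2)) ((t+1/2)⁻¹) t := by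
      simpa [Function.comp_def] using (Real.hasDerivAt_log (by linarith : (t:ℝ)+1/2 ≠ 0)).comp t
        ((hasDerivAt_id t).add_const (1/2))
    have := (hasDerivAt_id t).mul (dl.sub (Real.hasDerivAt_log ht0.ne'))
    refine this.congr_deriv ?_
    simp only [id_eq, Pi.sub_apply]
    ring
  have hmono : MonotoneOn K (Set.Ici a) := by
    apply monotoneOn_of_deriv_nonneg (convex_Ici a)
    · exact fun t ht => (hder t ht).differentiableAt.continuousAt.continuousWithinAt
    · intro t ht
      rw [interior_Ici] at ht
      exact (hder t (Set.mem_Ici.mpr (le_of_lt ht))).differentiableAt.differentiableWithinAt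
    · intro t ht
      rw [interior_Ici] at ht
      rw [(hder t (Set.mem_Ici.mpr (le_of_lt ht))).deriv]
      have ht0 : 0 < t := lt_of_le_of_lt ha.le ht
      have h1 : 1 - ((t+1/2)/t)⁻¹ ≤ Real.log ((t+1/2)/t) :=
        Real.one_sub_inv_le_log_of_pos (by positivity)
      rw [Real.log_div (by linarith) ht0.ne'] at h1
      have e1 : ((t+1/2)/t)⁻¹ = t / (t+1/2) := by
        rw [inv_div]
      rw [e1] at h1
      have e2 : t * ((t+1/2)⁻¹ - t⁻¹) = t/(t+1/2) - 1 := by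
        field_simp
      rw [e2]
      linarith
  exact hmono Set.self_mem_Ici hax hax

theorem stmt_15 (a x : ℝ) (ha : 0 < a) (hax : a ≤ x) :
    a ^ (x - a) * Real.Gamma (a + 1) / Real.Gamma (x + 1) ≤
        (a + 1 / 2) ^ (a + 1 / 2) * (a * Real.exp 1) ^ (x - a) /
          (x + 1 / 2) ^ (x + 1 / 2) ∧
      (a + 1 / 2) ^ (a + 1 / 2) * (a * Real.exp 1) ^ (x - a) /
          (x + 1 / 2) ^ (x + 1 / 2) ≤
        ((a + 1 / 2) / (x + 1 / 2)) ^ ((1 : ℝ) / 2) * (a / x) ^ x *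
          Real.exp (x - a) := by
  have hx : 0 < x := lt_of_lt_of_le ha hax
  have hΓa : 0 < Real.Gamma (a + 1) := Real.Gamma_pos_of_pos (by linarith)
  have hΓx : 0 < Real.Gamma (x + 1) := Real.Gamma_pos_of_pos (by linarith)
  have ha2 : (0:ℝ) < a + 1/2 := by linarith
  have hx2 : (0:ℝ) < x + 1/2 := by linarith
  have hX : (0:ℝ) < a ^ (x - a) * Real.Gamma (a + 1) / Real.Gamma (x + 1) := by positivity
  have hY : (0:ℝ) < (a + 1 / 2) ^ (a + 1 / 2) * (a * Real.exp 1) ^ (x - a) /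
      (x + 1 / 2) ^ (x + 1 / 2) := by positivity
  have hZ : (0:ℝ) < ((a + 1 / 2) / (x + 1 / 2)) ^ ((1 : ℝ) / 2) * (a / x) ^ x *
      Real.exp (x - a) := by positivity
  have eX : Real.log (a ^ (x - a) * Real.Gamma (a + 1) / Real.Gamma (x + 1))
      = (x - a) * Real.log a + Real.log (Real.Gamma (a+1)) - Real.log (Real.Gamma (x+1)) := by
    rw [Real.log_div (by positivity) hΓx.ne', Real.log_mul (by positivity) hΓa.ne',
      Real.log_rpow ha]
  have eY : Real.log ((a + 1 / 2) ^ (a + 1 / 2) * (a * Real.exp 1) ^ (x - a) /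
      (x + 1 / 2) ^ (x + 1 / 2))
      = (a+1/2) * Real.log (a+1/2) + (x-a) * (Real.log a + 1)
        - (x+1/2) * Real.log (x+1/2) := by
    rw [Real.log_div (by positivity) (by positivity), Real.log_mul (by positivity) (by positivity),
      Real.log_rpow ha2, Real.log_rpow hx2, Real.log_rpow (by positivity),
      Real.log_mul ha.ne' (Real.exp_ne_zero 1), Real.log_exp]
  have eZ : Real.log (((a + 1 / 2) / (x + 1 / 2)) ^ ((1 : ℝ) / 2) * (a / x) ^ x *
      Real.exp (x - a))
      = (1/2) * (Real.log (a+1/2) - Real.log (x+1/2)) + x * (Real.log a - Real.log x)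
        + (x - a) := by
    rw [Real.log_mul (by positivity) (Real.exp_ne_zero _), Real.log_mul (by positivity)
      (by positivity), Real.log_rpow (by positivity), Real.log_rpow (by positivity),
      Real.log_exp, Real.log_div ha2.ne' hx2.ne', Real.log_div ha.ne' hx.ne']
  constructor
  · rw [← Real.exp_log hX, ← Real.exp_log hY]
    apply Real.exp_le_exp.mpr
    rw [eX, eY]
    linarith [stirling_mono ha hax]
  · rw [← Real.exp_log hY, ← Real.exp_log hZ]
    apply Real.exp_le_exp.mpr
    rw [eY, eZ]
    linarith [k_mono ha hax]
end

section
/- Let X, Y be real-valued random variables and b, c ∈ ℝ. If there exists a coupling with P(X ≤ Y + b) = 1 and a (possibly different) coupling with P(Y ≤ X + c) = 1, then F_Y(t−b) ≤ F_X(t) ≤ F_Y(t+c) for all t, and hence there exists a single coupling with P(X − b ≤ Y ≤ X + c) = 1. -/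
open MeasureTheory ProbabilityTheory Set Filter

noncomputable def qf (ν : Measure ℝ) (u : ℝ) : ℝ := sInf {x | u ≤ cdf ν x}

lemma qf_le_iff (ν : Measure ℝ) [IsProbabilityMeasure ν] {u : ℝ}
    (hu : u ∈ Set.Ioo (0:ℝ) 1) (t : ℝ) :
    qf ν u ≤ t ↔ u ≤ cdf ν t := by
  obtain ⟨hu0, hu1⟩ := hu
  obtain ⟨x₀, hx₀⟩ := eventually_atBot.mp ((tendsto_cdf_atBot ν).eventually_lt_const hu0)
  have hbdd : BddBelow {x | u ≤ cdf ν x} := by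
    refine ⟨x₀, fun x hx => ?_⟩
    by_contra h
    exact absurd hx (not_le.mpr (hx₀ x (le_of_lt (not_le.mp h))))
  obtain ⟨x₁, hx₁⟩ := eventually_atTop.mp ((tendsto_cdf_atTop ν).eventually_const_lt hu1)
  have hne : {x | u ≤ cdf ν x}.Nonempty := ⟨x₁, le_of_lt (hx₁ x₁ le_rfl)⟩
  constructor
  · intro h
    have hcont : Filter.Tendsto (cdf ν) (nhdsWithin t (Ioi t)) (nhds (cdf ν t)) :=
      ((cdf ν).right_continuous' t).mono_left (nhdsWithin_mono t Ioi_subset_Ici_self)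
    refine ge_of_tendsto hcont ?_
    filter_upwards [self_mem_nhdsWithin] with x hx
    obtain ⟨y, hy, hyx⟩ := (csInf_lt_iff hbdd hne).mp (lt_of_le_of_lt h hx)
    exact le_trans hy (monotone_cdf ν hyx.le)
  · intro h
    exact csInf_le hbdd h

lemma le_cdf_qf (ν : Measure ℝ) [IsProbabilityMeasure ν] {u : ℝ}
    (hu : u ∈ Set.Ioo (0:ℝ) 1) : u ≤ cdf ν (qf ν u) :=
  (qf_le_iff ν hu _).mp le_rfl

noncomputable def Qc (ν : Measure ℝ) (u : ℝ) : ℝ :=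
  if u ∈ Set.Ioo (0:ℝ) 1 then qf ν u else 0

lemma Qc_preimage (ν : Measure ℝ) [IsProbabilityMeasure ν] (t : ℝ) :
    Qc ν ⁻¹' Iic t =
      (Ioo (0:ℝ) 1 ∩ Iic (cdf ν t)) ∪ ((Ioo (0:ℝ) 1)ᶜ ∩ {u : ℝ | (0:ℝ) ≤ t}) := by
  ext u
  by_cases h : u ∈ Ioo (0:ℝ) 1
  · simp [Qc, h, qf_le_iff ν h t]
  · simp [Qc, h]

lemma Qc_measurable (ν : Measure ℝ) [IsProbabilityMeasure ν] : Measurable (Qc ν) := by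
  refine measurable_of_Iic fun t => ?_
  rw [Qc_preimage]
  exact ((measurableSet_Ioo.inter measurableSet_Iic).union
    (measurableSet_Ioo.compl.inter (MeasurableSet.const _)))

instance : IsProbabilityMeasure (volume.restrict (Ioo (0:ℝ) 1)) := by
  constructor
  rw [Measure.restrict_apply_univ, Real.volume_Ioo]
  norm_num

lemma map_Qc (ν : Measure ℝ) [IsProbabilityMeasure ν] :
    Measure.map (Qc ν) (volume.restrict (Ioo (0:ℝ) 1)) = ν := by
  have hprob : IsProbabilityMeasure (Measure.map (Qc ν) (volume.restrict (Ioo (0:ℝ) 1))) :=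
    Measure.isProbabilityMeasure_map (Qc_measurable ν).aemeasurable
  refine Measure.ext_of_Iic _ _ fun a => ?_
  rw [Measure.map_apply (Qc_measurable ν) measurableSet_Iic,
    Measure.restrict_apply ((Qc_measurable ν) measurableSet_Iic), Qc_preimage]
  have hset : ((Ioo (0:ℝ) 1 ∩ Iic (cdf ν a)) ∪ ((Ioo (0:ℝ) 1)ᶜ ∩ {u : ℝ | (0:ℝ) ≤ a}))
      ∩ Ioo (0:ℝ) 1 = Ioo (0:ℝ) 1 ∩ Iic (cdf ν a) := by
    ext u
    simp only [mem_inter_iff, mem_union, mem_compl_iff]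
    tauto
  rw [hset, ← ofReal_cdf ν a]
  have h0 : (0:ℝ) ≤ cdf ν a := cdf_nonneg ν a
  rcases lt_or_eq_of_le (cdf_le_one ν a) with hlt | heq
  · have : Ioo (0:ℝ) 1 ∩ Iic (cdf ν a) = Ioc 0 (cdf ν a) := by
      ext u
      simp only [mem_inter_iff, mem_Ioo, mem_Iic, mem_Ioc]
      exact ⟨fun ⟨⟨h1', _⟩, h2'⟩ => ⟨h1', h2'⟩, fun ⟨h1', h2'⟩ => ⟨⟨h1', lt_of_le_of_lt h2' hlt⟩, h2'⟩⟩
    rw [this, Real.volume_Ioc, sub_zero]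
  · have : Ioo (0:ℝ) 1 ∩ Iic (cdf ν a) = Ioo 0 1 := by
      rw [← heq]
      exact inter_eq_left.mpr (fun u hu => le_of_lt hu.2)
    rw [this, Real.volume_Ioo, heq]
    norm_num

theorem stmt_17
    {Ω₁ Ω₂ : Type*} [MeasurableSpace Ω₁] [MeasurableSpace Ω₂]
    (μ₁ : Measure Ω₁) (μ₂ : Measure Ω₂)
    [IsProbabilityMeasure μ₁] [IsProbabilityMeasure μ₂]
    (X : Ω₁ → ℝ) (Y : Ω₂ → ℝ) (hX : Measurable X) (hY : Measurable Y)
    (b c : ℝ)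
    (hcoup1 : ∃ (Ω : Type) (_ : MeasurableSpace Ω) (μ : Measure Ω),
      IsProbabilityMeasure μ ∧
        ∃ X' Y' : Ω → ℝ, Measurable X' ∧ Measurable Y' ∧
          Measure.map X' μ = Measure.map X μ₁ ∧
          Measure.map Y' μ = Measure.map Y μ₂ ∧
          μ {ω | X' ω ≤ Y' ω + b} = 1)
    (hcoup2 : ∃ (Ω : Type) (_ : MeasurableSpace Ω) (μ : Measure Ω),
      IsProbabilityMeasure μ ∧
        ∃ X' Y' : Ω → ℝ, Measurable X' ∧ Measurable Y' ∧
          Measure.map X' μ = Measure.map X μ₁ ∧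
          Measure.map Y' μ = Measure.map Y μ₂ ∧
          μ {ω | Y' ω ≤ X' ω + c} = 1) :
    (∀ t : ℝ,
      (μ₂ {ω | Y ω ≤ t - b}).toReal ≤ (μ₁ {ω | X ω ≤ t}).toReal ∧
        (μ₁ {ω | X ω ≤ t}).toReal ≤ (μ₂ {ω | Y ω ≤ t + c}).toReal) ∧
      ∃ (Ω : Type) (_ : MeasurableSpace Ω) (μ : Measure Ω),
        IsProbabilityMeasure μ ∧
          ∃ X' Y' : Ω → ℝ, Measurable X' ∧ Measurable Y' ∧
            Measure.map X' μ = Measure.map X μ₁ ∧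
            Measure.map Y' μ = Measure.map Y μ₂ ∧
            μ {ω | X' ω - b ≤ Y' ω ∧ Y' ω ≤ X' ω + c} = 1 := by
  obtain ⟨Ω, mΩ, μ, hμ, X', Y', hX', hY', hmX, hmY, hle⟩ := hcoup1
  obtain ⟨Ω₂', mΩ₂', μ', hμ', X'', Y'', hX'', hY'', hmX', hmY', hle'⟩ := hcoup2
  haveI := hμ
  haveI := hμ'
  -- measure-level inequalities
  have key1 : ∀ t : ℝ, μ₂ (Y ⁻¹' Iic (t - b)) ≤ μ₁ (X ⁻¹' Iic t) := by
    intro t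
    have hae : ∀ᵐ ω ∂μ, X' ω ≤ Y' ω + b := by
      rw [ae_iff]
      have hA : MeasurableSet {ω | X' ω ≤ Y' ω + b} :=
        measurableSet_le hX' (hY'.add measurable_const)
      have := (prob_compl_eq_zero_iff (μ := μ) hA)
      simpa [compl_setOf] using this.mpr hle
    have hsub : μ (Y' ⁻¹' Iic (t - b)) ≤ μ (X' ⁻¹' Iic t) := by
      refine measure_mono_ae (hae.mono fun ω hω hmem => ?_)
      have h1 : Y' ω ≤ t - b := hmem
      show X' ω ≤ t
      linarith
    calc μ₂ (Y ⁻¹' Iic (t - b)) = (Measure.map Y μ₂) (Iic (t - b)) := by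
          rw [Measure.map_apply hY measurableSet_Iic]
      _ = μ (Y' ⁻¹' Iic (t - b)) := by
          rw [← hmY, Measure.map_apply hY' measurableSet_Iic]
      _ ≤ μ (X' ⁻¹' Iic t) := hsub
      _ = (Measure.map X μ₁) (Iic t) := by
          rw [← hmX, Measure.map_apply hX' measurableSet_Iic]
      _ = μ₁ (X ⁻¹' Iic t) := by rw [Measure.map_apply hX measurableSet_Iic]
  have key2 : ∀ t : ℝ, μ₁ (X ⁻¹' Iic t) ≤ μ₂ (Y ⁻¹' Iic (t + c)) := by
    intro t
    have hae : ∀ᵐ ω ∂μ', Y'' ω ≤ X'' ω + c := by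
      rw [ae_iff]
      have hA : MeasurableSet {ω | Y'' ω ≤ X'' ω + c} :=
        measurableSet_le hY'' (hX''.add measurable_const)
      have := (prob_compl_eq_zero_iff (μ := μ') hA)
      simpa [compl_setOf] using this.mpr hle'
    have hsub : μ' (X'' ⁻¹' Iic t) ≤ μ' (Y'' ⁻¹' Iic (t + c)) := by
      refine measure_mono_ae (hae.mono fun ω hω hmem => ?_)
      have h1 : X'' ω ≤ t := hmem
      show Y'' ω ≤ t + c
      linarith
    calc μ₁ (X ⁻¹' Iic t) = (Measure.map X μ₁) (Iic t) := by
          rw [Measure.map_apply hX measurableSet_Iic]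
      _ = μ' (X'' ⁻¹' Iic t) := by
          rw [← hmX', Measure.map_apply hX'' measurableSet_Iic]
      _ ≤ μ' (Y'' ⁻¹' Iic (t + c)) := hsub
      _ = (Measure.map Y μ₂) (Iic (t + c)) := by
          rw [← hmY', Measure.map_apply hY'' measurableSet_Iic]
      _ = μ₂ (Y ⁻¹' Iic (t + c)) := by rw [Measure.map_apply hY measurableSet_Iic]
  refine ⟨fun t => ?_, ?_⟩
  · constructor
    · exact ENNReal.toReal_mono (measure_ne_top μ₁ _) (key1 t)
    · exact ENNReal.toReal_mono (measure_ne_top μ₂ _) (key2 t)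
  · haveI hpX : IsProbabilityMeasure (Measure.map X μ₁) :=
      Measure.isProbabilityMeasure_map hX.aemeasurable
    haveI hpY : IsProbabilityMeasure (Measure.map Y μ₂) :=
      Measure.isProbabilityMeasure_map hY.aemeasurable
    set νX := Measure.map X μ₁ with hνX
    set νY := Measure.map Y μ₂ with hνY
    have hF1 : ∀ t : ℝ, cdf νY (t - b) ≤ cdf νX t := by
      intro t
      rw [cdf_eq_real, cdf_eq_real]
      refine ENNReal.toReal_mono (measure_ne_top νX _) ?_
      rw [hνX, hνY, Measure.map_apply hX measurableSet_Iic,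
        Measure.map_apply hY measurableSet_Iic]
      exact key1 t
    have hF2 : ∀ t : ℝ, cdf νX t ≤ cdf νY (t + c) := by
      intro t
      rw [cdf_eq_real, cdf_eq_real]
      refine ENNReal.toReal_mono (measure_ne_top νY _) ?_
      rw [hνX, hνY, Measure.map_apply hX measurableSet_Iic,
        Measure.map_apply hY measurableSet_Iic]
      exact key2 t
    refine ⟨ℝ, inferInstance, volume.restrict (Ioo (0:ℝ) 1), inferInstance,
      Qc νX, Qc νY, Qc_measurable νX, Qc_measurable νY, map_Qc νX, map_Qc νY, ?_⟩
    have hsub : Ioo (0:ℝ) 1 ⊆ {u : ℝ | Qc νX u - b ≤ Qc νY u ∧ Qc νY u ≤ Qc νX u + c} := by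
      intro u hu
      simp only [mem_setOf_eq, Qc, if_pos hu]
      constructor
      · rw [sub_le_iff_le_add]
        refine (qf_le_iff νX hu _).mpr ?_
        calc u ≤ cdf νY (qf νY u) := le_cdf_qf νY hu
          _ = cdf νY ((qf νY u + b) - b) := by ring_nf
          _ ≤ cdf νX (qf νY u + b) := hF1 _
      · refine (qf_le_iff νY hu _).mpr ?_
        calc u ≤ cdf νX (qf νX u) := le_cdf_qf νX hu
          _ ≤ cdf νY (qf νX u + c) := hF2 _
    refine le_antisymm prob_le_one ?_
    calc (1:ENNReal) = (volume.restrict (Ioo (0:ℝ) 1)) (Ioo (0:ℝ) 1) := by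
          rw [Measure.restrict_apply measurableSet_Ioo, inter_self, Real.volume_Ioo]
          norm_num
      _ ≤ _ := measure_mono hsub
end

section
/- Sandwich principle: Let X, Y, Z be real random variables with F_Z(t) ≤ F_Y(t) ≤ F_X(t) for all t. If there exists a coupling of X and Z with |Z − X| ≤ c almost surely, then there exists a coupling of X and Y with Y ∈ [X, X+c] almost surely. -/
open MeasureTheory Set Filter ProbabilityTheory
open scoped Topology

noncomputable def quantS (ν : Measure ℝ) (u : ℝ) : ℝ := sInf {x | u ≤ cdf ν x}

noncomputable def gq (ν : Measure ℝ) (u : ℝ) : ℝ :=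
  if u ∈ Set.Ioo (0:ℝ) 1 then quantS ν u else 0

lemma bdd_quant (ν : Measure ℝ) {u : ℝ} (hu : 0 < u) :
    BddBelow {x | u ≤ cdf ν x} := by
  obtain ⟨y, hy⟩ := ((tendsto_cdf_atBot ν).eventually (eventually_lt_nhds hu)).exists
  refine ⟨y, fun x hx => ?_⟩
  by_contra h
  push_neg at h
  exact absurd (hx.trans (monotone_cdf ν h.le)) (not_le.2 hy)

lemma nonempty_quant (ν : Measure ℝ) {u : ℝ} (hu : u < 1) :
    {x | u ≤ cdf ν x}.Nonempty := by
  obtain ⟨y, hy⟩ := ((tendsto_cdf_atTop ν).eventually (eventually_gt_nhds hu)).exists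
  exact ⟨y, hy.le⟩

lemma quantS_le_iff (ν : Measure ℝ) {u x : ℝ} (hu0 : 0 < u) (hu1 : u < 1) :
    quantS ν u ≤ x ↔ u ≤ cdf ν x := by
  constructor
  · intro h
    have key : ∀ z, x < z → u ≤ cdf ν z := by
      intro z hz
      obtain ⟨s, hs, hsz⟩ := (csInf_lt_iff (bdd_quant ν hu0) (nonempty_quant ν hu1)).1
        (lt_of_le_of_lt h hz)
      exact hs.trans (monotone_cdf ν hsz.le)
    have htd : Tendsto (cdf ν) (𝓝[>] x) (𝓝 (cdf ν x)) :=
      ((cdf ν).right_continuous x).tendsto.mono_left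
        (nhdsWithin_mono x Ioi_subset_Ici_self)
    exact ge_of_tendsto htd (eventually_mem_nhdsWithin.mono fun z hz => key z hz)
  · intro h
    exact csInf_le (bdd_quant ν hu0) h

lemma gq_measurable (ν : Measure ℝ) : Measurable (gq ν) := by
  apply measurable_of_Iic
  intro x
  have : gq ν ⁻¹' Iic x =
      (Iic (cdf ν x) ∩ Ioo 0 1) ∪ ((Ioo (0:ℝ) 1)ᶜ ∩ {u | (0:ℝ) ≤ x}) := by
    ext u
    by_cases hu : u ∈ Set.Ioo (0:ℝ) 1
    · simp only [mem_preimage, mem_Iic, gq, if_pos hu, mem_union, mem_inter_iff, mem_compl_iff,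
        hu, and_true, not_true, false_and, or_false]
      exact (quantS_le_iff ν hu.1 hu.2).trans Iff.rfl
    · simp only [mem_preimage, mem_Iic, mem_union, mem_inter_iff, mem_compl_iff,
        hu, and_false, false_or, not_false_iff, true_and, mem_setOf_eq]
      rw [gq, if_neg hu]
  rw [this]
  have : MeasurableSet {u : ℝ | (0:ℝ) ≤ x} := by
    by_cases h : (0:ℝ) ≤ x
    · simp [h, MeasurableSet.univ]
    · simp [h]
  exact ((measurableSet_Iic.inter measurableSet_Ioo).union
    (measurableSet_Ioo.compl.inter this))

lemma gq_map (ν : Measure ℝ) [IsProbabilityMeasure ν] :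
    Measure.map (gq ν) (volume.restrict (Ioo 0 1)) = ν := by
  have hprob : IsProbabilityMeasure (volume.restrict (Ioo (0:ℝ) 1)) := by
    constructor
    rw [Measure.restrict_apply_univ, Real.volume_Ioo]
    norm_num
  have hmap : IsProbabilityMeasure (Measure.map (gq ν) (volume.restrict (Ioo 0 1))) :=
    Measure.isProbabilityMeasure_map (gq_measurable ν).aemeasurable
  refine Measure.ext_of_Iic _ _ (fun x => ?_)
  rw [Measure.map_apply (gq_measurable ν) measurableSet_Iic, Measure.restrict_apply
    (gq_measurable ν measurableSet_Iic)]
  have hset : gq ν ⁻¹' Iic x ∩ Ioo 0 1 = Iic (cdf ν x) ∩ Ioo 0 1 := by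
    ext u
    simp only [mem_inter_iff, mem_preimage, mem_Iic, and_congr_left_iff]
    intro hu
    rw [gq, if_pos hu]
    exact (quantS_le_iff ν hu.1 hu.2)
  rw [hset, ← ofReal_cdf ν x]
  have h0 : 0 ≤ cdf ν x := cdf_nonneg ν x
  have h1 : cdf ν x ≤ 1 := cdf_le_one ν x
  apply le_antisymm
  · calc volume (Iic (cdf ν x) ∩ Ioo 0 1) ≤ volume (Ioc 0 (cdf ν x)) := by
          apply measure_mono
          rintro u ⟨h1u, h2u, _⟩
          exact ⟨h2u, h1u⟩
      _ = ENNReal.ofReal (cdf ν x) := by rw [Real.volume_Ioc, sub_zero]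
  · calc ENNReal.ofReal (cdf ν x) = volume (Ioo 0 (cdf ν x)) := by
          rw [Real.volume_Ioo, sub_zero]
      _ ≤ volume (Iic (cdf ν x) ∩ Ioo 0 1) := by
          apply measure_mono
          rintro u ⟨h1u, h2u⟩
          exact ⟨h2u.le, h1u, lt_of_lt_of_le h2u h1⟩

theorem stmt_18
    {Ω₁ Ω₂ Ω₃ : Type*} [MeasurableSpace Ω₁] [MeasurableSpace Ω₂] [MeasurableSpace Ω₃]
    (μ₁ : Measure Ω₁) (μ₂ : Measure Ω₂) (μ₃ : Measure Ω₃)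
    [IsProbabilityMeasure μ₁] [IsProbabilityMeasure μ₂] [IsProbabilityMeasure μ₃]
    (X : Ω₁ → ℝ) (Y : Ω₂ → ℝ) (Z : Ω₃ → ℝ)
    (hX : Measurable X) (hY : Measurable Y) (hZ : Measurable Z)
    (c : ℝ) (hc : 0 < c)
    (hcdf : ∀ t : ℝ,
      (μ₃ {ω | Z ω ≤ t}).toReal ≤ (μ₂ {ω | Y ω ≤ t}).toReal ∧
        (μ₂ {ω | Y ω ≤ t}).toReal ≤ (μ₁ {ω | X ω ≤ t}).toReal)
    (hcoup : ∃ (Ω : Type) (_ : MeasurableSpace Ω) (μ : Measure Ω),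
      IsProbabilityMeasure μ ∧
        ∃ X' Z' : Ω → ℝ, Measurable X' ∧ Measurable Z' ∧
          Measure.map X' μ = Measure.map X μ₁ ∧
          Measure.map Z' μ = Measure.map Z μ₃ ∧
          μ {ω | |Z' ω - X' ω| ≤ c} = 1) :
    ∃ (Ω : Type) (_ : MeasurableSpace Ω) (μ : Measure Ω),
      IsProbabilityMeasure μ ∧
        ∃ X' Y' : Ω → ℝ, Measurable X' ∧ Measurable Y' ∧
          Measure.map X' μ = Measure.map X μ₁ ∧
          Measure.map Y' μ = Measure.map Y μ₂ ∧
          μ {ω | X' ω ≤ Y' ω ∧ Y' ω ≤ X' ω + c} = 1 := by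
  classical
  set ν₁ := Measure.map X μ₁ with hν₁
  set ν₂ := Measure.map Y μ₂ with hν₂
  set ν₃ := Measure.map Z μ₃ with hν₃
  have pν₁ : IsProbabilityMeasure ν₁ := Measure.isProbabilityMeasure_map hX.aemeasurable
  have pν₂ : IsProbabilityMeasure ν₂ := Measure.isProbabilityMeasure_map hY.aemeasurable
  have pν₃ : IsProbabilityMeasure ν₃ := Measure.isProbabilityMeasure_map hZ.aemeasurable
  -- translate hcdf into cdf inequalities
  have hIic₁ : ∀ t, ν₁ (Iic t) = μ₁ {ω | X ω ≤ t} := fun t => by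
    rw [hν₁, Measure.map_apply hX measurableSet_Iic]; rfl
  have hIic₂ : ∀ t, ν₂ (Iic t) = μ₂ {ω | Y ω ≤ t} := fun t => by
    rw [hν₂, Measure.map_apply hY measurableSet_Iic]; rfl
  have hIic₃ : ∀ t, ν₃ (Iic t) = μ₃ {ω | Z ω ≤ t} := fun t => by
    rw [hν₃, Measure.map_apply hZ measurableSet_Iic]; rfl
  have hcdf21 : ∀ t, cdf ν₂ t ≤ cdf ν₁ t := by
    intro t
    rw [cdf_eq_real, cdf_eq_real, measureReal_def, measureReal_def, hIic₁, hIic₂]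
    exact (hcdf t).2
  have hcdf32 : ∀ t, cdf ν₃ t ≤ cdf ν₂ t := by
    intro t
    rw [cdf_eq_real, cdf_eq_real, measureReal_def, measureReal_def, hIic₂, hIic₃]
    exact (hcdf t).1
  -- from the coupling: cdf ν₁ (t - c) ≤ cdf ν₃ t
  have hcdf13 : ∀ t, cdf ν₁ (t - c) ≤ cdf ν₃ t := by
    intro t
    obtain ⟨Ω, mΩ, μ, hμ, X', Z', hX', hZ', hmX, hmZ, hone⟩ := hcoup
    have hBmeas : MeasurableSet {ω | |Z' ω - X' ω| ≤ c} :=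
      measurableSet_le ((hZ'.sub hX').abs) measurable_const
    have hBc : μ {ω | |Z' ω - X' ω| ≤ c}ᶜ = 0 :=
      (prob_compl_eq_zero_iff hBmeas).2 hone
    have hsub : {ω | X' ω ≤ t - c} ∩ {ω | |Z' ω - X' ω| ≤ c} ⊆ {ω | Z' ω ≤ t} := by
      rintro ω ⟨h1, h2⟩
      simp only [mem_setOf_eq] at h1 h2 ⊢
      have := (abs_le.1 h2).2
      linarith
    have hle : μ {ω | X' ω ≤ t - c} ≤ μ {ω | Z' ω ≤ t} := by
      calc μ {ω | X' ω ≤ t - c}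
          ≤ μ ({ω | X' ω ≤ t - c} ∩ {ω | |Z' ω - X' ω| ≤ c})
            + μ {ω | |Z' ω - X' ω| ≤ c}ᶜ := by
            refine le_trans (measure_mono ?_) (measure_union_le _ _)
            intro ω hω
            by_cases h : |Z' ω - X' ω| ≤ c
            · exact Or.inl ⟨hω, h⟩
            · exact Or.inr h
        _ = μ ({ω | X' ω ≤ t - c} ∩ {ω | |Z' ω - X' ω| ≤ c}) := by rw [hBc, add_zero]
        _ ≤ μ {ω | Z' ω ≤ t} := measure_mono hsub
    have hXeq : μ {ω | X' ω ≤ t - c} = ν₁ (Iic (t - c)) := by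
      rw [← hmX, Measure.map_apply hX' measurableSet_Iic]; rfl
    have hZeq : μ {ω | Z' ω ≤ t} = ν₃ (Iic t) := by
      rw [← hmZ, Measure.map_apply hZ' measurableSet_Iic]; rfl
    rw [hXeq, hZeq] at hle
    rw [cdf_eq_real, cdf_eq_real, measureReal_def, measureReal_def]
    exact ENNReal.toReal_mono (measure_ne_top _ _) hle
  have hcdf12 : ∀ t, cdf ν₁ (t - c) ≤ cdf ν₂ t := fun t => (hcdf13 t).trans (hcdf32 t)
  -- the coupling
  refine ⟨ℝ, inferInstance, volume.restrict (Ioo 0 1), ?_, gq ν₁, gq ν₂,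
    gq_measurable ν₁, gq_measurable ν₂, gq_map ν₁, gq_map ν₂, ?_⟩
  · constructor
    rw [Measure.restrict_apply_univ, Real.volume_Ioo]
    norm_num
  · have hsub : Ioo (0:ℝ) 1 ⊆ {u | gq ν₁ u ≤ gq ν₂ u ∧ gq ν₂ u ≤ gq ν₁ u + c} := by
      intro u hu
      have h1 : gq ν₁ u = quantS ν₁ u := if_pos hu
      have h2 : gq ν₂ u = quantS ν₂ u := if_pos hu
      constructor
      · rw [h1, h2]
        apply csInf_le_csInf (bdd_quant ν₁ hu.1) (nonempty_quant ν₂ hu.2)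
        intro x hx
        exact hx.trans (hcdf21 x)
      · rw [h1, h2]
        have : ∀ x ∈ {x | u ≤ cdf ν₁ x}, quantS ν₂ u - c ≤ x := by
          intro x hx
          have hx2 : u ≤ cdf ν₂ (x + c) := by
            have := hcdf12 (x + c)
            simp only [add_sub_cancel_right] at this
            exact le_trans hx this
          have h3 : quantS ν₂ u ≤ x + c := csInf_le (bdd_quant ν₂ hu.1) hx2
          linarith
        have h4 : quantS ν₂ u - c ≤ quantS ν₁ u := le_csInf (nonempty_quant ν₁ hu.2) this
        linarith
    apply le_antisymm
    · calc volume.restrict (Ioo (0:ℝ) 1) {u | gq ν₁ u ≤ gq ν₂ u ∧ gq ν₂ u ≤ gq ν₁ u + c}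
          ≤ volume.restrict (Ioo (0:ℝ) 1) univ := measure_mono (subset_univ _)
        _ = 1 := by rw [Measure.restrict_apply_univ, Real.volume_Ioo]; norm_num
    · calc (1:ENNReal) = volume.restrict (Ioo (0:ℝ) 1) (Ioo 0 1) := by
            rw [Measure.restrict_apply measurableSet_Ioo, inter_self, Real.volume_Ioo]
            norm_num
        _ ≤ _ := measure_mono hsub
end

section
/- Let ρ be the Dickman function, defined as the unique continuous function on [0,∞) with ρ(u) = 1 for 0 ≤ u ≤ 1 and u ρ'(u) = −ρ(u−1) for u > 1 (equivalently u ρ(u) = ∫_{u−1}^{u} ρ(v) dv for u ≥ 1). Then 0 < ρ(u) ≤ 1/Γ(u+1) for all u ≥ 0. -/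
open Real

theorem stmt_19 (ρ : ℝ → ℝ)
    (hcont : ContinuousOn ρ (Set.Ici 0))
    (hinit : ∀ u : ℝ, 0 ≤ u → u ≤ 1 → ρ u = 1)
    (heq : ∀ u : ℝ, 1 ≤ u → u * ρ u = ∫ v in (u - 1)..u, ρ v) :
    ∀ u : ℝ, 0 ≤ u → 0 < ρ u ∧ ρ u ≤ 1 / Real.Gamma (u + 1) := by
  -- integrability on subintervals of [0,∞)
  have hInt : ∀ a b : ℝ, 0 ≤ a → a ≤ b → IntervalIntegrable ρ MeasureTheory.volume a b := by
    intro a b ha hab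
    refine (hcont.mono ?_).intervalIntegrable
    rw [Set.uIcc_of_le hab]
    exact fun x hx => le_trans ha hx.1
  -- positivity
  have hpos : ∀ u : ℝ, 0 ≤ u → 0 < ρ u := by
    by_contra h
    push_neg at h
    obtain ⟨w, hw0, hw⟩ := h
    set S : Set ℝ := Set.Ici 0 ∩ ρ ⁻¹' Set.Iic 0 with hSdef
    have hSc : IsClosed S := hcont.preimage_isClosed_of_isClosed isClosed_Ici isClosed_Iic
    have hSne : S.Nonempty := ⟨w, hw0, hw⟩
    have hSbdd : BddBelow S := ⟨0, fun x hx => hx.1⟩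
    set c := sInf S with hcdef
    have hc : c ∈ S := hSc.csInf_mem hSne hSbdd
    have hc0 : (0:ℝ) ≤ c := hc.1
    have hcρ : ρ c ≤ 0 := hc.2
    have hc1 : 1 < c := by
      by_contra hle
      push_neg at hle
      have := hinit c hc0 hle
      rw [this] at hcρ; linarith
    have hlt : ∀ v : ℝ, 0 ≤ v → v < c → 0 < ρ v := by
      intro v hv0 hvc
      by_contra hle
      push_neg at hle
      exact absurd (csInf_le hSbdd ⟨hv0, hle⟩) (not_le.mpr hvc)
    have hca : ContinuousAt ρ c := hcont.continuousAt (Ici_mem_nhds (by linarith))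
    have hρc0 : (0:ℝ) ≤ ρ c := by
      have ht : Filter.Tendsto ρ (nhdsWithin c (Set.Iio c)) (nhds (ρ c)) :=
        hca.tendsto.mono_left nhdsWithin_le_nhds
      refine ge_of_tendsto ht ?_
      filter_upwards [Ioo_mem_nhdsLT_of_mem (show c ∈ Set.Ioc (c-1) c from ⟨by linarith, le_rfl⟩)] with v hv
      exact (hlt v (by linarith [hv.1]) hv.2).le
    have hρc : ρ c = 0 := le_antisymm hcρ hρc0
    have heqc := heq c hc1.le
    have hint1 : IntervalIntegrable ρ MeasureTheory.volume (c-1) (c-1/2) :=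
      hInt _ _ (by linarith) (by linarith)
    have hint2 : IntervalIntegrable ρ MeasureTheory.volume (c-1/2) c :=
      hInt _ _ (by linarith) (by linarith)
    have hpos1 : 0 < ∫ v in (c-1)..(c-1/2), ρ v := by
      refine intervalIntegral.intervalIntegral_pos_of_pos_on hint1 ?_ (by linarith)
      intro x hx
      exact hlt x (by linarith [hx.1]) (by linarith [hx.2])
    have hpos2 : 0 ≤ ∫ v in (c-1/2)..c, ρ v := by
      refine intervalIntegral.integral_nonneg (by linarith) ?_
      intro x hx
      rcases eq_or_lt_of_le hx.2 with hxc | hxc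
      · rw [hxc, hρc]
      · exact (hlt x (by linarith [hx.1]) hxc).le
    have hsplit : (∫ v in (c-1)..(c-1/2), ρ v) + ∫ v in (c-1/2)..c, ρ v
        = ∫ v in (c-1)..c, ρ v :=
      intervalIntegral.integral_add_adjacent_intervals hint1 hint2
    rw [hρc, mul_zero] at heqc
    linarith [heqc, hsplit]
  -- antiderivative and its derivative
  set G : ℝ → ℝ := fun x => ∫ t in (0:ℝ)..x, ρ t with hGdef
  have hG : ∀ x : ℝ, 0 < x → HasDerivAt G (ρ x) x := by
    intro x hx
    refine intervalIntegral.integral_hasDerivAt_right (hInt 0 x le_rfl hx.le) ?_ ?_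
    · exact ⟨Set.Ioi 0, Ioi_mem_nhds hx,
        ((hcont.mono (Set.Ioi_subset_Ici le_rfl)).aestronglyMeasurable measurableSet_Ioi)⟩
    · exact hcont.continuousAt (Ici_mem_nhds hx)
  have hGint : ∀ u : ℝ, 1 ≤ u → G u - G (u-1) = ∫ v in (u-1)..u, ρ v := by
    intro u hu
    have := intervalIntegral.integral_add_adjacent_intervals
      (hInt 0 (u-1) le_rfl (by linarith)) (hInt (u-1) u (by linarith) (by linarith))
    simp only [hGdef]
    linarith [this]
  -- ρ agrees with a differentiable function on (1,∞)
  have hρφ : ∀ u : ℝ, 1 ≤ u → ρ u = (G u - G (u-1)) / u := by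
    intro u hu
    have h := heq u hu
    rw [hGint u hu]
    field_simp
    linarith [h]
  have hderiv : ∀ x : ℝ, 1 < x → HasDerivAt ρ (-(ρ (x-1)) / x) x := by
    intro x hx
    have hx0 : (0:ℝ) < x := by linarith
    have h1 : HasDerivAt (fun u : ℝ => G (u-1)) (ρ (x-1) * 1) x :=
      HasDerivAt.comp (h := fun u : ℝ => id u - 1) x (hG (x-1) (by linarith)) ((hasDerivAt_id x).sub_const 1)
    have h2 : HasDerivAt (fun u : ℝ => G u - G (u-1)) (ρ x - ρ (x-1) * 1) x :=
      (hG x hx0).sub h1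
    have h3 : HasDerivAt (fun u : ℝ => (G u - G (u-1)) / u)
        (((ρ x - ρ (x-1) * 1) * x - (G x - G (x-1)) * 1) / (x^2)) x :=
      h2.div (hasDerivAt_id x) (ne_of_gt hx0)
    have hev : (fun u : ℝ => (G u - G (u-1)) / u) =ᶠ[nhds x] ρ := by
      filter_upwards [Ioi_mem_nhds hx] with u hu
      exact (hρφ u (le_of_lt hu)).symm
    have h4 : HasDerivAt ρ (((ρ x - ρ (x-1) * 1) * x - (G x - G (x-1)) * 1) / (x^2)) x :=
      h3.congr_of_eventuallyEq hev.symm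
    have hval : G x - G (x-1) = x * ρ x := by rw [hGint x hx.le]; exact (heq x hx.le).symm
    have : ((ρ x - ρ (x-1) * 1) * x - (G x - G (x-1)) * 1) / (x^2) = -(ρ (x-1)) / x := by
      rw [hval]; field_simp; ring
    rwa [this] at h4
  -- monotonicity
  have hanti : AntitoneOn ρ (Set.Ici 1) := by
    have hint : interior (Set.Ici (1:ℝ)) = Set.Ioi 1 := interior_Ici
    refine antitoneOn_of_deriv_nonpos (convex_Ici 1)
      (hcont.mono (Set.Ici_subset_Ici.mpr zero_le_one)) ?_ ?_
    · rw [hint]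
      intro x hx
      exact ((hderiv x hx).differentiableAt).differentiableWithinAt
    · rw [hint]
      intro x hx
      rw [(hderiv x hx).deriv]
      have h1 : 0 < ρ (x-1) := hpos (x-1) (by simp at hx; linarith)
      have h2 : (0:ℝ) < x := by simp at hx; linarith
      exact div_nonpos_of_nonpos_of_nonneg (by linarith) h2.le
  have hmono : ∀ a b : ℝ, 0 ≤ a → a ≤ b → ρ b ≤ ρ a := by
    intro a b ha hab
    rcases le_or_gt b 1 with hb1 | hb1
    · rw [hinit a ha (by linarith), hinit b (by linarith) hb1]
    · rcases le_or_gt 1 a with ha1 | ha1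
      · exact hanti ha1 (by linarith : (1:ℝ) ≤ b) hab
      · have := hanti (le_refl (1:ℝ)) (le_of_lt hb1) (le_of_lt hb1)
        rw [hinit a ha ha1.le, hinit 1 zero_le_one le_rfl] at *
        exact this
  -- base: Gamma (u+1) ≤ 1 on [0,1]
  have hbase : ∀ u : ℝ, 0 ≤ u → u ≤ 1 → Real.Gamma (u+1) ≤ 1 := by
    intro u hu hu1
    have hc := Real.convexOn_Gamma.2 (Set.mem_Ioi.mpr one_pos)
      (Set.mem_Ioi.mpr (by norm_num : (0:ℝ) < 2)) (by linarith : (0:ℝ) ≤ 1-u) hu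
      (by ring : (1-u) + u = 1)
    simp only [smul_eq_mul, Real.Gamma_one, Real.Gamma_two] at hc
    have : (1-u) * 1 + u * 2 = u + 1 := by ring
    rw [this] at hc
    linarith
  -- main bound by induction
  have hbound : ∀ n : ℕ, ∀ u : ℝ, 0 ≤ u → u ≤ n + 1 → ρ u ≤ 1 / Real.Gamma (u+1) := by
    intro n
    induction n with
    | zero =>
      intro u hu hu1
      have hu1' : u ≤ 1 := by exact_mod_cast (by simpa using hu1)
      rw [hinit u hu hu1']
      have hΓpos : 0 < Real.Gamma (u+1) := Real.Gamma_pos_of_pos (by linarith)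
      rw [le_div_iff₀ hΓpos, one_mul]
      exact hbase u hu hu1'
    | succ n ih =>
      intro u hu hun
      by_cases h : u ≤ n + 1
      · exact ih u hu h
      · push_neg at h
        have hn1 : (1:ℝ) ≤ (n:ℝ) + 1 := by have : (0:ℝ) ≤ (n:ℝ) := Nat.cast_nonneg n; linarith
        have hu1 : 1 ≤ u := le_trans hn1 h.le
        have hΓu : 0 < Real.Gamma u := Real.Gamma_pos_of_pos (by linarith)
        have hkey : u * ρ u ≤ ρ (u-1) := by
          rw [heq u hu1]
          calc (∫ v in (u-1)..u, ρ v) ≤ ∫ _ in (u-1)..u, ρ (u-1) := by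
                refine intervalIntegral.integral_mono_on (by linarith)
                  (hInt _ _ (by linarith) (by linarith)) intervalIntegrable_const ?_
                intro x hx
                exact hmono (u-1) x (by linarith) hx.1
            _ = ρ (u-1) := by simp
        have h2 : ρ (u-1) ≤ 1 / Real.Gamma u := by
          have := ih (u-1) (by linarith) (by push_cast at hun ⊢; linarith)
          rwa [sub_add_cancel] at this
        have hΓu1 : Real.Gamma (u+1) = u * Real.Gamma u :=
          Real.Gamma_add_one (ne_of_gt (by linarith : (0:ℝ) < u))
        rw [hΓu1, le_div_iff₀ (by positivity)]
        calc ρ u * (u * Real.Gamma u) = (u * ρ u) * Real.Gamma u := by ring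
          _ ≤ (1 / Real.Gamma u) * Real.Gamma u :=
              mul_le_mul_of_nonneg_right (le_trans hkey h2) hΓu.le
          _ = 1 := by field_simp
  intro u hu
  refine ⟨hpos u hu, ?_⟩
  exact hbound ⌈u⌉₊ u hu (le_trans (Nat.le_ceil u) (by linarith [Nat.le_ceil u]))
end
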